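/- arXiv:1406.7365 — 15 statements merged into one kernel-verified Lean document; each statement's English description precedes it below -/
import Mathlib

section
/- Let G be a finite group minimally generated by d elements. Then |Aut_c(G)| ≤ |γ₂(G)|^d, where γ₂(G) is the commutator subgroup of G. -/
/-- The group of class-preserving automorphisms of `G`. -/
def autC (G : Type*) [Group G] : Subgroup (MulAut G) where
  carrier := {φ | ∀ x : G, IsConj x (φ x)}
  one_mem' := fun x => IsConj.refl x
  mul_mem' := fun {a b} ha hb x => (hb x).trans (ha (b x))
  inv_mem' := fun {a} ha x => by
    have h := (ha ((a⁻¹ : MulAut _) x)).symm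
    simpa using h

/-- If a finite group `G` is minimally generated by `d` elements, then
`|Aut_c(G)| ≤ |γ₂(G)|^d`. -/
theorem stmt_1 {G : Type*} [Group G] [Finite G] (d : ℕ) (x : Fin d → G)
    (hgen : Subgroup.closure (Set.range x) = ⊤)
    (hmin : ∀ (e : ℕ) (y : Fin e → G), Subgroup.closure (Set.range y) = ⊤ → d ≤ e) :
    Nat.card (autC G) ≤ Nat.card (commutator G) ^ d := by
  have hmem : ∀ (φ : autC G) (i : Fin d), (x i)⁻¹ * (φ : MulAut G) (x i) ∈ commutator G := by
    intro φ i
    obtain ⟨c, hc⟩ := φ.2 (x i)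
    have hc' : (φ : MulAut G) (x i) = (c : G) * x i * (c : G)⁻¹ := by
      rw [hc.eq]; group
    open scoped commutatorElement in
    have : (x i)⁻¹ * (φ : MulAut G) (x i) = ⁅(x i)⁻¹, (c : G)⁆ := by
      rw [hc', commutatorElement_def]; group
    open scoped commutatorElement in
    rw [this, commutator_def]
    exact Subgroup.commutator_mem_commutator (Subgroup.mem_top _) (Subgroup.mem_top _)
  set f : autC G → (Fin d → commutator G) :=
    fun φ i => ⟨(x i)⁻¹ * (φ : MulAut G) (x i), hmem φ i⟩ with hf
  have hinj : Function.Injective f := by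
    intro φ ψ h
    have hx : ∀ i, (φ : MulAut G) (x i) = (ψ : MulAut G) (x i) := by
      intro i
      have := congrFun h i
      simpa [hf, Subtype.ext_iff, mul_right_cancel_iff] using this
    have : ((φ : MulAut G) : G →* G) = ((ψ : MulAut G) : G →* G) := by
      apply MonoidHom.eq_of_eqOn_dense hgen
      rintro g ⟨i, rfl⟩
      exact hx i
    ext g
    exact DFunLike.congr_fun this g
  calc Nat.card (autC G) ≤ Nat.card (Fin d → commutator G) :=
        Nat.card_le_card_of_injective f hinj
    _ = Nat.card (commutator G) ^ d := by
        simp [Nat.card_pi]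
end

section
/- Let G be a finite p-group. Then |Aut_c(G)| = ∏_{i=1}^{d} |x_i^G| holds for every minimal generating set {x₁, …, x_d} of G if and only if |Aut_c(G)| = |γ₂(G)|^{d(G)}. -/
open scoped commutatorElement

namespace StmtTwoAux

open Subgroup Function Set

variable {G : Type*} [Group G]

lemma mem_autC_iff {φ : MulAut G} : φ ∈ autC G ↔ ∀ x : G, IsConj x (φ x) := Iff.rfl

/-- The conjugacy class of `a` as a set. -/
def cls (a : G) : Set G := {y : G | IsConj a y}

lemma mem_cls {a z : G} : z ∈ cls a ↔ IsConj a z := Iff.rfl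

lemma self_mem_cls (a : G) : a ∈ cls a := IsConj.refl a

lemma cls_card (a : G) : Nat.card {y : G // IsConj a y} = (cls a).ncard :=
  Nat.card_coe_set_eq (cls a)

lemma cls_conj {a z : G} (h : z ∈ cls a) (g : G) : g * z * g⁻¹ ∈ cls a :=
  h.trans (isConj_iff.mpr ⟨g, rfl⟩)

lemma cls_conj_iff {a z : G} (g : G) : g * z * g⁻¹ ∈ cls a ↔ z ∈ cls a := by
  constructor
  · intro h
    have := cls_conj h g⁻¹
    simpa [mul_assoc] using this
  · intro h
    exact cls_conj h g

/-- The subgroup of elements whose left translation stabilizes the set `s`. -/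
def lstab (s : Set G) : Subgroup G where
  carrier := {g : G | ∀ z : G, g * z ∈ s ↔ z ∈ s}
  one_mem' := by simp
  mul_mem' := by
    intro g h hg hh z
    rw [mul_assoc, hg (h * z), hh z]
  inv_mem' := by
    intro g hg z
    rw [← hg (g⁻¹ * z), mul_inv_cancel_left]

lemma mem_lstab {s : Set G} {g : G} : g ∈ lstab s ↔ ∀ z : G, g * z ∈ s ↔ z ∈ s := Iff.rfl

lemma lstab_cls_normal (a : G) : (lstab (cls a)).Normal := by
  constructor
  intro n hn g z
  have h1 : g * (n * (g⁻¹ * z * g)) * g⁻¹ = g * n * g⁻¹ * z := by group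
  rw [show g * n * g⁻¹ * z = g * (n * (g⁻¹ * z * g)) * g⁻¹ from h1.symm,
    cls_conj_iff g, hn (g⁻¹ * z * g),
    show g⁻¹ * z * g = g⁻¹ * z * (g⁻¹)⁻¹ by group, cls_conj_iff g⁻¹]

variable [Finite G]

instance : Finite (MulAut G) :=
  Finite.of_injective (fun φ => (φ : G → G)) DFunLike.coe_injective

lemma mulAut_ext {n : ℕ} {x : Fin n → G} (hx : Subgroup.closure (Set.range x) = ⊤)
    {φ ψ : MulAut G} (h : ∀ i, φ (x i) = ψ (x i)) : φ = ψ := by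
  have h2 : (φ : G →* G) = (ψ : G →* G) :=
    MonoidHom.eq_of_eqOn_dense hx (by rintro g ⟨i, rfl⟩; exact h i)
  exact MulEquiv.toMonoidHom_injective h2

section WithH

variable {n : ℕ}

/-- Abbreviation for the main hypothesis. -/
def Hyp (G : Type*) [Group G] (n : ℕ) : Prop :=
  ∀ x : Fin n → G, Subgroup.closure (Set.range x) = ⊤ →
    Nat.card (autC G) = ∏ i, Nat.card {y : G // IsConj (x i) y}

lemma exists_phi (H : Hyp G n) {x : Fin n → G} (hx : Subgroup.closure (Set.range x) = ⊤)
    {z : Fin n → G} (hz : ∀ i, IsConj (x i) (z i)) :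
    ∃ φ : autC G, ∀ i, (φ : MulAut G) (x i) = z i := by
  classical
  set f : autC G → ∀ i, {y : G // IsConj (x i) y} :=
    fun φ i => ⟨(φ : MulAut G) (x i), φ.2 (x i)⟩ with hf
  have hinj : Function.Injective f := by
    intro φ ψ h
    exact Subtype.ext (mulAut_ext hx fun i => congrArg Subtype.val (congrFun h i))
  have hcard : Nat.card (autC G) = Nat.card (∀ i, {y : G // IsConj (x i) y}) := by
    rw [Nat.card_pi]; exact H x hx
  obtain ⟨φ, hφ⟩ :=
    ((Nat.bijective_iff_injective_and_card f).2 ⟨hinj, hcard⟩).2 (fun i => ⟨z i, hz i⟩)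
  exact ⟨φ, fun i => congrArg Subtype.val (congrFun hφ i)⟩

lemma closure_update_aux {x : Fin n → G} (hx : Subgroup.closure (Set.range x) = ⊤)
    (a : Fin n) (g : G)
    (h : x a ∈ Subgroup.closure (Set.range (Function.update x a g))) :
    Subgroup.closure (Set.range (Function.update x a g)) = ⊤ := by
  classical
  rw [eq_top_iff, ← hx, Subgroup.closure_le]
  rintro _ ⟨i, rfl⟩
  by_cases hia : i = a
  · subst hia; exact h
  · exact subset_closure ⟨i, Function.update_of_ne hia _ _⟩

variable {x : Fin n → G} {a b : Fin n}

section Pair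

-- tuple with `x a * x b` at position `a`
lemma closure_u (hx : Subgroup.closure (Set.range x) = ⊤) (hab : a ≠ b) : Subgroup.closure (Set.range (Function.update x a (x a * x b))) = ⊤ := by
  classical
  apply closure_update_aux hx
  have h1 : x a * x b ∈ Subgroup.closure (Set.range (Function.update x a (x a * x b))) :=
    subset_closure ⟨a, Function.update_self _ _ _⟩
  have h2 : x b ∈ Subgroup.closure (Set.range (Function.update x a (x a * x b))) :=
    subset_closure ⟨b, Function.update_of_ne (Ne.symm hab) _ _⟩
  simpa using mul_mem h1 (inv_mem h2)

-- tuple with `x a * x b` at position `b`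
lemma closure_v (hx : Subgroup.closure (Set.range x) = ⊤) (hab : a ≠ b) : Subgroup.closure (Set.range (Function.update x b (x a * x b))) = ⊤ := by
  classical
  apply closure_update_aux hx
  have h1 : x a ∈ Subgroup.closure (Set.range (Function.update x b (x a * x b))) :=
    subset_closure ⟨a, Function.update_of_ne hab _ _⟩
  have h2 : x a * x b ∈ Subgroup.closure (Set.range (Function.update x b (x a * x b))) :=
    subset_closure ⟨b, Function.update_self _ _ _⟩
  simpa using mul_mem (inv_mem h1) h2

/-- Fact 1: conjugates of `x a * x b`, right-translated by `(x b)⁻¹`, are conjugates of `x a`. -/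
lemma fact1 (hx : Subgroup.closure (Set.range x) = ⊤) (hab : a ≠ b) (H : Hyp G n) : ∀ z ∈ cls (x a * x b), z * (x b)⁻¹ ∈ cls (x a) := by
  classical
  intro z hz
  set u := Function.update x a (x a * x b) with hu
  have hgen := closure_u hx hab
  have hzconj : ∀ i, IsConj (u i) (Function.update u a z i) := by
    intro i
    by_cases hia : i = a
    · subst hia
      rw [Function.update_self, hu, Function.update_self]
      exact hz
    · rw [Function.update_of_ne hia]
  obtain ⟨φ, hφ⟩ := exists_phi H hgen hzconj
  have hb' : (φ : MulAut G) (x b) = x b := by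
    have h := hφ b
    simpa [hu, Function.update_apply, Ne.symm hab] using h
  have ha' : (φ : MulAut G) (x a * x b) = z := by
    have h := hφ a
    simpa [hu, Function.update_apply] using h
  have hval : (φ : MulAut G) (x a) = z * (x b)⁻¹ := by
    have h3 : (φ : MulAut G) (x a) * (φ : MulAut G) (x b) = z := by
      rw [← map_mul]; exact ha'
    rw [hb'] at h3
    rw [← h3]; group
  have := φ.2 (x a)
  rw [hval] at this
  exact this

/-- Fact 2: if `u' ∈ cls (x a)` and `z ∈ cls (x a * x b)` then `u'⁻¹ * z ∈ cls (x b)`. -/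
lemma fact2 (hx : Subgroup.closure (Set.range x) = ⊤) (hab : a ≠ b) (H : Hyp G n) : ∀ u' ∈ cls (x a), ∀ z ∈ cls (x a * x b), u'⁻¹ * z ∈ cls (x b) := by
  classical
  intro u' hu' z hz
  set v := Function.update x b (x a * x b) with hv
  have hgen := closure_v hx hab
  set w := Function.update (Function.update v a u') b z with hw
  have hzconj : ∀ i, IsConj (v i) (w i) := by
    intro i
    by_cases hib : i = b
    · subst hib
      rw [hw, Function.update_self, hv, Function.update_self]
      exact hz
    · rw [hw, Function.update_of_ne hib]
      by_cases hia : i = a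
      · subst hia
        rw [Function.update_self, hv, Function.update_of_ne hab]
        exact hu'
      · rw [Function.update_of_ne hia]
  obtain ⟨φ, hφ⟩ := exists_phi H hgen hzconj
  have ha' : (φ : MulAut G) (x a) = u' := by
    have h := hφ a
    simpa [hw, hv, Function.update_apply, hab] using h
  have hb' : (φ : MulAut G) (x a * x b) = z := by
    have h := hφ b
    simpa [hw, hv, Function.update_apply, Ne.symm hab] using h
  have hval : (φ : MulAut G) (x b) = u'⁻¹ * z := by
    have h3 : (φ : MulAut G) (x a) * (φ : MulAut G) (x b) = z := by
      rw [← map_mul]; exact hb'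
    rw [ha'] at h3
    rw [← h3]; group
  have := φ.2 (x b)
  rw [hval] at this
  exact this

lemma card_le_pair (hx : Subgroup.closure (Set.range x) = ⊤) (hab : a ≠ b) (H : Hyp G n) : (cls (x a)).ncard ≤ (cls (x b)).ncard := by
  apply Set.ncard_le_ncard_of_injOn (fun u' => u'⁻¹ * (x a * x b))
  · intro u' hu'
    exact fact2 hx hab H u' hu' _ (self_mem_cls _)
  · intro u1 _ u2 _ h
    simpa using h

lemma prod_cls_update (t : G) :
    ∏ i, Nat.card {y : G // IsConj (Function.update x a t i) y} =
      Nat.card {y : G // IsConj t y} *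
        ∏ i ∈ Finset.univ.erase a, Nat.card {y : G // IsConj (x i) y} := by
  classical
  have h1 : (fun i => Nat.card {y : G // IsConj (Function.update x a t i) y}) =
      Function.update (fun i => Nat.card {y : G // IsConj (x i) y}) a
        (Nat.card {y : G // IsConj t y}) := by
    funext i
    by_cases hia : i = a
    · subst hia; rw [Function.update_self, Function.update_self]
    · rw [Function.update_of_ne hia, Function.update_of_ne hia]
  rw [h1, Finset.prod_update_of_mem (Finset.mem_univ a), Finset.erase_eq]

/-- The conjugacy class of `x a * x b` has the same size as that of `x a`. -/
lemma card_t (hx : Subgroup.closure (Set.range x) = ⊤) (hab : a ≠ b) (H : Hyp G n) : (cls (x a * x b)).ncard = (cls (x a)).ncard := by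
  classical
  have h1 := H x hx
  have h2 := H _ (closure_u hx hab)
  rw [prod_cls_update] at h2
  have h3 : ∏ i, Nat.card {y : G // IsConj (x i) y} =
      Nat.card {y : G // IsConj (x a) y} *
        ∏ i ∈ Finset.univ.erase a, Nat.card {y : G // IsConj (x i) y} := by
    rw [← Finset.prod_erase_mul Finset.univ _ (Finset.mem_univ a)]
    ring
  rw [h3] at h1
  have hpos : 0 < ∏ i ∈ Finset.univ.erase a, Nat.card {y : G // IsConj (x i) y} := by
    apply Finset.prod_pos
    intro i _
    have : Nonempty {y : G // IsConj (x i) y} := ⟨⟨x i, IsConj.refl _⟩⟩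
    exact Nat.card_pos
  have h4 : Nat.card {y : G // IsConj (x a * x b) y} = Nat.card {y : G // IsConj (x a) y} :=
    Nat.eq_of_mul_eq_mul_right hpos (by rw [← h2, ← h1])
  rw [← cls_card, ← cls_card]
  exact h4

lemma card_ab (hx : Subgroup.closure (Set.range x) = ⊤) (hab : a ≠ b) (H : Hyp G n) : (cls (x a)).ncard = (cls (x b)).ncard :=
  le_antisymm (card_le_pair hx hab H) (card_le_pair hx hab.symm H)

/-- B2: for `u' ∈ cls (x a)`, membership characterization of `cls (x b)`. -/
lemma b2 (hx : Subgroup.closure (Set.range x) = ⊤) (hab : a ≠ b) (H : Hyp G n) : ∀ u' ∈ cls (x a), ∀ z : G, z ∈ cls (x b) ↔ u' * z ∈ cls (x a * x b) := by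
  intro u' hu'
  have hsub : (fun z => u'⁻¹ * z) '' cls (x a * x b) ⊆ cls (x b) := by
    rintro _ ⟨z, hz, rfl⟩
    exact fact2 hx hab H u' hu' z hz
  have hcard : (cls (x b)).ncard ≤ ((fun z => u'⁻¹ * z) '' cls (x a * x b)).ncard := by
    rw [Set.ncard_image_of_injective _ (mul_right_injective u'⁻¹),
      card_t hx hab H, card_ab hx hab H]
  have heq := Set.eq_of_subset_of_ncard_le hsub hcard (Set.toFinite _)
  intro z
  constructor
  · intro hz
    rw [← heq] at hz
    obtain ⟨w, hw, hwz⟩ := hz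
    have hwz' : u'⁻¹ * w = z := hwz
    have : w = u' * z := by rw [← hwz']; group
    rwa [this] at hw
  · intro hz
    rw [← heq]
    exact ⟨u' * z, hz, by show u'⁻¹ * (u' * z) = z; group⟩

/-- B1: membership characterization of `cls (x a)` via right translation. -/
lemma b1 (hx : Subgroup.closure (Set.range x) = ⊤) (hab : a ≠ b) (H : Hyp G n) : ∀ z : G, z ∈ cls (x a) ↔ z * x b ∈ cls (x a * x b) := by
  have hsub : (fun z => z * (x b)⁻¹) '' cls (x a * x b) ⊆ cls (x a) := by
    rintro _ ⟨z, hz, rfl⟩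
    exact fact1 hx hab H z hz
  have hcard : (cls (x a)).ncard ≤ ((fun z => z * (x b)⁻¹) '' cls (x a * x b)).ncard := by
    rw [Set.ncard_image_of_injective _ (mul_left_injective (x b)⁻¹), card_t hx hab H]
  have heq := Set.eq_of_subset_of_ncard_le hsub hcard (Set.toFinite _)
  intro z
  constructor
  · intro hz
    rw [← heq] at hz
    obtain ⟨w, hw, hwz⟩ := hz
    have hwz' : w * (x b)⁻¹ = z := hwz
    have : w = z * x b := by rw [← hwz']; group
    rwa [this] at hw
  · intro hz
    rw [← heq]
    exact ⟨z * x b, hz, by show z * x b * (x b)⁻¹ = z; group⟩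

/-- The class of `x b` is a coset of its left stabilizer. -/
lemma cls_eq_lstab_mul (hx : Subgroup.closure (Set.range x) = ⊤) (hab : a ≠ b) (H : Hyp G n) : (fun g => g * x b) '' (lstab (cls (x b)) : Set G) = cls (x b) := by
  classical
  -- the set N' of elements u'⁻¹ * x a, u' ∈ cls (x a), is contained in the stabilizer
  have hN' : (fun u' => u'⁻¹ * x a) '' cls (x a) ⊆ (lstab (cls (x b)) : Set G) := by
    rintro _ ⟨u', hu', rfl⟩
    rw [SetLike.mem_coe, mem_lstab]
    intro z
    show u'⁻¹ * x a * z ∈ cls (x b) ↔ z ∈ cls (x b)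
    rw [mul_assoc, b2 hx hab H u' hu' (u'⁻¹ * (x a * z)),
      show u' * (u'⁻¹ * (x a * z)) = x a * z by group,
      ← b2 hx hab H (x a) (self_mem_cls _) z]
  have hcard1 : ((fun u' => u'⁻¹ * x a) '' cls (x a)).ncard = (cls (x a)).ncard := by
    apply Set.ncard_image_of_injective
    intro u1 u2 h
    simpa using h
  -- the stabilizer injects into the class
  have hsub2 : (fun g => g * x b) '' (lstab (cls (x b)) : Set G) ⊆ cls (x b) := by
    rintro _ ⟨g, hg, rfl⟩
    rw [SetLike.mem_coe, mem_lstab] at hg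
    exact (hg (x b)).mpr (self_mem_cls _)
  have hcard2 : ((lstab (cls (x b)) : Set G)).ncard ≤ (cls (x b)).ncard := by
    rw [← Set.ncard_image_of_injective (lstab (cls (x b)) : Set G) (mul_left_injective (x b))]
    exact Set.ncard_le_ncard hsub2 (Set.toFinite _)
  have hcard3 : (cls (x b)).ncard ≤ ((lstab (cls (x b)) : Set G)).ncard := by
    calc (cls (x b)).ncard = (cls (x a)).ncard := (card_ab hx hab H).symm
    _ = ((fun u' => u'⁻¹ * x a) '' cls (x a)).ncard := hcard1.symm
    _ ≤ _ := Set.ncard_le_ncard hN' (Set.toFinite _)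
  apply Set.eq_of_subset_of_ncard_le hsub2 _ (Set.toFinite _)
  rw [Set.ncard_image_of_injective _ (mul_left_injective (x b))]
  exact hcard3

/-- The stabilizer of `cls (x b)` is contained in that of `cls (x a)`. -/
lemma lstab_le (hx : Subgroup.closure (Set.range x) = ⊤) (hab : a ≠ b) (H : Hyp G n) : lstab (cls (x b)) ≤ lstab (cls (x a)) := by
  intro g hg
  rw [mem_lstab]
  intro z
  have hchar : ∀ w : G, w ∈ cls (x a) ↔ (x a)⁻¹ * w * x b ∈ cls (x b) := by
    intro w
    rw [b1 hx hab H w, b2 hx hab H (x a) (self_mem_cls _) ((x a)⁻¹ * w * x b)]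
    constructor
    · intro h; rwa [show x a * ((x a)⁻¹ * w * x b) = w * x b by group]
    · intro h; rwa [show x a * ((x a)⁻¹ * w * x b) = w * x b by group] at h
  have hnormal := lstab_cls_normal (x b)
  have hg' : (x a)⁻¹ * g * ((x a)⁻¹)⁻¹ ∈ lstab (cls (x b)) := hnormal.conj_mem g hg (x a)⁻¹
  rw [mem_lstab] at hg'
  rw [hchar (g * z), hchar z]
  rw [show (x a)⁻¹ * (g * z) * x b = ((x a)⁻¹ * g * ((x a)⁻¹)⁻¹) * ((x a)⁻¹ * z * x b) by group]
  exact hg' ((x a)⁻¹ * z * x b)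

end Pair

/-- The stabilizer is contained in the commutator subgroup. -/
lemma lstab_le_commutator {b : G} {S : Subgroup G}
    (h : (fun g => g * b) '' (S : Set G) = cls b) : (S : Set G) ⊆ (commutator G : Set G) := by
  intro g hg
  have : g * b ∈ cls b := by rw [← h]; exact ⟨g, hg, rfl⟩
  rw [mem_cls, isConj_iff] at this
  obtain ⟨c, hc⟩ := this
  have hgval : g = ⁅c, b⁆ := by
    rw [commutatorElement_def, hc]; group
  rw [SetLike.mem_coe, hgval, _root_.commutator_def]
  exact Subgroup.commutator_mem_commutator (Subgroup.mem_top c) (Subgroup.mem_top b)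

/-- Forward direction, in the case of at least two generators. -/
lemma forward {x : Fin n → G} (hn : 2 ≤ n) (H : Hyp G n)
    (hx : Subgroup.closure (Set.range x) = ⊤) :
    Nat.card (autC G) = Nat.card (commutator G) ^ n := by
  classical
  have hpartner : ∀ i : Fin n, ∃ j : Fin n, j ≠ i := by
    intro i
    rcases eq_or_ne i ⟨0, by omega⟩ with h | h
    · exact ⟨⟨1, by omega⟩, by rw [h]; simp [Fin.ext_iff]⟩
    · exact ⟨⟨0, by omega⟩, fun hc => h hc.symm⟩
  set i0 : Fin n := ⟨0, by omega⟩ with hi0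
  set N := lstab (cls (x i0)) with hN
  have hNall : ∀ i, lstab (cls (x i)) = N := by
    intro i
    rcases eq_or_ne i i0 with h | h
    · rw [h]
    · exact le_antisymm (lstab_le hx h.symm H) (lstab_le hx h H)
  have hcls : ∀ i, (fun g => g * x i) '' (N : Set G) = cls (x i) := by
    intro i
    obtain ⟨j, hj⟩ := hpartner i
    rw [← hNall i]
    exact cls_eq_lstab_mul hx hj H
  have hNnormal : N.Normal := lstab_cls_normal (x i0)
  have hNle : (N : Set G) ⊆ (commutator G : Set G) := lstab_le_commutator (hcls i0)
  have hgeN : commutator G ≤ N := by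
    set C : Subgroup G :=
      { carrier := {g : G | ∀ h : G, ⁅g, h⁆ ∈ N}
        one_mem' := by
          intro h
          have h1 : ⁅(1 : G), h⁆ = 1 := by group
          rw [h1]; exact one_mem _
        mul_mem' := by
          intro g1 g2 hg1 hg2 h
          have hid : ⁅g1 * g2, h⁆ = (g1 * ⁅g2, h⁆ * g1⁻¹) * ⁅g1, h⁆ := by
            simp only [commutatorElement_def]; group
          rw [hid]
          exact mul_mem (hNnormal.conj_mem _ (hg2 h) g1) (hg1 h)
        inv_mem' := by
          intro g hg h
          have hid : ⁅g⁻¹, h⁆ = g⁻¹ * ⁅g, h⁆⁻¹ * (g⁻¹)⁻¹ := by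
            simp only [commutatorElement_def]; group
          rw [hid]
          exact hNnormal.conj_mem _ (inv_mem (hg h)) g⁻¹ } with hC
    have hCx : ∀ g ∈ Set.range x, g ∈ C := by
      rintro _ ⟨i, rfl⟩
      intro h
      have h1 : h * x i * h⁻¹ ∈ cls (x i) := cls_conj (self_mem_cls (x i)) h
      rw [← hcls i] at h1
      obtain ⟨g, hg, hgeq⟩ := h1
      have hgeq' : g * x i = h * x i * h⁻¹ := hgeq
      have h2 : ⁅h, x i⁆ ∈ N := by
        have hg2 : g = ⁅h, x i⁆ := by
          rw [commutatorElement_def, ← hgeq']; group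
        rwa [← hg2]
      have h3 : ⁅x i, h⁆ = ⁅h, x i⁆⁻¹ := by rw [commutatorElement_inv]
      rw [h3]
      exact inv_mem h2
    have hCtop : (⊤ : Subgroup G) ≤ C := by
      rw [← hx]
      exact Subgroup.closure_le C |>.mpr hCx
    rw [_root_.commutator_def, Subgroup.commutator_le]
    intro g _ h _
    exact hCtop (Subgroup.mem_top g) h
  have hNcomm : N = commutator G := by
    apply le_antisymm _ hgeN
    intro g hg
    exact hNle hg
  have hcard : ∀ i, Nat.card {y : G // IsConj (x i) y} = Nat.card (commutator G) := by
    intro i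
    rw [cls_card, ← hcls i, Set.ncard_image_of_injective _ (mul_left_injective (x i)),
      ← Nat.card_coe_set_eq, hNcomm]
    simp
  rw [H x hx]
  rw [Finset.prod_congr rfl (fun i _ => hcard i), Finset.prod_const, Finset.card_univ,
    Fintype.card_fin]

end WithH

end StmtTwoAux

open StmtTwoAux Subgroup in
/-- For a finite p-group `G`, equality `|Aut_c(G)| = ∏ |x_i^G|` holds for every minimal
generating set `{x₁, …, x_d}` of `G` iff `|Aut_c(G)| = |γ₂(G)|^{d(G)}`. A minimal
generating set is a generating set of size `d(G) = Group.rank G`. -/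
theorem stmt_2 {p : ℕ} {G : Type*} [Group G] [Finite G] (hp : p.Prime) (hpG : IsPGroup p G) :
    (∀ x : Fin (Group.rank G) → G, Subgroup.closure (Set.range x) = ⊤ →
        Nat.card (autC G) = ∏ i, Nat.card {y : G // IsConj (x i) y}) ↔
      Nat.card (autC G) = Nat.card (commutator G) ^ Group.rank G := by
  classical
  set n := Group.rank G with hn
  -- a minimal generating tuple exists
  obtain ⟨S, hScard, hSgen⟩ := Group.rank_spec G
  have hex : ∃ x : Fin n → G, Subgroup.closure (Set.range x) = ⊤ := by
    refine ⟨fun i => (S.equivFin.symm (Fin.cast (by rw [hScard]) i) : G), ?_⟩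
    have hrange : Set.range (fun i : Fin n =>
        (S.equivFin.symm (Fin.cast (by rw [hScard]) i) : G)) = (S : Set G) := by
      ext y
      constructor
      · rintro ⟨i, rfl⟩
        exact (S.equivFin.symm _).2
      · intro hy
        refine ⟨Fin.cast (by rw [hScard]) (S.equivFin ⟨y, hy⟩), ?_⟩
        simp [Fin.cast]
    rw [hrange, hSgen]
  constructor
  · intro H
    rcases le_or_gt 2 n with h2 | h2
    · obtain ⟨x, hx⟩ := hex
      exact forward h2 H hx
    · -- rank at most 1 : the group is abelian
      have hcomm : ∀ g h : G, Commute g h := by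
        intro g h
        have hg : g ∈ Subgroup.closure (S : Set G) := by rw [hSgen]; exact Subgroup.mem_top g
        have hh : h ∈ Subgroup.closure (S : Set G) := by rw [hSgen]; exact Subgroup.mem_top h
        refine Subgroup.closure_induction₂
          (fun y z hy hz => ?_)
          (fun z _ => Commute.one_left z)
          (fun z _ => Commute.one_right z)
          (fun y z w _ _ _ h1 h2 => h1.mul_left h2)
          (fun y z w _ _ _ h1 h2 => h1.mul_right h2)
          (fun y z _ _ h1 => h1.inv_left)
          (fun y z _ _ h1 => h1.inv_right) hg hh
        · have hcard1 : S.card ≤ 1 := by omega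
          have := Finset.card_le_one.mp hcard1 y hy z hz
          rw [this]
      have hbot : commutator G = ⊥ := by
        rw [eq_bot_iff, _root_.commutator_def, Subgroup.commutator_le]
        intro g _ h _
        rw [Subgroup.mem_bot]
        exact commutatorElement_eq_one_iff_commute.mpr (hcomm g h)
      have hclsone : ∀ a : G, Nat.card {y : G // IsConj a y} = 1 := by
        intro a
        rw [Nat.card_eq_one_iff_exists]
        refine ⟨⟨a, IsConj.refl a⟩, fun y => Subtype.ext ?_⟩
        obtain ⟨c, hc⟩ := isConj_iff.mp y.2
        have h2 : y.1 = c * a * c⁻¹ := hc.symm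
        rw [h2, (hcomm c a).eq]
        group
      obtain ⟨x, hx⟩ := hex
      rw [H x hx, Finset.prod_congr rfl (fun i _ => hclsone (x i)), Finset.prod_const,
        hbot, Subgroup.card_bot, one_pow]
      simp
  · intro E x hx
    have hinj : Function.Injective (fun (φ : autC G) =>
        fun i => (⟨(φ : MulAut G) (x i), φ.2 (x i)⟩ : {y : G // IsConj (x i) y})) := by
      intro φ ψ h
      exact Subtype.ext (mulAut_ext hx fun i => congrArg Subtype.val (congrFun h i))
    have h1 : Nat.card (autC G) ≤ ∏ i, Nat.card {y : G // IsConj (x i) y} := by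
      rw [← Nat.card_pi]
      exact Nat.card_le_card_of_injective _ hinj
    have h2 : ∀ i, Nat.card {y : G // IsConj (x i) y} ≤ Nat.card (commutator G) := by
      intro i
      have hinj2 : Function.Injective (fun (y : {y : G // IsConj (x i) y}) =>
          (⟨(x i)⁻¹ * y.1, by
            obtain ⟨c, hc⟩ := isConj_iff.mp y.2
            have hy : y.1 = c * x i * c⁻¹ := hc.symm
            have : (x i)⁻¹ * y.1 = ⁅(x i)⁻¹, c⁆ := by
              rw [commutatorElement_def, hy]; group
            rw [this, _root_.commutator_def]
            exact Subgroup.commutator_mem_commutator (Subgroup.mem_top _)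
              (Subgroup.mem_top _)⟩ : commutator G)) := by
        intro y1 y2 h
        have := congrArg Subtype.val h
        simp only at this
        exact Subtype.ext (mul_left_cancel this)
      exact Nat.card_le_card_of_injective _ hinj2
    have h3 : ∏ i, Nat.card {y : G // IsConj (x i) y} ≤
        Nat.card (commutator G) ^ Group.rank G := by
      calc ∏ i, Nat.card {y : G // IsConj (x i) y}
          ≤ ∏ _i : Fin n, Nat.card (commutator G) :=
            Finset.prod_le_prod' (fun i _ => h2 i)
        _ = Nat.card (commutator G) ^ Group.rank G := by
            rw [Finset.prod_const, Finset.card_univ, Fintype.card_fin]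
    exact le_antisymm h1 (by rw [E]; exact h3)
end

section
/- Let G be a finite p-group with |Aut_c(G)| = |γ₂(G)|^{d(G)}, and let N be a proper nontrivial normal subgroup of G. Then the quotient group G/N satisfies |Aut_c(G/N)| = |γ₂(G/N)|^{d(G/N)}. -/
open scoped commutatorElement in
/-- A class-preserving automorphism moves each element within its coset of the commutator
subgroup. -/
lemma autC_mem_commutator {G : Type*} [Group G] (φ : autC G) (x : G) :
    x⁻¹ * (φ : MulAut G) x ∈ commutator G := by
  obtain ⟨c, hc⟩ := isConj_iff.mp (φ.2 x)
  have h : x⁻¹ * (φ : MulAut G) x = ⁅x⁻¹, c⁆ := by rw [← hc]; group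
  rw [h, commutator_def]
  exact Subgroup.commutator_mem_commutator (Subgroup.mem_top _) (Subgroup.mem_top _)

/-- The evaluation map on a finite set of elements, with values in (translates of) the
commutator subgroup. -/
noncomputable def autCEval {G : Type*} [Group G] (S : Finset G) :
    autC G → (S → commutator G) :=
  fun φ s => ⟨(s : G)⁻¹ * (φ : MulAut G) s, autC_mem_commutator φ s⟩

lemma autCEval_injective {G : Type*} [Group G] (S : Finset G)
    (hS : Subgroup.closure (S : Set G) = ⊤) : Function.Injective (autCEval S) := by
  intro φ ψ h
  have hhom : ((φ : MulAut G) : G →* G) = ((ψ : MulAut G) : G →* G) := by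
    refine MonoidHom.eq_of_eqOn_dense hS ?_
    intro s hs
    have h1 := congrArg Subtype.val (congrFun h ⟨s, hs⟩)
    simpa using mul_left_cancel h1
  exact Subtype.ext (MulEquiv.ext fun x => DFunLike.congr_fun hhom x)

lemma card_autC_le (G : Type*) [Group G] [Finite G] :
    Nat.card (autC G) ≤ Nat.card (commutator G) ^ Group.rank G := by
  obtain ⟨S, hcard, hS⟩ := Group.rank_spec G
  calc Nat.card (autC G) ≤ Nat.card (S → commutator G) :=
        Nat.card_le_card_of_injective _ (autCEval_injective S hS)
    _ = Nat.card (commutator G) ^ Group.rank G := by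
        rw [Nat.card_fun, Nat.card_eq_finsetCard, hcard]

/-- If a finite p-group `G` satisfies Hypothesis A (`|Aut_c(G)| = |γ₂(G)|^{d(G)}`) and `N`
is a proper nontrivial normal subgroup, then `G/N` also satisfies Hypothesis A. -/
theorem stmt_4 {p : ℕ} {G : Type*} [Group G] [Finite G] (hp : p.Prime) (hpG : IsPGroup p G)
    (hA : Nat.card (autC G) = Nat.card (commutator G) ^ Group.rank G)
    (N : Subgroup G) [N.Normal] (hbot : N ≠ ⊥) (htop : N ≠ ⊤) :
    Nat.card (autC (G ⧸ N)) = Nat.card (commutator (G ⧸ N)) ^ Group.rank (G ⧸ N) := by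
  classical
  obtain ⟨S, hcard, hS⟩ := Group.rank_spec G
  set d := Group.rank G with hd
  set Q := G ⧸ N with hQ
  let π : G →* Q := QuotientGroup.mk' N
  have hπ : Function.Surjective π := QuotientGroup.mk'_surjective N
  -- the evaluation map for `G` is bijective, by Hypothesis A
  have hbij : Function.Bijective (autCEval S) := by
    refine (Nat.bijective_iff_injective_and_card _).mpr ⟨autCEval_injective S hS, ?_⟩
    rw [hA, Nat.card_fun, Nat.card_eq_finsetCard, hcard]
  -- class-preserving automorphisms descend to the quotient
  have descend : ∀ φ : autC G, ∃ ψ : autC Q,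
      ∀ x : G, (ψ : MulAut Q) (π x) = π ((φ : MulAut G) x) := by
    intro φ
    have hmapped : ∀ (θ : autC G) (n : G), n ∈ N → (θ : MulAut G) n ∈ N := by
      intro θ n hn
      obtain ⟨c, hc⟩ := isConj_iff.mp (θ.2 n)
      rw [← hc]
      exact Subgroup.Normal.conj_mem ‹N.Normal› n hn c
    have hmap : Subgroup.map ((φ : MulAut G) : G →* G) N = N := by
      apply le_antisymm
      · rintro _ ⟨n, hn, rfl⟩
        exact hmapped φ n hn
      · intro n hn
        refine ⟨((φ⁻¹ : autC G) : MulAut G) n, hmapped φ⁻¹ n hn, ?_⟩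
        simp
    let e : Q ≃* Q := QuotientGroup.congr N N ((φ : MulAut G) : G ≃* G) hmap
    have he : ∀ x : G, e (π x) = π ((φ : MulAut G) x) := fun x =>
      QuotientGroup.congr_mk N N _ hmap x
    have hcp : ∀ q : Q, IsConj q (e q) := by
      intro q
      obtain ⟨x, rfl⟩ := hπ q
      rw [he x]
      exact π.map_isConj (φ.2 x)
    exact ⟨⟨(e : MulAut Q), hcp⟩, he⟩
  -- the commutator subgroup of the quotient is the image of the commutator subgroup
  have hcommQ : Subgroup.map π (commutator G) = commutator Q := by
    rw [commutator_def, commutator_def, Subgroup.map_commutator,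
      Subgroup.map_top_of_surjective π hπ]
  -- lower bound: evaluation on the images of `S` is surjective onto `(commutator Q)^d`
  have hlow : Nat.card (commutator Q) ^ d ≤ Nat.card (autC Q) := by
    have hsurj : Function.Surjective
        (fun (ψ : autC Q) (s : S) =>
          (⟨(π s)⁻¹ * (ψ : MulAut Q) (π s), autC_mem_commutator ψ (π s)⟩ : commutator Q)) := by
      intro t
      have hchoose : ∀ s : S, ∃ c : commutator G, π (c : G) = ((t s : Q)) := by
        intro s
        have h2 : ((t s : Q)) ∈ Subgroup.map π (commutator G) := by
          rw [hcommQ]; exact (t s).2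
        obtain ⟨c, hc, hc2⟩ := h2
        exact ⟨⟨c, hc⟩, hc2⟩
      choose c hc using hchoose
      obtain ⟨φ, hφ⟩ := hbij.2 c
      obtain ⟨ψ, hψ⟩ := descend φ
      refine ⟨ψ, funext fun s => Subtype.ext ?_⟩
      show ((π (s : G))⁻¹ * (ψ : MulAut Q) (π s) : Q) = (t s : Q)
      have h1 : (s : G)⁻¹ * (φ : MulAut G) s = (c s : G) :=
        congrArg Subtype.val (congrFun hφ s)
      have : (π (s : G))⁻¹ * (ψ : MulAut Q) (π s) = π ((s : G)⁻¹ * (φ : MulAut G) s) := by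
        rw [hψ, map_mul, map_inv]
      rw [this, h1, hc]
    calc Nat.card (commutator Q) ^ d = Nat.card (S → commutator Q) := by
          rw [Nat.card_fun, Nat.card_eq_finsetCard, hcard]
      _ ≤ Nat.card (autC Q) := Nat.card_le_card_of_surjective _ hsurj
  -- upper bound and conclusion
  have hrank : Group.rank Q ≤ d := Group.rank_le_of_surjective π hπ
  have hb : 1 ≤ Nat.card (commutator Q) := Nat.one_le_iff_ne_zero.mpr Nat.card_pos.ne'
  have hup : Nat.card (autC Q) ≤ Nat.card (commutator Q) ^ Group.rank Q := card_autC_le Q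
  exact le_antisymm hup ((Nat.pow_le_pow_right hb hrank).trans hlow)
end

section
/- Let G be a finite Camina-type group and let N be a normal subgroup of G with N ≤ γ₂(G). Then G/N is also a Camina-type group. -/
/-- A finite group `G` is Camina-type if `[x, G] = γ₂(G)` for all `x ∈ G - Φ(G)`,
where `[x, G] = {x⁻¹g⁻¹xg : g ∈ G}`. -/
def IsCaminaType (G : Type*) [Group G] : Prop :=
  ∀ x : G, x ∉ frattini G →
    {z : G | ∃ g : G, z = x⁻¹ * g⁻¹ * x * g} = (commutator G : Set G)

/-- If `G` is a finite (non-abelian) Camina-type group and `N ≤ γ₂(G)` is normal in `G`,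
then `G/N` is also Camina-type. -/
theorem stmt_5 {G : Type*} [Group G] [Finite G]
    (hna : ¬ ∀ a b : G, a * b = b * a) (hG : IsCaminaType G)
    (N : Subgroup G) [N.Normal] (hN : N ≤ commutator G) :
    IsCaminaType (G ⧸ N) := by
  intro x hx
  obtain ⟨a, rfl⟩ := QuotientGroup.mk'_surjective N x
  have ha : a ∉ frattini G := by
    intro h
    exact hx (frattini_le_comap_frattini_of_surjective (φ := QuotientGroup.mk' N)
      (QuotientGroup.mk'_surjective N) h)
  have hcom := hG a ha
  have hmap : (commutator G).map (QuotientGroup.mk' N) = commutator (G ⧸ N) := by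
    rw [commutator_def, Subgroup.map_commutator,
      Subgroup.map_top_of_surjective _ (QuotientGroup.mk'_surjective N), commutator_def]
  ext z
  constructor
  · rintro ⟨g, rfl⟩
    obtain ⟨b, rfl⟩ := QuotientGroup.mk'_surjective N g
    have hmem : a⁻¹ * b⁻¹ * a * b ∈ commutator G := by
      have : a⁻¹ * b⁻¹ * a * b ∈ {z : G | ∃ g : G, z = a⁻¹ * g⁻¹ * a * g} := ⟨b, rfl⟩
      rwa [hcom] at this
    have : (QuotientGroup.mk' N) (a⁻¹ * b⁻¹ * a * b) ∈ commutator (G ⧸ N) := by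
      rw [← hmap]; exact ⟨_, hmem, rfl⟩
    simpa using this
  · intro hz
    rw [← hmap] at hz
    obtain ⟨c, hc, rfl⟩ := hz
    have hc' : c ∈ ((commutator G : Subgroup G) : Set G) := hc
    rw [← hcom] at hc'
    obtain ⟨g, rfl⟩ := hc'
    exact ⟨QuotientGroup.mk' N g, by simp⟩
end

section
/- Every finite nilpotent Camina-type group is a p-group for some prime p. -/
lemma commutator_le_sylow {G : Type*} [Group G] [Finite G] [Group.IsNilpotent G]
    (hG : IsCaminaType G) {r : ℕ} (hr : r.Prime) (hdvd : r ∣ Nat.card G)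
    (P : Sylow r G) : commutator G ≤ (P : Subgroup G) := by
  haveI : Fact r.Prime := ⟨hr⟩
  have key : ∀ (p : ℕ) (_hp : Fact p.Prime) (P : Sylow p G), (↑P : Subgroup G).Normal :=
    ((isNilpotent_of_finite_tfae (G := G)).out 0 3).mp ‹Group.IsNilpotent G›
  haveI hPn : (P : Subgroup G).Normal := key r ⟨hr⟩ P
  obtain ⟨H, hH⟩ := Subgroup.exists_right_complement'_of_coprime P.card_coprime_index
  have hPbot : (P : Subgroup G) ≠ ⊥ := P.ne_bot_of_dvd_card hdvd
  have hHtop : H ≠ ⊤ := by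
    intro h
    apply hPbot
    have hd := hH.disjoint
    rw [h, disjoint_top] at hd
    exact hd
  obtain ⟨M, hM, hHM⟩ := (eq_top_or_exists_le_coatom H).resolve_left hHtop
  have hPM : ¬ (P : Subgroup G) ≤ M := by
    intro h
    exact hM.1 (top_le_iff.mp (hH.sup_eq_top ▸ sup_le h hHM))
  obtain ⟨y, hyP, hyM⟩ := SetLike.not_le_iff_exists.mp hPM
  have hyF : y ∉ frattini G := fun h => hyM (frattini_le_coatom hM h)
  have hc := hG y hyF
  intro z hz
  rw [← SetLike.mem_coe, ← hc] at hz
  obtain ⟨g, rfl⟩ := hz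
  have h1 : g⁻¹ * y * g ∈ (P : Subgroup G) := by
    have := hPn.conj_mem y hyP g⁻¹
    simpa using this
  have : y⁻¹ * g⁻¹ * y * g = y⁻¹ * (g⁻¹ * y * g) := by group
  rw [this]
  exact mul_mem (inv_mem hyP) h1

/-- Every finite nilpotent (non-abelian) Camina-type group is a p-group for some prime p. -/
theorem stmt_6 {G : Type*} [Group G] [Finite G] [Group.IsNilpotent G]
    (hna : ¬ ∀ a b : G, a * b = b * a) (hG : IsCaminaType G) :
    ∃ p : ℕ, p.Prime ∧ IsPGroup p G := by
  by_contra hcon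
  push_neg at hcon
  have hn0 : Nat.card G ≠ 0 := Nat.card_pos.ne'
  have hn1 : Nat.card G ≠ 1 := by
    intro h
    rw [Nat.card_eq_one_iff_unique] at h
    exact hna fun a b => by rw [h.1.elim a b]
  set n := Nat.card G with hn
  have hp : n.minFac.Prime := Nat.minFac_prime hn1
  have hpd : n.minFac ∣ n := Nat.minFac_dvd n
  -- there must be another prime dividing n
  have hq : ∃ q : ℕ, q.Prime ∧ q ∣ n ∧ q ≠ n.minFac := by
    by_contra hq
    push_neg at hq
    have hk : n = n.minFac ^ n.primeFactorsList.length :=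
      Nat.eq_prime_pow_of_unique_prime_dvd hn0
        (fun {d} hd hdd => hq d hd hdd)
    exact hcon n.minFac hp (IsPGroup.of_card hk)
  obtain ⟨q, hq, hqd, hqp⟩ := hq
  haveI : Fact n.minFac.Prime := ⟨hp⟩
  haveI : Fact q.Prime := ⟨hq⟩
  obtain ⟨P⟩ : Nonempty (Sylow n.minFac G) := inferInstance
  obtain ⟨Q⟩ : Nonempty (Sylow q G) := inferInstance
  have h1 := commutator_le_sylow hG hp hpd P
  have h2 := commutator_le_sylow hG hq hqd Q
  have hdis : Disjoint (P : Subgroup G) (Q : Subgroup G) :=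
    IsPGroup.disjoint_of_ne n.minFac q (Ne.symm hqp) _ _ P.2 Q.2
  have hbot : commutator G = ⊥ := le_bot_iff.mp ((le_inf h1 h2).trans hdis.le_bot)
  apply hna
  intro a b
  open scoped commutatorElement in
  have hab : ⁅a, b⁆ ∈ commutator G :=
    Subgroup.commutator_mem_commutator (Subgroup.mem_top a) (Subgroup.mem_top b)
  rw [hbot, Subgroup.mem_bot] at hab
  exact (commutatorElement_eq_one_iff_commute.mp hab).eq
end

section
/- Let G be a finite nilpotent group of class 2. Then the map φ ↦ f_φ, where f_φ(g·Z(G)) = g⁻¹φ(g), is an isomorphism of the group Aut_c(G) onto the group Hom_c(G/Z(G), γ₂(G)) = { f ∈ Hom(G/Z(G), γ₂(G)) : f(g·Z(G)) ∈ [g,G] for all g ∈ G }. -/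
open scoped commutatorElement

section Stmt7Aux

variable {G : Type*} [Group G]

/-- `g⁻¹ φ g` is a commutator element. -/
lemma stmt7_mem_comm (φ : autC G) (x : G) :
    x⁻¹ * (φ : MulAut G) x ∈ commutator G := by
  obtain ⟨c, hc⟩ := isConj_iff.mp (φ.2 x)
  have h : x⁻¹ * (φ : MulAut G) x = ⁅x⁻¹, c⁆ := by
    rw [← hc, commutatorElement_def]; group
  rw [h, commutator_def]
  exact Subgroup.commutator_mem_commutator (Subgroup.mem_top _) (Subgroup.mem_top _)

lemma stmt7_exists (φ : autC G) (x : G) :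
    ∃ h : G, x⁻¹ * (φ : MulAut G) x = x⁻¹ * h⁻¹ * x * h := by
  obtain ⟨c, hc⟩ := isConj_iff.mp (φ.2 x)
  exact ⟨c⁻¹, by rw [← hc]; group⟩

lemma stmt7_central (hcen : commutator G ≤ Subgroup.center G) (φ : autC G) (x : G) :
    x⁻¹ * (φ : MulAut G) x ∈ Subgroup.center G :=
  hcen (stmt7_mem_comm φ x)

/-- class-preserving automorphisms fix the center pointwise. -/
lemma stmt7_fix_center (φ : autC G) {z : G} (hz : z ∈ Subgroup.center G) :
    (φ : MulAut G) z = z := by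
  obtain ⟨c, hc⟩ := isConj_iff.mp (φ.2 z)
  rw [Subgroup.mem_center_iff] at hz
  rw [← hc, hz c, mul_inv_cancel_right]

/-- The homomorphism `g ↦ g⁻¹ φ g`. -/
def stmt7Hom (hcen : commutator G ≤ Subgroup.center G) (φ : autC G) : G →* G where
  toFun g := g⁻¹ * (φ : MulAut G) g
  map_one' := by simp
  map_mul' g h := by
    have hc := (Subgroup.mem_center_iff.mp (stmt7_central hcen φ g)) h⁻¹
    simp only [map_mul, mul_inv_rev]
    calc h⁻¹ * g⁻¹ * ((φ : MulAut G) g * (φ : MulAut G) h)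
        = h⁻¹ * (g⁻¹ * (φ : MulAut G) g) * (φ : MulAut G) h := by group
      _ = g⁻¹ * (φ : MulAut G) g * h⁻¹ * (φ : MulAut G) h := by rw [hc]
      _ = g⁻¹ * (φ : MulAut G) g * (h⁻¹ * (φ : MulAut G) h) := by rw [mul_assoc]

/-- The induced homomorphism on `G ⧸ Z(G)`. -/
def stmt7Quot (hcen : commutator G ≤ Subgroup.center G) (φ : autC G) :
    G ⧸ Subgroup.center G →* G :=
  QuotientGroup.lift (Subgroup.center G) (stmt7Hom hcen φ)
    (fun z hz => by
      rw [MonoidHom.mem_ker]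
      show z⁻¹ * (φ : MulAut G) z = 1
      rw [stmt7_fix_center φ hz, inv_mul_cancel])

@[simp] lemma stmt7Quot_mk (hcen : commutator G ≤ Subgroup.center G) (φ : autC G) (g : G) :
    stmt7Quot hcen φ (g : G ⧸ Subgroup.center G) = g⁻¹ * (φ : MulAut G) g := rfl

variable (hcen : commutator G ≤ Subgroup.center G)
  (f : {f : G ⧸ Subgroup.center G →* G //
        ∀ g : G, f (g : G ⧸ Subgroup.center G) ∈ commutator G ∧
          f (g : G ⧸ Subgroup.center G) ∈ {z : G | ∃ h : G, z = g⁻¹ * h⁻¹ * g * h}})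

/-- The homomorphism `g ↦ g · f(gZ)`. -/
def stmt7Back : G →* G where
  toFun g := g * f.1 (g : G ⧸ Subgroup.center G)
  map_one' := by simp
  map_mul' g h := by
    have hc := Subgroup.mem_center_iff.mp (hcen (f.2 g).1) h
    show g * h * f.1 ((g * h : G) : G ⧸ Subgroup.center G) = _
    have : ((g * h : G) : G ⧸ Subgroup.center G)
        = (g : G ⧸ Subgroup.center G) * (h : G ⧸ Subgroup.center G) := rfl
    rw [this, map_mul]
    calc g * h * (f.1 (g : G ⧸ Subgroup.center G) * f.1 (h : G ⧸ Subgroup.center G))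
        = g * (h * f.1 (g : G ⧸ Subgroup.center G)) * f.1 (h : G ⧸ Subgroup.center G) := by
          group
      _ = g * (f.1 (g : G ⧸ Subgroup.center G) * h) * f.1 (h : G ⧸ Subgroup.center G) := by
          rw [hc]
      _ = g * f.1 (g : G ⧸ Subgroup.center G) * (h * f.1 (h : G ⧸ Subgroup.center G)) := by
          group

lemma stmt7Back_bij [Finite G] : Function.Bijective (stmt7Back hcen f) := by
  rw [← Finite.injective_iff_bijective]
  rw [injective_iff_map_eq_one]
  intro g hg
  have hg1 : g * f.1 (g : G ⧸ Subgroup.center G) = 1 := hg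
  have hg' : g = (f.1 (g : G ⧸ Subgroup.center G))⁻¹ := mul_eq_one_iff_eq_inv.mp hg1
  have hzc : g ∈ Subgroup.center G := by
    rw [hg']
    exact (Subgroup.center G).inv_mem (hcen (f.2 g).1)
  have h1 : (g : G ⧸ Subgroup.center G) = 1 := (QuotientGroup.eq_one_iff g).mpr hzc
  rw [hg', h1, map_one, inv_one]

end Stmt7Aux

/-- For a finite nilpotent group `G` of class 2, the map `φ ↦ f_φ`, where
`f_φ(g·Z(G)) = g⁻¹φ(g)`, is an isomorphism of `Aut_c(G)` onto
`Hom_c(G/Z(G), γ₂(G)) = {f ∈ Hom(G/Z(G), γ₂(G)) : f(g·Z(G)) ∈ [g,G] for all g}`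
(where the group structure on the latter is pointwise multiplication). -/
theorem stmt_7 {G : Type*} [Group G] [Finite G] [Group.IsNilpotent G]
    (hcl : Group.nilpotencyClass G = 2) :
    ∃ e : autC G ≃ {f : G ⧸ Subgroup.center G →* G //
        ∀ g : G, f (g : G ⧸ Subgroup.center G) ∈ commutator G ∧
          f (g : G ⧸ Subgroup.center G) ∈ {z : G | ∃ h : G, z = g⁻¹ * h⁻¹ * g * h}},
      (∀ (φ : autC G) (g : G),
          ((e φ : {f : G ⧸ Subgroup.center G →* G // _}) : G ⧸ Subgroup.center G →* G)
              (g : G ⧸ Subgroup.center G) = g⁻¹ * (φ : MulAut G) g) ∧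
      ∀ (φ ψ : autC G) (g : G),
        ((e (φ * ψ) : _) : G ⧸ Subgroup.center G →* G) (g : G ⧸ Subgroup.center G) =
          ((e φ : _) : G ⧸ Subgroup.center G →* G) (g : G ⧸ Subgroup.center G) *
            ((e ψ : _) : G ⧸ Subgroup.center G →* G) (g : G ⧸ Subgroup.center G) := by
  classical
  -- From class 2, the commutator subgroup is central.
  have hbot : Subgroup.lowerCentralSeries (⊤ : Subgroup G) 2 = ⊥ := by
    rw [lowerCentralSeries_eq_bot_iff_nilpotencyClass_le, hcl]
  have hcen : commutator G ≤ Subgroup.center G := by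
    intro c hc
    rw [Subgroup.mem_center_iff]
    intro y
    have hmem : ⁅c, y⁆ ∈ Subgroup.lowerCentralSeries (⊤ : Subgroup G) 2 := by
      rw [show (2 : ℕ) = 1 + 1 from rfl, lowerCentralSeries_succ]
      exact Subgroup.subset_closure ⟨c, hc, y, Subgroup.mem_top y, rfl⟩
    rw [hbot, Subgroup.mem_bot, commutatorElement_def] at hmem
    have : c * y * c⁻¹ = y := by
      have := mul_inv_eq_one.mp hmem
      simpa using this
    calc y * c = (c * y * c⁻¹) * c := by rw [this]
      _ = c * y := by group
  -- the backward map, as an element of `autC G`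
  have backMem : ∀ f, (MulEquiv.ofBijective _ (stmt7Back_bij hcen f)) ∈ autC G := by
    intro f x
    obtain ⟨h, hh⟩ := (f.2 x).2
    have hx : (MulEquiv.ofBijective _ (stmt7Back_bij hcen f)) x = h⁻¹ * x * h := by
      show x * f.1 (x : G ⧸ Subgroup.center G) = h⁻¹ * x * h
      rw [hh]; group
    rw [hx, isConj_iff]
    exact ⟨h⁻¹, by group⟩
  refine ⟨{
    toFun := fun φ => ⟨stmt7Quot hcen φ, fun g => ⟨stmt7_mem_comm φ g, stmt7_exists φ g⟩⟩
    invFun := fun f => ⟨MulEquiv.ofBijective _ (stmt7Back_bij hcen f), backMem f⟩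
    left_inv := ?_
    right_inv := ?_ }, ?_, ?_⟩
  · intro φ
    apply Subtype.ext
    apply MulEquiv.ext
    intro x
    show x * (x⁻¹ * (φ : MulAut G) x) = (φ : MulAut G) x
    group
  · intro f
    apply Subtype.ext
    apply MonoidHom.ext
    intro q
    induction q using QuotientGroup.induction_on with
    | H g =>
      show g⁻¹ * (g * f.1 (g : G ⧸ Subgroup.center G)) = f.1 (g : G ⧸ Subgroup.center G)
      group
  · intro φ g
    rfl
  · intro φ ψ g
    show g⁻¹ * ((φ * ψ : autC G) : MulAut G) g
        = (g⁻¹ * (φ : MulAut G) g) * (g⁻¹ * (ψ : MulAut G) g)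
    have hmul : ((φ * ψ : autC G) : MulAut G) g = (φ : MulAut G) ((ψ : MulAut G) g) := rfl
    have hdecomp : (ψ : MulAut G) g = g * (g⁻¹ * (ψ : MulAut G) g) := by group
    rw [hmul, hdecomp, map_mul, stmt7_fix_center φ (stmt7_central hcen ψ g)]
    group
end

section
/- Let G be a Camina-type finite p-group of nilpotency class 2. Then G/Z(G) is homocyclic, i.e., a direct product of cyclic groups of the same order. -/
open Subgroup
open scoped commutatorElement

/-- If `H` contains all `p`-th powers and the commutator subgroup, then any element
outside `H` is outside the Frattini subgroup. -/
lemma aux_not_mem_frattini {G : Type*} [Group G] [Finite G] {p : ℕ} (hp : p.Prime)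
    {H : Subgroup G} (hHp : ∀ g : G, g ^ p ∈ H) (hHc : commutator G ≤ H)
    {x : G} (hx : x ∉ H) : x ∉ frattini G := by
  classical
  haveI : Fact p.Prime := ⟨hp⟩
  set S : Set (Subgroup G) := {K | H ≤ K ∧ x ∉ K} with hS
  obtain ⟨M, hMS, hMmax'⟩ :=
    Set.Finite.exists_maximalFor id S (Set.toFinite S) ⟨H, le_rfl, hx⟩
  have hMmax : ∀ K ∈ S, M ≤ K → M = K := fun K hK hle => le_antisymm hle (hMmax' hK hle)
  obtain ⟨hHM, hxM⟩ := hMS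
  have hnormal : ∀ {K : Subgroup G}, H ≤ K → K.Normal := by
    intro K hK
    constructor
    intro m hm g
    have h1 : g * m * g⁻¹ = m * ⁅m⁻¹, g⁆ := by
      rw [commutatorElement_def]; group
    rw [h1]
    refine K.mul_mem hm (hK (hHc ?_))
    rw [_root_.commutator_def]
    exact commutator_mem_commutator (mem_top _) (mem_top _)
  haveI hMnorm : M.Normal := hnormal hHM
  set π := QuotientGroup.mk' M with hπ
  have hπp : ∀ g : G, (π g) ^ p = 1 := fun g => by
    rw [← map_pow]
    exact (QuotientGroup.eq_one_iff _).mpr (hHM (hHp g))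
  have hπx : π x ≠ 1 := fun h => hxM ((QuotientGroup.eq_one_iff _).mp h)
  have key : ∀ g : G, g ∈ M ⊔ zpowers x := by
    intro g
    by_cases hgM : g ∈ M
    · exact (le_sup_left : M ≤ M ⊔ zpowers x) hgM
    · have hxK : x ∈ M ⊔ zpowers g := by
        by_contra hxK
        have hKS : M ⊔ zpowers g ∈ S := ⟨hHM.trans le_sup_left, hxK⟩
        have heq : M = M ⊔ zpowers g := hMmax _ hKS le_sup_left
        have hg : g ∈ M ⊔ zpowers g := (le_sup_right : zpowers g ≤ _) (mem_zpowers g)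
        rw [← heq] at hg
        exact hgM hg
      have hπg : π g ≠ 1 := fun h => hgM ((QuotientGroup.eq_one_iff _).mp h)
      have hxord : orderOf (π x) = p := orderOf_eq_prime (hπp x) hπx
      have hgord : orderOf (π g) = p := orderOf_eq_prime (hπp g) hπg
      have himg : π x ∈ zpowers (π g) := by
        have h1 := Subgroup.mem_map_of_mem π hxK
        rw [Subgroup.map_sup, MonoidHom.map_zpowers,
          (Subgroup.map_eq_bot_iff M).mpr (le_of_eq (QuotientGroup.ker_mk' M).symm),
          bot_sup_eq] at h1
        exact h1
      have heq : zpowers (π x) = zpowers (π g) := by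
        apply Subgroup.eq_of_le_of_card_ge (Subgroup.zpowers_le.mpr himg)
        rw [Nat.card_zpowers, Nat.card_zpowers, hxord, hgord]
      have h2 : π g ∈ (zpowers x).map π := by
        rw [MonoidHom.map_zpowers, heq]
        exact mem_zpowers _
      obtain ⟨y, hy, hyg⟩ := Subgroup.mem_map.mp h2
      have hyM : y⁻¹ * g ∈ M := by
        have : y⁻¹ * g ∈ π.ker := by
          rw [MonoidHom.mem_ker, map_mul, map_inv, hyg, inv_mul_cancel]
        rwa [hπ, QuotientGroup.ker_mk'] at this
      have hg' : g = y * (y⁻¹ * g) := by group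
      rw [hg']
      exact Subgroup.mul_mem _ ((le_sup_right : zpowers x ≤ _) hy)
        ((le_sup_left : M ≤ _) hyM)
  have hcoatom : IsCoatom M := by
    constructor
    · intro h; rw [h] at hxM; exact hxM (mem_top x)
    · intro N hN
      have hxN : x ∈ N := by
        by_contra hxN
        exact hN.ne (hMmax _ ⟨hHM.trans hN.le, hxN⟩ hN.le)
      rw [eq_top_iff]
      intro g _
      exact sup_le hN.le (Subgroup.zpowers_le.mpr hxN) (key g)
  intro hfr
  exact hxM (frattini_le_coatom hcoatom hfr)

/-- If `G` is a Camina-type finite p-group of nilpotency class 2, then `G/Z(G)` is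
homocyclic, i.e. a direct product of cyclic groups of the same order `p^e`. -/
theorem stmt_8 {p : ℕ} {G : Type*} [Group G] [Finite G] (hp : p.Prime) (hpG : IsPGroup p G)
    (hG : IsCaminaType G)
    (hcl2 : (⊤ : Subgroup G).lowerCentralSeries 1 ≠ ⊥) (hcl2' : (⊤ : Subgroup G).lowerCentralSeries 2 = ⊥) :
    ∃ n e : ℕ,
      Nonempty ((G ⧸ Subgroup.center G) ≃* Multiplicative (Fin n → ZMod (p ^ e))) := by
  classical
  -- class 2 : the commutator subgroup is central
  have hcomm_le : commutator G ≤ Subgroup.center G := by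
    have h2 : (⊤ : Subgroup G).lowerCentralSeries 2 = ⁅commutator G, (⊤ : Subgroup G)⁆ := rfl
    rw [h2, Subgroup.commutator_eq_bot_iff_le_centralizer] at hcl2'
    rwa [Subgroup.coe_top, Subgroup.centralizer_univ] at hcl2'
  letI : CommGroup (G ⧸ Subgroup.center G) :=
    { (inferInstance : Group (G ⧸ Subgroup.center G)) with
      mul_comm := by
        intro a b
        induction a using QuotientGroup.induction_on with
        | H g =>
        induction b using QuotientGroup.induction_on with
        | H h =>
        rw [← QuotientGroup.mk_mul, ← QuotientGroup.mk_mul, QuotientGroup.eq]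
        apply hcomm_le
        have h1 : (g * h)⁻¹ * (h * g) = ⁅h⁻¹, g⁻¹⁆ := by
          rw [commutatorElement_def]; group
        rw [h1, _root_.commutator_def]
        exact commutator_mem_commutator (mem_top _) (mem_top _) }
  set π := QuotientGroup.mk' (Subgroup.center G) with hπdef
  have hmemc : ∀ x g : G, x⁻¹ * g⁻¹ * x * g ∈ commutator G := by
    intro x g
    have h1 : x⁻¹ * g⁻¹ * x * g = ⁅x⁻¹, g⁻¹⁆ := by
      rw [commutatorElement_def]; group
    rw [h1, _root_.commutator_def]
    exact commutator_mem_commutator (mem_top _) (mem_top _)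
  have hid : ∀ (x g : G) (n : ℕ),
      g⁻¹ * x ^ n * g = x ^ n * (x⁻¹ * g⁻¹ * x * g) ^ n := by
    intro x g n
    have h1 : g⁻¹ * x ^ n * g = (g⁻¹ * x * g) ^ n := by
      rw [show g⁻¹ * x * g = g⁻¹ * x * g⁻¹⁻¹ by rw [inv_inv], conj_pow, inv_inv]
    have h2 : g⁻¹ * x * g = x * (x⁻¹ * g⁻¹ * x * g) := by group
    have h3 : Commute x (x⁻¹ * g⁻¹ * x * g) :=
      (Subgroup.mem_center_iff.mp (hcomm_le (hmemc x g)) x)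
    rw [h1, h2, h3.mul_pow]
  -- the key order computation
  have horder : ∀ x : G, (¬ ∃ b : G ⧸ Subgroup.center G, b ^ p = π x) →
      orderOf (π x) = Monoid.exponent ↥(commutator G) := by
    intro x hxp
    have hxH : x ∉ Subgroup.comap π (powMonoidHom p :
        (G ⧸ Subgroup.center G) →* (G ⧸ Subgroup.center G)).range := by
      intro h
      rw [Subgroup.mem_comap] at h
      obtain ⟨b, hb⟩ := MonoidHom.mem_range.mp h
      exact hxp ⟨b, hb⟩
    have hfr : x ∉ frattini G := by
      refine aux_not_mem_frattini hp (fun g => ?_) (fun c hc => ?_) hxH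
      · rw [Subgroup.mem_comap]
        exact ⟨π g, by rw [powMonoidHom_apply, map_pow]⟩
      · rw [Subgroup.mem_comap]
        refine ⟨1, ?_⟩
        rw [powMonoidHom_apply, one_pow, eq_comm]
        exact (QuotientGroup.eq_one_iff c).mpr (hcomm_le hc)
    have hset := hG x hfr
    have hcenter_iff : ∀ n : ℕ,
        x ^ n ∈ Subgroup.center G ↔ ∀ k : ↥(commutator G), k ^ n = 1 := by
      intro n
      constructor
      · rintro hxn ⟨k, hk⟩
        have hk' : k ∈ {z : G | ∃ g : G, z = x⁻¹ * g⁻¹ * x * g} := by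
          rw [hset]; exact hk
        obtain ⟨g, hg⟩ := hk'
        have h1 := hid x g n
        have h2 : g⁻¹ * x ^ n * g = x ^ n := by
          rw [Subgroup.mem_center_iff.mp hxn g⁻¹]; group
        have h3 : x ^ n * (x⁻¹ * g⁻¹ * x * g) ^ n = x ^ n * 1 := by
          rw [mul_one, ← h1, h2]
        have hcn : (x⁻¹ * g⁻¹ * x * g) ^ n = 1 := mul_left_cancel h3
        apply Subtype.ext
        rw [SubmonoidClass.coe_pow]
        simpa [hg] using hcn
      · intro hall
        rw [Subgroup.mem_center_iff]
        intro g
        have hcn : (x⁻¹ * g⁻¹ * x * g) ^ n = 1 := by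
          simpa using congrArg Subtype.val (hall ⟨_, hmemc x g⟩)
        have h2 : g⁻¹ * x ^ n * g = x ^ n := by rw [hid x g n, hcn, mul_one]
        have h3 : g * (g⁻¹ * x ^ n * g) = x ^ n * g := by group
        rw [h2] at h3
        exact h3
    have hE1 : (π x) ^ Monoid.exponent ↥(commutator G) = 1 := by
      rw [← map_pow]
      refine (QuotientGroup.eq_one_iff _).mpr ((hcenter_iff _).mpr fun k => ?_)
      exact Monoid.pow_exponent_eq_one k
    have hE2 : Monoid.exponent ↥(commutator G) ∣ orderOf (π x) := by
      refine Monoid.exponent_dvd_iff_forall_pow_eq_one.mpr fun k => ?_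
      refine (hcenter_iff _).mp ?_ k
      refine (QuotientGroup.eq_one_iff _).mp ?_
      rw [QuotientGroup.mk_pow]
      exact pow_orderOf_eq_one (π x)
    exact Nat.dvd_antisymm (orderOf_dvd_of_pow_eq_one hE1) hE2
  -- structure theorem
  obtain ⟨ι, fι, nn, hnn, ⟨f⟩⟩ :=
    CommGroup.equiv_prod_multiplicative_zmod_of_finite (G ⧸ Subgroup.center G)
  haveI := fι
  have hpA : IsPGroup p (G ⧸ Subgroup.center G) := hpG.to_quotient _
  have hkey : ∀ i : ι, (∃ e : ℕ, e ≠ 0 ∧ nn i = p ^ e) ∧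
      nn i = Monoid.exponent ↥(commutator G) := by
    intro i
    set sing : (j : ι) → Multiplicative (ZMod (nn j)) :=
      Pi.mulSingle i (Multiplicative.ofAdd (1 : ZMod (nn i))) with hsing
    set a : G ⧸ Subgroup.center G := f.symm sing with ha
    have hsingle_inj : Function.Injective
        (MonoidHom.mulSingle (fun j => Multiplicative (ZMod (nn j))) i) := by
      intro u v huv
      have := congrFun huv i
      simpa using this
    have horda : orderOf a = nn i := by
      have e1 : orderOf a = orderOf sing :=
        orderOf_injective f.symm.toMonoidHom f.symm.injective sing
      have e2 : orderOf sing
          = orderOf (Multiplicative.ofAdd (1 : ZMod (nn i))) :=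
        orderOf_injective (MonoidHom.mulSingle (fun j => Multiplicative (ZMod (nn j))) i)
          hsingle_inj _
      rw [e1, e2, orderOf_ofAdd_eq_addOrderOf, ZMod.addOrderOf_one]
    obtain ⟨k, hk⟩ := hpA a
    have hdvd : orderOf a ∣ p ^ k := orderOf_dvd_of_pow_eq_one hk
    rw [horda] at hdvd
    obtain ⟨e, _, he⟩ := (Nat.dvd_prime_pow hp).mp hdvd
    have he0 : e ≠ 0 := by
      intro h0; rw [h0, pow_zero] at he
      have := hnn i; omega
    refine ⟨⟨e, he0, he⟩, ?_⟩
    have hnp : ¬ ∃ b : G ⧸ Subgroup.center G, b ^ p = a := by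
      rintro ⟨b, hb⟩
      have hb' : (f b) ^ p = sing := by
        rw [← map_pow, hb, ha, MulEquiv.apply_symm_apply]
      have hbi := congrFun hb' i
      rw [Pi.pow_apply, hsing, Pi.mulSingle_eq_same] at hbi
      have h2 : (p • (f b i).toAdd : ZMod (nn i)) = 1 := by
        rw [← toAdd_pow, hbi]; rfl
      have h3 := congrArg (ZMod.castHom (show p ∣ nn i from he ▸ dvd_pow_self p he0)
        (ZMod p)) h2
      rw [map_nsmul, map_one, nsmul_eq_mul, ZMod.natCast_self, zero_mul] at h3
      haveI : Fact p.Prime := ⟨hp⟩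
      exact zero_ne_one h3
    obtain ⟨x, hx⟩ := QuotientGroup.mk'_surjective (Subgroup.center G) a
    rw [← horda, ← hx]
    exact horder x (fun ⟨b, hb⟩ => hnp ⟨b, by rw [hb, hx]⟩)
  by_cases hι : Nonempty ι
  · obtain ⟨i0⟩ := hι
    obtain ⟨⟨e, he0, he⟩, hE0⟩ := hkey i0
    have hcongr : ∀ i, nn i = p ^ e := fun i => by rw [(hkey i).2, ← hE0, he]
    refine ⟨Fintype.card ι, e, ⟨?_⟩⟩
    refine f.trans ?_
    refine (MulEquiv.piCongrRight (fun i =>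
      (AddEquiv.toMultiplicative ((ZMod.ringEquivCongr (hcongr i)).toAddEquiv)))).trans ?_
    refine (MulEquiv.arrowCongr (Fintype.equivFin ι)
      (MulEquiv.refl (Multiplicative (ZMod (p ^ e))))).trans ?_
    exact (MulEquiv.piMultiplicative (fun _ : Fin (Fintype.card ι) => ZMod (p ^ e))).symm
  · haveI : IsEmpty ι := not_nonempty_iff.mp hι
    refine ⟨0, 0, ⟨?_⟩⟩
    haveI : Unique (Multiplicative (Fin 0 → ZMod (p ^ 0))) :=
      (Multiplicative.toAdd (α := Fin 0 → ZMod (p ^ 0))).unique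
    exact f.trans MulEquiv.ofUnique
end

section
/- Let G be a Camina-type finite p-group of nilpotency class 3 with |γ₃(G)| = p. Then (γ₂(G))^p ≤ Z(G), i.e., the subgroup generated by p-th powers of elements of the commutator subgroup is central. -/
/-- If `G` is a Camina-type finite p-group of nilpotency class 3 with `|γ₃(G)| = p`, then
the subgroup generated by p-th powers of elements of `γ₂(G)` is contained in `Z(G)`. -/
theorem stmt_9 {p : ℕ} {G : Type*} [Group G] [Finite G] (hp : p.Prime) (hpG : IsPGroup p G)
    (hG : IsCaminaType G)
    (hcl3 : (⊤ : Subgroup G).lowerCentralSeries 3 = ⊥) (hcard : Nat.card ((⊤ : Subgroup G).lowerCentralSeries 2) = p) :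
    Subgroup.closure {z : G | ∃ h ∈ commutator G, z = h ^ p} ≤ Subgroup.center G := by
  -- γ₃ ≤ Z(G)
  have hcent : ∀ z ∈ (⊤ : Subgroup G).lowerCentralSeries 2, ∀ g : G, z * g = g * z := by
    intro z hz g
    have : z * g * z⁻¹ * g⁻¹ ∈ (⊤ : Subgroup G).lowerCentralSeries 3 := by
      rw [Subgroup.lowerCentralSeries_succ]
      exact Subgroup.subset_closure ⟨z, hz, g, Subgroup.mem_top g, rfl⟩
    rw [hcl3, Subgroup.mem_bot] at this
    calc z * g = (z * g * z⁻¹ * g⁻¹) * (g * z) := by group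
      _ = g * z := by rw [this]; group
  apply Subgroup.closure_le _ |>.mpr
  rintro _ ⟨h, hh, rfl⟩
  rw [SetLike.mem_coe, Subgroup.mem_center_iff]
  intro g
  -- c := h⁻¹ * g⁻¹ * h * g ∈ γ₃
  set c : G := h⁻¹ * g⁻¹ * h * g with hc
  have hcmem : c ∈ (⊤ : Subgroup G).lowerCentralSeries 2 := by
    rw [Subgroup.lowerCentralSeries_succ]
    apply Subgroup.subset_closure
    refine ⟨h⁻¹, ?_, g⁻¹, Subgroup.mem_top _, by rw [hc]; group⟩
    exact Subgroup.inv_mem _ hh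
  have hcc : ∀ x : G, c * x = x * c := fun x => hcent c hcmem x
  have hcp : c ^ p = 1 := by
    have := pow_card_eq_one' (x := (⟨c, hcmem⟩ : (⊤ : Subgroup G).lowerCentralSeries 2))
    rw [hcard] at this
    exact congrArg Subtype.val this
  -- h^n * g = g * h^n * c^n
  have key : ∀ n : ℕ, h ^ n * g = g * h ^ n * c ^ n := by
    intro n
    induction n with
    | zero => simp
    | succ n ih =>
      have h1 : h * g = g * h * c := by rw [hc]; group
      calc h ^ (n+1) * g = h * (h ^ n * g) := by rw [pow_succ']; group
        _ = h * (g * h ^ n * c ^ n) := by rw [ih]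
        _ = (h * g) * h ^ n * c ^ n := by group
        _ = g * h * c * h ^ n * c ^ n := by rw [h1]
        _ = g * h * (c * h ^ n) * c ^ n := by group
        _ = g * h * (h ^ n * c) * c ^ n := by rw [hcc]
        _ = g * h ^ (n+1) * c ^ (n+1) := by rw [pow_succ', pow_succ]; group
  have := key p
  rw [hcp, mul_one] at this
  exact this.symm
end

section
/- Let G be a Camina-type finite p-group of nilpotency class 3 with |γ₃(G)| = p. Then the second center Z₂(G) equals the Frattini subgroup Φ(G). -/
lemma frattini_eq_bot_of_elem_ab {p : ℕ} (hp : p.Prime) {Q : Type*} [Group Q] [Finite Q]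
    (hcomm : ∀ a b : Q, a * b = b * a) (hexp : ∀ a : Q, a ^ p = 1) :
    frattini Q = ⊥ := by
  letI : CommGroup Q := { (inferInstance : Group Q) with mul_comm := hcomm }
  rw [eq_bot_iff]
  intro v hv
  rw [Subgroup.mem_bot]
  by_contra hv1
  obtain ⟨M, hMS, hMmax⟩ : ∃ M ∈ {H : Subgroup Q | v ∉ H}, ∀ H ∈ {H : Subgroup Q | v ∉ H},
      id M ≤ id H → id M = id H := by
    obtain ⟨M, h1, h2⟩ := Set.Finite.exists_maximalFor id {H : Subgroup Q | v ∉ H}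
      (Set.toFinite _) ⟨⊥, by simpa using hv1⟩
    exact ⟨M, h1, fun H hH hle => le_antisymm hle (h2 hH hle)⟩
  simp only [Set.mem_setOf_eq, id] at hMS hMmax
  have hM : IsCoatom M := by
    constructor
    · intro h; exact hMS (h ▸ Subgroup.mem_top v)
    · intro H hH
      have hvH : v ∈ H := by
        by_contra hvH
        exact hH.ne (hMmax H hvH hH.le)
      rw [eq_top_iff]
      intro g _
      by_cases hg : g ∈ M
      · exact hH.le hg
      · have hvK : v ∈ M ⊔ Subgroup.zpowers g := by
          by_contra hvK
          have := hMmax _ hvK le_sup_left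
          exact hg (this ▸ Subgroup.mem_sup_right (Subgroup.mem_zpowers g))
        obtain ⟨m, hm, z, hz, hmz⟩ := Subgroup.mem_sup.mp hvK
        obtain ⟨k, hk⟩ := Subgroup.mem_zpowers_iff.mp hz
        have hgp : g ^ (p : ℤ) = 1 := by rw [zpow_natCast, hexp]
        have hpk : ¬ ((p : ℤ) ∣ k) := by
          rintro ⟨t, rfl⟩
          have hz1 : z = 1 := by rw [← hk, zpow_mul, hgp, one_zpow]
          have : v = m := by rw [← hmz, hz1, mul_one]
          exact hMS (this ▸ hm)
        have hcop : IsCoprime ((p : ℤ)) k := by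
          rw [Int.isCoprime_iff_gcd_eq_one]
          have h2 : ¬ p ∣ k.natAbs :=
            fun h => hpk ((Int.natCast_dvd_natCast.mpr h).trans (Int.natAbs_dvd.mpr dvd_rfl))
          simpa [Int.gcd] using (Nat.Prime.coprime_iff_not_dvd hp).mpr h2
        obtain ⟨a, b, hab⟩ := hcop
        have hg1 : g = (g ^ k) ^ b := by
          calc g = g ^ (1 : ℤ) := (zpow_one g).symm
          _ = g ^ (a * (p : ℤ) + b * k) := by rw [hab]
          _ = (g ^ (p : ℤ)) ^ a * (g ^ k) ^ b := by
              rw [zpow_add, mul_comm a, mul_comm b, zpow_mul, zpow_mul]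
          _ = (g ^ k) ^ b := by rw [hgp, one_zpow, one_mul]
        have hzH : z ∈ H := by
          have : z = m⁻¹ * v := by rw [← hmz]; group
          rw [this]
          exact mul_mem (inv_mem (hH.le hm)) hvH
        rw [hg1, hk]
        exact H.zpow_mem hzH b
  exact hMS (frattini_le_coatom hM hv)

/-- If `G` is a Camina-type finite p-group of nilpotency class 3 with `|γ₃(G)| = p`, then
the second center `Z₂(G)` equals the Frattini subgroup `Φ(G)`. -/
theorem stmt_10 {p : ℕ} {G : Type*} [Group G] [Finite G] (hp : p.Prime) (hpG : IsPGroup p G)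
    (hG : IsCaminaType G)
    (hcl3 : (⊤ : Subgroup G).lowerCentralSeries 3 = ⊥) (hcard : Nat.card ((⊤ : Subgroup G).lowerCentralSeries 2) = p) :
    Subgroup.upperCentralSeries G 2 = frattini G := by
  -- γ₃ ≤ Z(G)
  have hγ3Z : (⊤ : Subgroup G).lowerCentralSeries 2 ≤ Subgroup.center G := by
    have h3 : (⁅(⊤ : Subgroup G).lowerCentralSeries 2, (⊤ : Subgroup G)⁆ : Subgroup G) = ⊥ := hcl3
    have h4 := Subgroup.commutator_eq_bot_iff_le_centralizer.mp h3
    rwa [Subgroup.coe_top, Subgroup.centralizer_univ] at h4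
  -- elements of γ₃ have order dividing p
  have hγ3p : ∀ a ∈ (⊤ : Subgroup G).lowerCentralSeries 2, a ^ p = 1 := by
    intro a ha
    have h1 : (⟨a, ha⟩ : (⊤ : Subgroup G).lowerCentralSeries 2) ^ p = 1 := by
      rw [← hcard]; exact pow_card_eq_one'
    exact congrArg Subtype.val h1
  -- commutators are in γ₂
  have hcommγ2 : ∀ a g : G, a * g * a⁻¹ * g⁻¹ ∈ commutator G := by
    intro a g
    have := Subgroup.commutator_mem_commutator (Subgroup.mem_top a) (Subgroup.mem_top g)
    rwa [← commutator_def, commutatorElement_def] at this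
  -- commutator of anything with a γ₂ element is central
  have hcen : ∀ c ∈ commutator G, ∀ y : G, y * c * y⁻¹ * c⁻¹ ∈ Subgroup.center G := by
    intro c hc y
    apply hγ3Z
    open commutatorElement in have h1 : ⁅y, c⁆ ∈ (⁅(⊤ : Subgroup G), (⊤ : Subgroup G).lowerCentralSeries 1⁆ : Subgroup G) :=
      Subgroup.commutator_mem_commutator (Subgroup.mem_top y) hc
    rw [Subgroup.commutator_comm] at h1
    have h2 : (⁅(⊤ : Subgroup G).lowerCentralSeries 1, (⊤ : Subgroup G)⁆ : Subgroup G)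
        = (⊤ : Subgroup G).lowerCentralSeries 2 := rfl
    rw [h2] at h1
    rwa [commutatorElement_def] at h1
  -- for a ∈ γ₂ : exact power-commutator formula
  have hpowγ2 : ∀ a ∈ commutator G, ∀ (g : G) (n : ℕ),
      a ^ n * g * (a ^ n)⁻¹ * g⁻¹ = (a * g * a⁻¹ * g⁻¹) ^ n := by
    intro a ha g n
    set c := a * g * a⁻¹ * g⁻¹ with hcdef
    have hcZ : c ∈ Subgroup.center G := by
      apply hγ3Z
      have := Subgroup.commutator_mem_commutator (G := G) (H₁ := (⊤ : Subgroup G).lowerCentralSeries 1)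
        (H₂ := ⊤) ha (Subgroup.mem_top g)
      rwa [commutatorElement_def] at this
    have hC : ∀ y : G, Commute c y := fun y => ((Subgroup.mem_center_iff.mp hcZ) y).symm
    induction n with
    | zero => group
    | succ n ih =>
      have key : a ^ (n+1) * g * (a ^ (n+1))⁻¹ * g⁻¹
          = a * (a ^ n * g * (a ^ n)⁻¹ * g⁻¹) * a⁻¹ * c := by rw [hcdef]; group
      rw [key, ih]
      have h1 : a * c ^ n = c ^ n * a := ((hC a).pow_left n).eq.symm
      calc a * c ^ n * a⁻¹ * c = c ^ n * a * a⁻¹ * c := by rw [h1]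
      _ = c ^ (n + 1) := by group
  -- p-th powers of γ₂ elements are central
  have hγ2pZ : ∀ a ∈ commutator G, a ^ p ∈ Subgroup.center G := by
    intro a ha
    rw [Subgroup.mem_center_iff]
    intro g
    have h1 := hpowγ2 a ha g p
    have hcc : a * g * a⁻¹ * g⁻¹ ∈ (⊤ : Subgroup G).lowerCentralSeries 2 := by
      have := Subgroup.commutator_mem_commutator (G := G) (H₁ := (⊤ : Subgroup G).lowerCentralSeries 1)
        (H₂ := ⊤) ha (Subgroup.mem_top g)
      rwa [commutatorElement_def] at this
    rw [hγ3p _ hcc] at h1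
    have h2 : a ^ p * g = (a ^ p * g * (a ^ p)⁻¹ * g⁻¹) * (g * a ^ p) := by group
    rw [h1, one_mul] at h2
    exact h2.symm
  -- power-commutator formula mod center, for arbitrary x
  have hpow : ∀ (x g : G) (n : ℕ), ∃ z ∈ Subgroup.center G,
      x ^ n * g * (x ^ n)⁻¹ * g⁻¹ = (x * g * x⁻¹ * g⁻¹) ^ n * z := by
    intro x g n
    set c := x * g * x⁻¹ * g⁻¹ with hcdef
    have hcγ : c ∈ commutator G := hcommγ2 x g
    induction n with
    | zero => exact ⟨1, Subgroup.one_mem _, by group⟩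
    | succ n ih =>
      obtain ⟨z, hz, hzeq⟩ := ih
      have hzC : ∀ y : G, Commute z y := fun y => ((Subgroup.mem_center_iff.mp hz) y).symm
      have hcn : c ^ n ∈ commutator G := pow_mem hcγ n
      have hwZ : x * c ^ n * x⁻¹ * (c ^ n)⁻¹ ∈ Subgroup.center G := hcen (c ^ n) hcn x
      set w := x * c ^ n * x⁻¹ * (c ^ n)⁻¹ with hwdef
      have hwC : ∀ y : G, Commute w y := fun y => ((Subgroup.mem_center_iff.mp hwZ) y).symm
      refine ⟨w * z, mul_mem hwZ hz, ?_⟩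
      have key : x ^ (n+1) * g * (x ^ (n+1))⁻¹ * g⁻¹
          = x * (x ^ n * g * (x ^ n)⁻¹ * g⁻¹) * x⁻¹ * c := by rw [hcdef]; group
      rw [key, hzeq]
      calc x * (c ^ n * z) * x⁻¹ * c
          = x * c ^ n * (z * (x⁻¹ * c)) := by group
        _ = x * c ^ n * (x⁻¹ * c * z) := by rw [(hzC (x⁻¹ * c)).eq]
        _ = w * c ^ (n + 1) * z := by rw [hwdef]; group
        _ = c ^ (n + 1) * w * z := by rw [(hwC (c ^ (n + 1))).eq]
        _ = c ^ (n + 1) * (w * z) := by group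
  -- p-th powers lie in Z₂
  have hxpZ2 : ∀ x : G, x ^ p ∈ Subgroup.upperCentralSeries G 2 := by
    intro x
    refine Subgroup.mem_upperCentralSeries_succ_iff.mpr fun y => ?_
    obtain ⟨z, hz, hzeq⟩ := hpow x y p
    rw [upperCentralSeries_one, commutatorElement_def, hzeq]
    exact mul_mem (hγ2pZ _ (hcommγ2 x y)) hz
  -- γ₂ ≤ Z₂
  have hγ2Z2 : commutator G ≤ Subgroup.upperCentralSeries G 2 := by
    intro a ha
    refine Subgroup.mem_upperCentralSeries_succ_iff.mpr fun y => ?_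
    rw [upperCentralSeries_one]
    apply hγ3Z
    have := Subgroup.commutator_mem_commutator (G := G) (H₁ := (⊤ : Subgroup G).lowerCentralSeries 1)
      (H₂ := ⊤) ha (Subgroup.mem_top y)
    rwa [commutatorElement_def] at this
  apply le_antisymm
  · -- Z₂ ≤ Φ
    intro x hx
    by_contra hxΦ
    have hset := hG x hxΦ
    have hγ2cen : (⊤ : Subgroup G).lowerCentralSeries 1 ≤ Subgroup.center G := by
      intro cEl hc
      have hc' : cEl ∈ {z : G | ∃ g : G, z = x⁻¹ * g⁻¹ * x * g} := by
        rw [hset]; exact hc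
      obtain ⟨g, rfl⟩ := hc'
      have hxinv : x⁻¹ ∈ Subgroup.upperCentralSeries G 2 := inv_mem hx
      have h5 := Subgroup.mem_upperCentralSeries_succ_iff.mp hxinv g⁻¹
      rw [upperCentralSeries_one] at h5
      simpa [commutatorElement_def] using h5
    have hbot : (⊤ : Subgroup G).lowerCentralSeries 2 = ⊥ := by
      have h6 : (⁅(⊤ : Subgroup G).lowerCentralSeries 1, (⊤ : Subgroup G)⁆ : Subgroup G) = ⊥ := by
        rw [Subgroup.commutator_eq_bot_iff_le_centralizer, Subgroup.coe_top,
          Subgroup.centralizer_univ]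
        exact hγ2cen
      exact h6
    rw [hbot, Subgroup.card_bot] at hcard
    exact hp.one_lt.ne hcard
  · -- Φ ≤ Z₂
    have hcommQ : ∀ a b : G ⧸ Subgroup.upperCentralSeries G 2, a * b = b * a := by
      intro a b
      obtain ⟨a, rfl⟩ := QuotientGroup.mk'_surjective _ a
      obtain ⟨b, rfl⟩ := QuotientGroup.mk'_surjective _ b
      show ((a * b : G) : G ⧸ Subgroup.upperCentralSeries G 2) = ((b * a : G) : _)
      rw [QuotientGroup.eq]
      have h7 : (a * b)⁻¹ * (b * a) = b⁻¹ * a⁻¹ * (b⁻¹)⁻¹ * (a⁻¹)⁻¹ := by group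
      rw [h7]
      exact hγ2Z2 (hcommγ2 b⁻¹ a⁻¹)
    have hexpQ : ∀ q : G ⧸ Subgroup.upperCentralSeries G 2, q ^ p = 1 := by
      intro q
      obtain ⟨x, rfl⟩ := QuotientGroup.mk'_surjective _ q
      show ((x : G ⧸ Subgroup.upperCentralSeries G 2)) ^ p = 1
      rw [← QuotientGroup.mk_pow, QuotientGroup.eq_one_iff]
      exact hxpZ2 x
    have hfQ : frattini (G ⧸ Subgroup.upperCentralSeries G 2) = ⊥ :=
      frattini_eq_bot_of_elem_ab hp hcommQ hexpQ
    have h8 := frattini_le_comap_frattini_of_surjective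
      (φ := QuotientGroup.mk' (Subgroup.upperCentralSeries G 2))
      (QuotientGroup.mk'_surjective (Subgroup.upperCentralSeries G 2))
    rwa [hfQ, MonoidHom.comap_bot, QuotientGroup.ker_mk'] at h8
end

section
/- Let G be a finite p-group of nilpotency class 3 such that γ₂(G)Z(G)/Z(G) is cyclic. Then G/Z₂(G) is generated by 2 elements. -/
open scoped commutatorElement

section Stmt11Helpers

variable {G : Type*} [Group G]

private lemma central_comm_eq_one {z w : G} (hz : z ∈ Subgroup.center G) : ⁅z, w⁆ = 1 :=
  commutatorElement_eq_one_iff_mul_comm.mpr (Subgroup.mem_center_iff.mp hz w).symm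

private lemma conj_center {z : G} (hz : z ∈ Subgroup.center G) (u : G) :
    u * z * u⁻¹ = z := by
  rw [Subgroup.mem_center_iff.mp hz u, mul_inv_cancel_right]

private lemma comm_mul_center {u z v : G} (hz : z ∈ Subgroup.center G) :
    ⁅u * z, v⁆ = ⁅u, v⁆ := by
  have hzv : z * v = v * z := (Subgroup.mem_center_iff.mp hz v).symm
  have e1 : ⁅u * z, v⁆ = u * (z * v) * z⁻¹ * u⁻¹ * v⁻¹ := by
    simp only [commutatorElement_def]; group
  rw [e1, hzv]
  simp only [commutatorElement_def]; group

private lemma comm_inv_left {u v : G} (h : ⁅u, v⁆ ∈ Subgroup.center G) :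
    ⁅u⁻¹, v⁆ = ⁅u, v⁆⁻¹ := by
  have h' : ⁅v, u⁆ ∈ Subgroup.center G := by
    rw [← commutatorElement_inv]; exact inv_mem h
  have e : ⁅u⁻¹, v⁆ = u⁻¹ * ⁅v, u⁆ * u := by
    simp only [commutatorElement_def]; group
  have hc : u * ⁅v, u⁆ = ⁅v, u⁆ * u := Subgroup.mem_center_iff.mp h' u
  rw [e, mul_assoc, ← hc, ← mul_assoc, inv_mul_cancel, one_mul, ← commutatorElement_inv]

private lemma comm_pow_left {u v : G} (h : ⁅u, v⁆ ∈ Subgroup.center G) (n : ℕ) :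
    ⁅u ^ n, v⁆ = ⁅u, v⁆ ^ n := by
  induction n with
  | zero => simp
  | succ n ih =>
    have e : ⁅u * u ^ n, v⁆ = u * ⁅u ^ n, v⁆ * u⁻¹ * ⁅u, v⁆ := by
      simp only [commutatorElement_def]; group
    have hcen : ⁅u ^ n, v⁆ ∈ Subgroup.center G := by rw [ih]; exact pow_mem h n
    rw [pow_succ', e, conj_center hcen u, ih, ← pow_succ]

private lemma comm_zpow_left {u v : G} (h : ⁅u, v⁆ ∈ Subgroup.center G) (k : ℤ) :
    ⁅u ^ k, v⁆ = ⁅u, v⁆ ^ k := by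
  cases k with
  | ofNat n => simpa [zpow_natCast] using comm_pow_left h n
  | negSucc n =>
    have h1 : ⁅u ^ (n + 1), v⁆ = ⁅u, v⁆ ^ (n + 1) := comm_pow_left h (n + 1)
    have h2 : ⁅u ^ (n + 1), v⁆ ∈ Subgroup.center G := by rw [h1]; exact pow_mem h _
    rw [zpow_negSucc, comm_inv_left h2, h1, zpow_negSucc]

private lemma comm_zpow_right {u v : G} (h : ⁅u, v⁆ ∈ Subgroup.center G) (k : ℤ) :
    ⁅u, v ^ k⁆ = ⁅u, v⁆ ^ k := by
  have h' : ⁅v, u⁆ ∈ Subgroup.center G := by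
    rw [← commutatorElement_inv]; exact inv_mem h
  rw [← inv_inv (⁅u, v ^ k⁆), commutatorElement_inv, comm_zpow_left h', ← commutatorElement_inv,
    ← inv_zpow, inv_inv]

private lemma comm_mul_left_cen {u v w : G} (h1 : ⁅u, w⁆ ∈ Subgroup.center G)
    (h2 : ⁅v, w⁆ ∈ Subgroup.center G) : ⁅u * v, w⁆ = ⁅u, w⁆ * ⁅v, w⁆ := by
  have e : ⁅u * v, w⁆ = u * ⁅v, w⁆ * u⁻¹ * ⁅u, w⁆ := by
    simp only [commutatorElement_def]; group
  rw [e, conj_center h2 u, Subgroup.mem_center_iff.mp h1 (⁅v, w⁆)]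

private lemma comm_mul_right_cen {u v w : G} (h2 : ⁅u, w⁆ ∈ Subgroup.center G) :
    ⁅u, v * w⁆ = ⁅u, v⁆ * ⁅u, w⁆ := by
  have e : ⁅u, v * w⁆ = ⁅u, v⁆ * (v * ⁅u, w⁆ * v⁻¹) := by
    simp only [commutatorElement_def]; group
  rw [e, conj_center h2 v]

private lemma mem_zpowers_of_orderOf_dvd {α : Type*} [Group α] [Finite α] (hc : IsCyclic α)
    {x a : α} (h : orderOf x ∣ orderOf a) : x ∈ Subgroup.zpowers a := by
  obtain ⟨g, hg⟩ := hc.exists_generator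
  set n := orderOf g with hn
  set m := orderOf a with hmdef
  have hm0 : 0 < m := orderOf_pos a
  have hmn : m ∣ n := orderOf_dvd_of_mem_zpowers (hg a)
  have hn0 : n ≠ 0 := (orderOf_pos g).ne'
  have key : ∀ z : α, z ^ m = 1 → z ∈ Subgroup.zpowers (g ^ (n / m)) := by
    intro z hz
    obtain ⟨s, hs⟩ := Subgroup.mem_zpowers_iff.mp (hg z)
    have h1 : g ^ (s * (m : ℤ)) = 1 := by rw [zpow_mul, hs, zpow_natCast, hz]
    have h2 : ((n : ℤ)) ∣ s * (m : ℤ) := orderOf_dvd_iff_zpow_eq_one.mpr h1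
    have h3 : ((n / m : ℕ) : ℤ) * (m : ℤ) ∣ s * (m : ℤ) := by
      rwa [← Nat.cast_mul, Nat.div_mul_cancel hmn]
    have h4 : ((n / m : ℕ) : ℤ) ∣ s :=
      (mul_dvd_mul_iff_right (by exact_mod_cast hm0.ne' : (m : ℤ) ≠ 0)).mp h3
    obtain ⟨q, hq⟩ := h4
    exact Subgroup.mem_zpowers_iff.mpr ⟨q, by
      rw [← zpow_natCast g (n / m), ← zpow_mul, ← hq, hs]⟩
  have hx : x ∈ Subgroup.zpowers (g ^ (n / m)) :=
    key x (orderOf_dvd_iff_pow_eq_one.mp h)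
  have ha : a ∈ Subgroup.zpowers (g ^ (n / m)) := key a (pow_orderOf_eq_one a)
  have hord : orderOf (g ^ (n / m)) = m := by
    rw [orderOf_pow, ← hn, Nat.gcd_eq_right (Nat.div_dvd_of_dvd hmn), Nat.div_div_self hmn hn0]
  have hle : Subgroup.zpowers a ≤ Subgroup.zpowers (g ^ (n / m)) := Subgroup.zpowers_le.mpr ha
  have heq : Subgroup.zpowers a = Subgroup.zpowers (g ^ (n / m)) := by
    apply SetLike.ext'
    apply (Set.eq_of_subset_of_ncard_le hle ?_ (Set.toFinite _))
    rw [← Nat.card_coe_set_eq, ← Nat.card_coe_set_eq]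
    have c1 : Nat.card (Subgroup.zpowers a) = m := Nat.card_zpowers a
    have c2 : Nat.card (Subgroup.zpowers (g ^ (n / m))) = m := by
      rw [Nat.card_zpowers, hord]
    exact le_of_eq (c2.trans c1.symm)
  rw [heq]; exact hx

private lemma jacobi_of_class3 (h2Z : ∀ u ∈ commutator G, ∀ w : G, ⁅u, w⁆ ∈ Subgroup.center G)
    (u v w : G) : ⁅⁅u, v⁆, w⁆ * ⁅⁅v, w⁆, u⁆ * ⁅⁅w, u⁆, v⁆ = 1 := by
  have hcm : ∀ a b : G, ⁅a, b⁆ ∈ commutator G := fun a b =>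
    Subgroup.commutator_mem_commutator (Subgroup.mem_top a) (Subgroup.mem_top b)
  have step : ∀ a b c : G, ⁅⁅b⁻¹, a⁆, c⁆ = ⁅⁅a, b⁆, c⁆ := by
    intro a b c
    have e1 : ⁅b⁻¹, a⁆ = ⁅a, b⁆ * ⁅⁅a, b⁆⁻¹, b⁻¹⁆ := by
      simp only [commutatorElement_def]; group
    have hz : ⁅⁅a, b⁆⁻¹, b⁻¹⁆ ∈ Subgroup.center G := h2Z _ (inv_mem (hcm a b)) _
    rw [e1, comm_mul_center hz]
  have hw : (v * ⁅⁅v⁻¹, u⁆, w⁆ * v⁻¹) * (w * ⁅⁅w⁻¹, v⁆, u⁆ * w⁻¹) *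
      (u * ⁅⁅u⁻¹, w⁆, v⁆ * u⁻¹) = 1 := by
    simp only [commutatorElement_def]; group
  rwa [conj_center (h2Z _ (hcm v⁻¹ u) w) v, conj_center (h2Z _ (hcm w⁻¹ v) u) w,
    conj_center (h2Z _ (hcm u⁻¹ w) v) u, step u v w, step v w u, step w u v] at hw

end Stmt11Helpers

set_option maxHeartbeats 1000000 in
/-- If `G` is a finite p-group of nilpotency class 3 such that `γ₂(G)Z(G)/Z(G)` is cyclic,
then `G/Z₂(G)` is generated by 2 elements. -/
theorem stmt_11 {p : ℕ} {G : Type*} [Group G] [Finite G] (hp : p.Prime) (hpG : IsPGroup p G)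
    (hcl3 : (⊤ : Subgroup G).lowerCentralSeries 2 ≠ ⊥) (hcl3' : (⊤ : Subgroup G).lowerCentralSeries 3 = ⊥)
    (hcyc : IsCyclic ((commutator G).map (QuotientGroup.mk' (Subgroup.center G)))) :
    ∃ a b : G ⧸ Subgroup.upperCentralSeries G 2, Subgroup.closure {a, b} = ⊤ := by
  classical
  set Z := Subgroup.center G with hZdef
  set π := QuotientGroup.mk' Z with hπdef
  have hcm : ∀ a b : G, ⁅a, b⁆ ∈ commutator G := fun a b =>
    Subgroup.commutator_mem_commutator (Subgroup.mem_top a) (Subgroup.mem_top b)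
  -- γ₃ ≤ Z
  have hlcs2 : (⊤ : Subgroup G).lowerCentralSeries 2 ≤ Z := by
    intro u hu
    rw [hZdef, Subgroup.mem_center_iff]
    intro g
    have h1 : ⁅u, g⁆ ∈ (⊤ : Subgroup G).lowerCentralSeries 3 := by
      rw [show (3 : ℕ) = 2 + 1 from rfl, Subgroup.lowerCentralSeries_succ]
      exact Subgroup.commutator_mem_commutator hu (Subgroup.mem_top g)
    rw [hcl3', Subgroup.mem_bot] at h1
    exact (commutatorElement_eq_one_iff_mul_comm.mp h1).symm
  have h2Z : ∀ u ∈ commutator G, ∀ w : G, ⁅u, w⁆ ∈ Z := by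
    intro u hu w
    apply hlcs2
    rw [show (2 : ℕ) = 1 + 1 from rfl, Subgroup.lowerCentralSeries_succ]
    refine Subgroup.commutator_mem_commutator ?_ (Subgroup.mem_top w)
    rwa [Subgroup.top_lowerCentralSeries_one]
  have h3Z : ∀ u v w : G, ⁅⁅u, v⁆, w⁆ ∈ Z := fun u v w => h2Z _ (hcm u v) w
  have jac := jacobi_of_class3 h2Z
  -- quotient facts
  have hπcomm : ∀ u v : G, π ⁅u, v⁆ = ⁅π u, π v⁆ := fun u v => map_commutatorElement π u v
  have hπone : ∀ u : G, π u = 1 ↔ u ∈ Z := fun u => QuotientGroup.eq_one_iff u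
  have hlift : ∀ u v : G, π u = π v → ∃ z ∈ Z, u * z = v := fun u v h =>
    (QuotientGroup.mk'_eq_mk' Z).mp h
  have hHcen : ∀ α β : G ⧸ Z, ⁅α, β⁆ ∈ Subgroup.center (G ⧸ Z) := by
    intro α β
    obtain ⟨u, rfl⟩ := QuotientGroup.mk'_surjective Z α
    obtain ⟨v, rfl⟩ := QuotientGroup.mk'_surjective Z β
    rw [Subgroup.mem_center_iff]
    intro γ
    obtain ⟨w, rfl⟩ := QuotientGroup.mk'_surjective Z γ
    have h1 : π ⁅⁅u, v⁆, w⁆ = 1 := (hπone _).mpr (h3Z u v w)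
    rw [hπcomm, hπcomm] at h1
    exact (commutatorElement_eq_one_iff_mul_comm.mp h1).symm
  -- p-group facts
  have hQ : IsPGroup p (G ⧸ Z) := hpG.to_quotient Z
  have hppow : ∀ α : G ⧸ Z, ∃ k : ℕ, orderOf α = p ^ k := by
    intro α
    obtain ⟨k, hk⟩ := hQ α
    obtain ⟨i, _, hi⟩ := (Nat.dvd_prime_pow hp).mp (orderOf_dvd_of_pow_eq_one hk)
    exact ⟨i, hi⟩
  -- maximal commutator
  obtain ⟨⟨x, y⟩, hmax⟩ := Finite.exists_max (fun pr : G × G => orderOf (π ⁅pr.1, pr.2⁆))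
  have haC : ∀ u v : G, π ⁅u, v⁆ ∈ (commutator G).map π := fun u v =>
    Subgroup.mem_map_of_mem π (hcm u v)
  -- chain lemma
  have chain : ∀ u v : G, ∃ k : ℤ, π ⁅u, v⁆ = π ⁅x, y⁆ ^ k := by
    intro u v
    have hordle : orderOf (⟨π ⁅u, v⁆, haC u v⟩ : (commutator G).map π) ≤
        orderOf (⟨π ⁅x, y⁆, haC x y⟩ : (commutator G).map π) := by
      rw [Subgroup.orderOf_mk, Subgroup.orderOf_mk]
      exact hmax (u, v)
    have hdvd : orderOf (⟨π ⁅u, v⁆, haC u v⟩ : (commutator G).map π) ∣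
        orderOf (⟨π ⁅x, y⁆, haC x y⟩ : (commutator G).map π) := by
      obtain ⟨i, hi⟩ := hppow (π ⁅u, v⁆)
      obtain ⟨j, hj⟩ := hppow (π ⁅x, y⁆)
      rw [Subgroup.orderOf_mk, Subgroup.orderOf_mk, hi, hj] at hordle ⊢
      exact pow_dvd_pow p ((Nat.pow_le_pow_iff_right hp.one_lt).mp hordle)
    have hmem := mem_zpowers_of_orderOf_dvd hcyc hdvd
    obtain ⟨k, hk⟩ := Subgroup.mem_zpowers_iff.mp hmem
    refine ⟨k, ?_⟩
    have h5 := congrArg Subtype.val hk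
    simpa using h5.symm
  -- main step
  have main : ∀ g : G, ∃ i j : ℤ, g * (x ^ i * y ^ j)⁻¹ ∈ Subgroup.upperCentralSeries G 2 := by
    intro g
    obtain ⟨s, hs⟩ := chain x g
    obtain ⟨t, ht⟩ := chain y g
    set c := g * y ^ (-s) * x ^ t with hcdef
    have hπc : π c = π g * π y ^ (-s) * π x ^ t := by
      rw [hcdef, map_mul, map_mul, map_zpow, map_zpow]
    have hcx : ⁅x, c⁆ ∈ Z := by
      rw [← hπone, hπcomm, hπc]
      rw [comm_mul_right_cen (hHcen _ _), comm_mul_right_cen (hHcen _ _),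
        comm_zpow_right (hHcen _ _), comm_zpow_right (hHcen _ _)]
      rw [← hπcomm, ← hπcomm, ← hπcomm, hs, commutatorElement_self, map_one, one_zpow,
        mul_one, ← zpow_add, add_neg_cancel, zpow_zero]
    have hcy : ⁅y, c⁆ ∈ Z := by
      rw [← hπone, hπcomm, hπc]
      rw [comm_mul_right_cen (hHcen _ _), comm_mul_right_cen (hHcen _ _),
        comm_zpow_right (hHcen _ _), comm_zpow_right (hHcen _ _)]
      rw [← hπcomm, ← hπcomm, ← hπcomm, ht, commutatorElement_self, map_one, one_zpow,
        mul_one]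
      have hyx : (π ⁅y, x⁆ : G ⧸ Z) = (π ⁅x, y⁆)⁻¹ := by
        rw [← commutatorElement_inv, map_inv]
      rw [hyx, inv_zpow, ← zpow_neg, ← zpow_add, add_neg_cancel, zpow_zero]
    -- ⁅⁅x,y⁆, c⁆ = 1
    have hac : ⁅⁅x, y⁆, c⁆ = 1 := by
      have hj := jac x y c
      have hcxinv : ⁅c, x⁆ ∈ Z := by
        rw [← commutatorElement_inv]; exact inv_mem hcx
      rw [central_comm_eq_one hcy, central_comm_eq_one hcxinv, mul_one, mul_one] at hj
      exact hj
    -- c ∈ Z₂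
    have hcZ2 : c ∈ Subgroup.upperCentralSeries G 2 := by
      rw [show (2 : ℕ) = 1 + 1 from rfl, Subgroup.mem_upperCentralSeries_succ_iff]
      intro h
      rw [Subgroup.upperCentralSeries_one]
      have hch : c * h * c⁻¹ * h⁻¹ = ⁅c, h⁆ := (commutatorElement_def c h).symm
      show ⁅c, h⁆ ∈ _
      obtain ⟨k, hk⟩ := chain c h
      have hk' : π (⁅x, y⁆ ^ k) = π ⁅c, h⁆ := by rw [map_zpow, hk]
      obtain ⟨z, hzZ, hz⟩ := hlift _ _ hk'
      have claim : ∀ w : G, ⁅w, c⁆ ∈ Z → ⁅⁅x, y⁆, w⁆ ^ k = 1 := by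
        intro w hwc
        have hj := jac c h w
        rw [central_comm_eq_one hwc] at hj
        obtain ⟨m', hm'⟩ := chain h w
        have hm'' : π (⁅x, y⁆ ^ m') = π ⁅h, w⁆ := by rw [map_zpow, hm']
        obtain ⟨z', hz'Z, hz'⟩ := hlift _ _ hm''
        have hsec : ⁅⁅h, w⁆, c⁆ = 1 := by
          rw [← hz', comm_mul_center hz'Z, comm_zpow_left (hac ▸ one_mem Z), hac, one_zpow]
        rw [hsec, mul_one, mul_one] at hj
        rw [← hz, comm_mul_center hzZ, comm_zpow_left (h2Z _ (hcm x y) w)] at hj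
        exact hj
      have claim1 : ⁅⁅x, y⁆, x⁆ ^ k = 1 := claim x hcx
      have claim2 : ⁅⁅x, y⁆, y⁆ ^ k = 1 := claim y hcy
      have claim3 : ∀ w : G, ⁅⁅x, y⁆, w⁆ ^ k = 1 := by
        intro w
        have hj := jac x y w
        obtain ⟨t1, ht1⟩ := chain y w
        have ht1' : π (⁅x, y⁆ ^ t1) = π ⁅y, w⁆ := by rw [map_zpow, ht1]
        obtain ⟨z1, hz1Z, hz1⟩ := hlift _ _ ht1'
        obtain ⟨t2, ht2⟩ := chain w x
        have ht2' : π (⁅x, y⁆ ^ t2) = π ⁅w, x⁆ := by rw [map_zpow, ht2]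
        obtain ⟨z2, hz2Z, hz2⟩ := hlift _ _ ht2'
        have e1 : ⁅⁅y, w⁆, x⁆ = ⁅⁅x, y⁆, x⁆ ^ t1 := by
          rw [← hz1, comm_mul_center hz1Z, comm_zpow_left (h2Z _ (hcm x y) x)]
        have e2 : ⁅⁅w, x⁆, y⁆ = ⁅⁅x, y⁆, y⁆ ^ t2 := by
          rw [← hz2, comm_mul_center hz2Z, comm_zpow_left (h2Z _ (hcm x y) y)]
        rw [e1, e2] at hj
        have hay : ⁅⁅x, y⁆, y⁆ ∈ Z := h2Z _ (hcm x y) y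
        have haw : ⁅⁅x, y⁆, w⁆ = (⁅⁅x, y⁆, x⁆ ^ t1 * ⁅⁅x, y⁆, y⁆ ^ t2)⁻¹ := by
          rw [eq_inv_iff_mul_eq_one, ← mul_assoc]; exact hj
        have hcomm : Commute (⁅⁅x, y⁆, x⁆ ^ t1) (⁅⁅x, y⁆, y⁆ ^ t2) :=
          (Subgroup.mem_center_iff.mp (zpow_mem hay t2) _)
        rw [haw, inv_zpow, ← zpow_neg, hcomm.mul_zpow, ← zpow_mul, ← zpow_mul,
          mul_comm t1, mul_comm t2, zpow_mul, zpow_mul, zpow_neg, zpow_neg, claim1, claim2,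
          inv_one, one_zpow, one_zpow, one_mul]
      have hakZ : ⁅x, y⁆ ^ k ∈ Z := by
        rw [hZdef, Subgroup.mem_center_iff]
        intro w
        have h1 : ⁅⁅x, y⁆ ^ k, w⁆ = 1 := by
          rw [comm_zpow_left (h2Z _ (hcm x y) w), claim3 w]
        exact (commutatorElement_eq_one_iff_mul_comm.mp h1).symm
      have hπak : π (⁅x, y⁆ ^ k) = 1 := (hπone _).mpr hakZ
      rw [hπak] at hk'
      rw [← hπone]
      exact hk'.symm
    refine ⟨-t, s, ?_⟩
    rw [mul_inv_rev, ← zpow_neg y s, ← zpow_neg x (-t), neg_neg, ← mul_assoc]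
    exact hcZ2
  -- assemble
  refine ⟨QuotientGroup.mk x, QuotientGroup.mk y, ?_⟩
  rw [eq_top_iff]
  intro q _
  obtain ⟨g, rfl⟩ := QuotientGroup.mk_surjective q
  obtain ⟨i, j, hij⟩ := main g
  have hq : (QuotientGroup.mk g : G ⧸ Subgroup.upperCentralSeries G 2) =
      (QuotientGroup.mk x) ^ i * (QuotientGroup.mk y) ^ j := by
    rw [← QuotientGroup.mk_zpow, ← QuotientGroup.mk_zpow, ← QuotientGroup.mk_mul,
      QuotientGroup.eq]
    have h1 := (inferInstance : (Subgroup.upperCentralSeries G 2).Normal).mem_comm hij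
    have h2 := inv_mem h1
    rwa [mul_inv_rev, inv_inv] at h2
  rw [hq]
  have hmem1 : (QuotientGroup.mk x : G ⧸ Subgroup.upperCentralSeries G 2) ∈
      ({QuotientGroup.mk x, QuotientGroup.mk y} : Set (G ⧸ Subgroup.upperCentralSeries G 2)) :=
    Set.mem_insert _ _
  have hmem2 : (QuotientGroup.mk y : G ⧸ Subgroup.upperCentralSeries G 2) ∈
      ({QuotientGroup.mk x, QuotientGroup.mk y} : Set (G ⧸ Subgroup.upperCentralSeries G 2)) :=
    Set.mem_insert_of_mem _ (Set.mem_singleton _)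
  exact mul_mem (zpow_mem (Subgroup.subset_closure hmem1) i)
    (zpow_mem (Subgroup.subset_closure hmem2) j)
end

section
/- Let G be a 2-generator finite p-group of nilpotency class at least 3 such that γ₂(G) is cyclic and |γ₂(G)/γ₃(G)| > 2. Then |Aut_c(G)| = |γ₂(G)|² and Aut_c(G) = Inn(G). -/
open Finset
open scoped commutatorElement

private def gsum (e : ℤ) (m : ℕ) : ℤ := ∑ j ∈ range m, (1+e)^j

private lemma gsum_succ (e : ℤ) (m : ℕ) : gsum e (m+1) = (1+e) * gsum e m + 1 :=
  geom_sum_succ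

private lemma gsum_add (e : ℤ) (m k : ℕ) :
    gsum e (m+k) = gsum e m + (1+e)^m * gsum e k := by
  unfold gsum
  rw [Finset.sum_range_add, Finset.mul_sum]
  congr 1
  refine Finset.sum_congr rfl fun j _ => ?_
  rw [pow_add]

private lemma gsum_mul (e : ℤ) (m k : ℕ) :
    gsum e (m*k) = gsum e m * gsum ((1+e)^m - 1) k := by
  induction k with
  | zero => simp [gsum]
  | succ k ih =>
      have h1 : m * (k+1) = m * k + m := by ring
      rw [h1, gsum_add, ih]
      have h2 : gsum ((1+e)^m - 1) (k+1)
          = gsum ((1+e)^m - 1) k + ((1+e)^m)^k := by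
        unfold gsum
        rw [Finset.sum_range_succ]
        congr 2
        ring_nf
      rw [h2, mul_add, pow_mul]
      ring

private lemma gsum_mod (p : ℕ) (e : ℤ) (he : (p:ℤ) ∣ e) (m : ℕ) :
    (p:ℤ) ∣ gsum e m - m := by
  induction m with
  | zero => simp [gsum]
  | succ m ih =>
      rw [gsum_succ]
      push_cast
      have : (1+e) * gsum e m + 1 - (m+1) = (gsum e m - m) + e * gsum e m := by ring
      rw [this]
      exact dvd_add ih (he.mul_right _)

private lemma gsum_key (p : ℕ) (hp : p.Prime) (e : ℤ) (he : (p:ℤ) ∣ e)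
    (he2 : p = 2 → (4:ℤ) ∣ e) : ∃ z : ℤ, gsum e p = p * (1 + p * z) := by
  rcases eq_or_ne p 2 with h2 | h2
  · subst h2
    obtain ⟨e', rfl⟩ := he2 rfl
    refine ⟨e', ?_⟩
    have : gsum (4*e') 2 = (1 + 4*e') + 1 := by
      unfold gsum; rw [geom_sum_two]
    rw [this]; push_cast; ring
  · -- p odd
    have hodd : Odd p := hp.odd_of_ne_two h2
    obtain ⟨q, hq⟩ := hodd
    -- binomial expansion of each term
    have hbin : ∀ j : ℕ, ∃ w : ℤ, (1+e)^j = 1 + j*e + e^2*w := by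
      intro j
      induction j with
      | zero => exact ⟨0, by simp⟩
      | succ j ih =>
          obtain ⟨w, hw⟩ := ih
          refine ⟨w + j + e*w, ?_⟩
          rw [pow_succ, hw]
          push_cast
          ring
    choose w hw using hbin
    obtain ⟨e', rfl⟩ := he
    have hsum : gsum (p*e') p
        = p + (∑ j ∈ range p, (j:ℤ)) * (p*e') + (p*e')^2 * (∑ j ∈ range p, w j) := by
      unfold gsum
      rw [Finset.sum_congr rfl fun j _ => hw j]
      rw [Finset.sum_add_distrib, Finset.sum_add_distrib, ← Finset.sum_mul,
        ← Finset.mul_sum]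
      simp
    have hid : (∑ j ∈ range p, (j:ℤ)) = p * q := by
      have h1 : (∑ j ∈ range p, j) * 2 = p * (p - 1) := Finset.sum_range_id_mul_two p
      have h2 : p - 1 = 2 * q := by omega
      rw [h2] at h1
      have h3 : (∑ j ∈ range p, j) = p * q := by
        have h1' : (∑ j ∈ range p, j) * 2 = (p * q) * 2 := by rw [h1]; ring
        exact Nat.eq_of_mul_eq_mul_right two_pos h1'
      rw [← Nat.cast_sum, h3]; push_cast; ring
    refine ⟨e' * q + e'^2 * (∑ j ∈ range p, w j), ?_⟩
    rw [hsum, hid]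
    push_cast
    ring

private lemma gsum_dvd (p : ℕ) (hp : p.Prime) :
    ∀ (n : ℕ) (e : ℤ), (p:ℤ) ∣ e → (p = 2 → (4:ℤ) ∣ e) →
      ∀ m : ℕ, (p:ℤ)^n ∣ gsum e m → (p:ℤ)^n ∣ (m:ℤ) := by
  intro n
  induction n with
  | zero => intro e _ _ m _; simpa using one_dvd _
  | succ n ih =>
      intro e he he2 m hdvd
      have hpz : (0:ℤ) < p := by exact_mod_cast hp.pos
      have hp1 : (p:ℤ) ∣ (m:ℤ) := by
        have h1 : (p:ℤ) ∣ gsum e m :=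
          dvd_trans (dvd_pow_self (p:ℤ) (Nat.succ_ne_zero n)) hdvd
        have h2 := gsum_mod p e he m
        have : (m:ℤ) = gsum e m - (gsum e m - m) := by ring
        rw [this]; exact h1.sub h2
      have hpm : p ∣ m := by exact_mod_cast hp1
      obtain ⟨m', rfl⟩ := hpm
      rw [gsum_mul] at hdvd
      obtain ⟨z, hz⟩ := gsum_key p hp e he he2
      rw [hz, pow_succ'] at hdvd
      have hcan : (p:ℤ)^n ∣ (1 + p*z) * gsum ((1+e)^p - 1) m' := by
        rw [mul_assoc] at hdvd
        exact (mul_dvd_mul_iff_left hpz.ne').mp hdvd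
      have hco : IsCoprime ((p:ℤ)^n) (1 + p*z) :=
        IsCoprime.pow_left ⟨-z, 1, by ring⟩
      have hT' : (p:ℤ)^n ∣ gsum ((1+e)^p - 1) m' := hco.dvd_of_dvd_mul_left hcan
      have he' : (p:ℤ) ∣ (1+e)^p - 1 := by
        have : (1+e)^p - 1 = gsum e p * e := by
          have := geom_sum_mul (1+e) p
          simp only [add_sub_cancel_left] at this
          unfold gsum; linarith [this]
        rw [this]; exact he.mul_left _
      have he2' : p = 2 → (4:ℤ) ∣ (1+e)^p - 1 := by
        intro h2
        have : (1+e)^p - 1 = gsum e p * e := by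
          have := geom_sum_mul (1+e) p
          simp only [add_sub_cancel_left] at this
          unfold gsum; linarith [this]
        rw [this]; exact (he2 h2).mul_left _
      have := ih ((1+e)^p - 1) he' he2' m' hT'
      rw [pow_succ']
      push_cast
      exact mul_dvd_mul_left _ this

private lemma gsum_inj_aux (p : ℕ) (hp : p.Prime) (n : ℕ) (e : ℤ) (he : (p:ℤ) ∣ e)
    (he2 : p = 2 → (4:ℤ) ∣ e)
    (i j : ℕ) (hij : j ≤ i) (hi : i < p^n)
    (hdvd : (p:ℤ)^n ∣ gsum e i - gsum e j) : i = j := by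
  obtain ⟨k, rfl⟩ := Nat.exists_eq_add_of_le hij
  rw [gsum_add, add_sub_cancel_left] at hdvd
  have he' := he
  obtain ⟨e', rfl⟩ := he'
  have hco : IsCoprime ((p:ℤ)^n) ((1+(p:ℤ)*e')^j) :=
    IsCoprime.pow (⟨-e', 1, by ring⟩ : IsCoprime ((p:ℤ)) (1+(p:ℤ)*e'))
  have h1 : (p:ℤ)^n ∣ gsum ((p:ℤ)*e') k := hco.dvd_of_dvd_mul_left hdvd
  have hk : (p:ℤ)^n ∣ (k:ℤ) := gsum_dvd p hp n ((p:ℤ)*e') ⟨e', rfl⟩ he2 k h1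
  have hkn : ((p:ℕ)^n : ℤ) ∣ (k:ℤ) := by push_cast; exact hk
  have hk' : p^n ∣ k := by exact_mod_cast hkn
  have : k < p^n := lt_of_le_of_lt (Nat.le_add_left k j) hi
  have hk0 : k = 0 := by
    by_contra hne
    exact absurd this (not_lt.mpr (Nat.le_of_dvd (Nat.pos_of_ne_zero hne) hk'))
  omega

private lemma gsum_inj (p : ℕ) (hp : p.Prime) (n : ℕ) (e : ℤ) (he : (p:ℤ) ∣ e)
    (he2 : p = 2 → (4:ℤ) ∣ e)
    (i j : ℕ) (hi : i < p^n) (hj : j < p^n)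
    (hdvd : (p:ℤ)^n ∣ gsum e i - gsum e j) : i = j := by
  rcases le_total j i with h | h
  · exact gsum_inj_aux p hp n e he he2 i j h hi hdvd
  · exact (gsum_inj_aux p hp n e he he2 j i h hj (by
      have := hdvd.neg_right
      simpa using this)).symm

private lemma gsum_surj (p : ℕ) (hp : p.Prime) (n : ℕ) (e : ℤ) (he : (p:ℤ) ∣ e)
    (he2 : p = 2 → (4:ℤ) ∣ e) (w : ℤ) : ∃ i : ℕ, (p:ℤ)^n ∣ gsum e i - w := by
  haveI : NeZero (p^n) := ⟨pow_ne_zero _ hp.pos.ne'⟩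
  set f : Fin (p^n) → ZMod (p^n) := fun i => ((gsum e i : ℤ) : ZMod (p^n)) with hf
  have hinj : Function.Injective f := by
    intro i j hijf
    have hmod : ((gsum e (i:ℕ) : ℤ) : ZMod (p^n)) = ((gsum e (j:ℕ) : ℤ) : ZMod (p^n)) := hijf
    rw [ZMod.intCast_eq_intCast_iff] at hmod
    have hdvd : ((p^n : ℕ) : ℤ) ∣ gsum e j - gsum e i := Int.ModEq.dvd hmod
    have hdvd' : (p:ℤ)^n ∣ gsum e (j:ℕ) - gsum e (i:ℕ) := by push_cast at hdvd ⊢; exact hdvd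
    exact Fin.ext (gsum_inj p hp n e he he2 j i j.isLt i.isLt hdvd').symm
  have hbij : Function.Bijective f := by
    rw [Fintype.bijective_iff_injective_and_card]
    exact ⟨hinj, by simp [ZMod.card]⟩
  obtain ⟨i, hi⟩ := hbij.2 ((w : ZMod (p^n)))
  refine ⟨(i:ℕ), ?_⟩
  have : ((gsum e (i:ℕ) - w : ℤ) : ZMod (p^n)) = 0 := by
    push_cast
    rw [show ((gsum e (i:ℕ) : ℤ) : ZMod (p^n)) = f i from rfl, hi]
    ring
  rw [ZMod.intCast_zmod_eq_zero_iff_dvd] at this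
  push_cast at this
  exact this

-- subgroups of a finite cyclic group: card divisibility gives inclusion
private lemma sub_le_of_card_dvd {Γ : Type*} [Group Γ] [Finite Γ] [IsCyclic Γ]
    (H K : Subgroup Γ) (hdvd : Nat.card H ∣ Nat.card K) : H ≤ K := by
  classical
  cases nonempty_fintype Γ
  have hmem : ∀ (L : Subgroup Γ) (y : Γ), y ∈ L ↔ y ^ (Fintype.card L) = 1 := by
    intro L y
    constructor
    · intro hy
      have : ((⟨y, hy⟩ : L) : Γ) ^ (Fintype.card L) = ((1 : L) : Γ) := by
        norm_cast
        rw [pow_card_eq_one]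
      simpa using this
    · intro hy
      have hsub : (L : Set Γ).toFinset ⊆ Finset.univ.filter (fun z => z ^ (Fintype.card L) = 1) := by
        intro z hz
        simp only [Set.mem_toFinset, SetLike.mem_coe] at hz
        simp only [Finset.mem_filter, Finset.mem_univ, true_and]
        have : ((⟨z, hz⟩ : L) : Γ) ^ (Fintype.card L) = ((1 : L) : Γ) := by
          norm_cast
          rw [pow_card_eq_one]
        simpa using this
      have hcardle : (Finset.univ.filter (fun z : Γ => z ^ (Fintype.card L) = 1)).card
          ≤ Fintype.card L := by
        have := IsCyclic.card_pow_eq_one_le (α := Γ) (n := Fintype.card L) Fintype.card_pos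
        simpa using this
      have hcardeq : (L : Set Γ).toFinset.card = Fintype.card L := by
        simp [Set.toFinset_card]
      have : (L : Set Γ).toFinset = Finset.univ.filter (fun z => z ^ (Fintype.card L) = 1) :=
        Finset.eq_of_subset_of_card_le hsub (by rw [hcardeq]; exact hcardle)
      have hy' : y ∈ (L : Set Γ).toFinset := by
        rw [this]
        simp [hy]
      simpa using hy'
  intro x hx
  rw [hmem K x]
  rw [hmem H x] at hx
  rw [Nat.card_eq_fintype_card, Nat.card_eq_fintype_card] at hdvd
  obtain ⟨t, ht⟩ := hdvd
  rw [ht, pow_mul, hx, one_pow]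

-- if G is generated by S and the images of S in G/K commute pairwise, then commutator G ≤ K
private lemma commutator_le_of_gen_commute {G : Type*} [Group G] (a b : G)
    (hgen : Subgroup.closure ({a, b} : Set G) = ⊤) (K : Subgroup G) [K.Normal]
    (hab : ⁅a, b⁆ ∈ K) : commutator G ≤ K := by
  let Q := G ⧸ K
  let π : G →* Q := QuotientGroup.mk' K
  have hsurj : Function.Surjective π := QuotientGroup.mk'_surjective K
  have hQgen : Subgroup.closure ({π a, π b} : Set Q) = ⊤ := by
    have : Subgroup.closure (π '' ({a, b} : Set G)) = ⊤ := by
      rw [← MonoidHom.map_closure, hgen, Subgroup.map_top_of_surjective π hsurj]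
    rwa [Set.image_insert_eq, Set.image_singleton] at this
  have hcomm1 : π a * π b = π b * π a := by
    have h1 : π ⁅a, b⁆ = 1 := (QuotientGroup.eq_one_iff _).mpr hab
    rw [map_commutatorElement] at h1
    have := commutatorElement_eq_one_iff_mul_comm.mp h1
    exact this
  -- every element of Q centralizes {π a, π b}
  have hcent : ∀ x : Q, x ∈ Subgroup.centralizer ({π a, π b} : Set Q) := by
    intro x
    have : (⊤ : Subgroup Q) ≤ Subgroup.centralizer ({π a, π b} : Set Q) := by
      rw [← hQgen]
      apply Subgroup.closure_le _ |>.mpr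
      intro s hs
      rw [SetLike.mem_coe, Subgroup.mem_centralizer_iff]
      intro h hh
      rcases hs with rfl | rfl <;> rcases hh with rfl | rfl
      · rfl
      · exact hcomm1.symm
      · exact hcomm1
      · rfl
    exact this (Subgroup.mem_top x)
  have hcommQ : ∀ x y : Q, x * y = y * x := by
    intro x y
    have hx : ∀ s ∈ ({π a, π b} : Set Q), s * x = x * s :=
      Subgroup.mem_centralizer_iff.mp (hcent x)
    have : (⊤ : Subgroup Q) ≤ Subgroup.centralizer ({x} : Set Q) := by
      rw [← hQgen]
      apply Subgroup.closure_le _ |>.mpr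
      intro s hs
      rw [SetLike.mem_coe, Subgroup.mem_centralizer_iff]
      intro h hh
      rcases hh with rfl
      exact (hx s hs).symm
    have hy := this (Subgroup.mem_top y)
    rw [Subgroup.mem_centralizer_iff] at hy
    exact hy x (Set.mem_singleton x)
  rw [_root_.commutator_def, Subgroup.commutator_le]
  intro g1 _ g2 _
  have : π ⁅g1, g2⁆ = 1 := by
    rw [map_commutatorElement]
    exact commutatorElement_eq_one_iff_mul_comm.mpr (hcommQ (π g1) (π g2))
  exact (QuotientGroup.eq_one_iff _).mp this

private lemma closure_image_pair {G Q : Type*} [Group G] [Group Q] (π : G →* Q)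
    (hsurj : Function.Surjective π) (a b : G)
    (hgen : Subgroup.closure ({a, b} : Set G) = ⊤) :
    Subgroup.closure ({π a, π b} : Set Q) = ⊤ := by
  have : Subgroup.closure (π '' ({a, b} : Set G)) = ⊤ := by
    rw [← MonoidHom.map_closure, hgen, Subgroup.map_top_of_surjective π hsurj]
  rwa [Set.image_insert_eq, Set.image_singleton] at this

private lemma commutator_eq_zpowers {p : ℕ} {G : Type*} [Group G] [Finite G]
    (hp : p.Prime) (hpG : IsPGroup p G) (a b : G)
    (hgen : Subgroup.closure ({a, b} : Set G) = ⊤)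
    (hcyc : IsCyclic (commutator G))
    (hcl : (⊤ : Subgroup G).lowerCentralSeries 2 ≠ ⊥) :
    commutator G = Subgroup.zpowers ⁅a, b⁆ := by
  haveI : Fact p.Prime := ⟨hp⟩
  set c := ⁅a, b⁆ with hc
  set N₂ := (⊤ : Subgroup G).lowerCentralSeries 2 with hN₂
  set Γ := commutator G with hΓ
  have hcΓ : c ∈ Γ := Subgroup.commutator_mem_commutator (Subgroup.mem_top a) (Subgroup.mem_top b)
  have hN₂Γ : N₂ ≤ Γ := by
    rw [hΓ, ← Subgroup.top_lowerCentralSeries_one]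
    exact Subgroup.lowerCentralSeries_antitone _ (by norm_num)
  -- quotient by N₂
  let Q := G ⧸ N₂
  let π : G →* Q := QuotientGroup.mk' N₂
  have hsurj : Function.Surjective π := QuotientGroup.mk'_surjective N₂
  have hgc : ∀ g : G, ⁅g, c⁆ ∈ N₂ := by
    intro g
    have h1 : ⁅g, c⁆ ∈ ⁅(⊤ : Subgroup G), Γ⁆ :=
      Subgroup.commutator_mem_commutator (Subgroup.mem_top g) hcΓ
    rw [Subgroup.commutator_comm] at h1
    exact h1
  have hccenter : π c ∈ Subgroup.center Q := by
    rw [Subgroup.mem_center_iff]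
    intro q
    obtain ⟨g, rfl⟩ := hsurj q
    have h1 : π ⁅g, c⁆ = 1 := (QuotientGroup.eq_one_iff _).mpr (hgc g)
    rw [map_commutatorElement] at h1
    exact commutatorElement_eq_one_iff_mul_comm.mp h1
  set K : Subgroup Q := Subgroup.zpowers (π c) with hK
  have hKcent : K ≤ Subgroup.center Q := Subgroup.zpowers_le.mpr hccenter
  haveI : K.Normal := by
    constructor
    intro x hx g
    have := Subgroup.mem_center_iff.mp (hKcent hx) g
    rw [this, mul_assoc, mul_inv_cancel, mul_one]
    exact hx
  have hQcomm : commutator Q ≤ K := by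
    apply commutator_le_of_gen_commute (π a) (π b) (closure_image_pair π hsurj a b hgen)
    rw [← map_commutatorElement]
    exact Subgroup.mem_zpowers _
  have hmapQ : Subgroup.map π Γ = commutator Q := by
    rw [hΓ, _root_.commutator_def, Subgroup.map_commutator,
      Subgroup.map_top_of_surjective π hsurj, _root_.commutator_def]
  have hle : Γ ≤ Subgroup.zpowers c ⊔ N₂ := by
    intro x hx
    have hπx : π x ∈ K := hQcomm (hmapQ ▸ Subgroup.mem_map_of_mem π hx)
    obtain ⟨k, hk⟩ := hπx
    have hk' : π (c ^ k) = π x := by rw [map_zpow]; exact hk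
    have hmem : (c ^ k)⁻¹ * x ∈ N₂ := by
      rwa [← QuotientGroup.eq (s := N₂)]
    have hx' : x = c ^ k * ((c ^ k)⁻¹ * x) := by group
    rw [hx']
    exact Subgroup.mul_mem _
      (Subgroup.mem_sup_left (Subgroup.zpow_mem _ (Subgroup.mem_zpowers c) k))
      (Subgroup.mem_sup_right hmem)
  -- compare the two subgroups inside the cyclic p-group Γ
  have hzΓ : Subgroup.zpowers c ≤ Γ := Subgroup.zpowers_le.mpr hcΓ
  haveI : IsCyclic ↥Γ := hcyc
  have hΓp : IsPGroup p ↥Γ := hpG.to_subgroup Γ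
  obtain ⟨n1, hn1⟩ := ((Subgroup.zpowers c).subgroupOf Γ |> hΓp.to_subgroup).exists_card_eq
  obtain ⟨n2, hn2⟩ := (N₂.subgroupOf Γ |> hΓp.to_subgroup).exists_card_eq
  have htot : N₂ ≤ Subgroup.zpowers c ∨ Subgroup.zpowers c ≤ N₂ := by
    rcases le_total n2 n1 with h | h
    · left
      have := sub_le_of_card_dvd (N₂.subgroupOf Γ) ((Subgroup.zpowers c).subgroupOf Γ)
        (by rw [hn1, hn2]; exact pow_dvd_pow p h)
      intro x hx
      have hxΓ : x ∈ Γ := hN₂Γ hx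
      have : (⟨x, hxΓ⟩ : Γ) ∈ (Subgroup.zpowers c).subgroupOf Γ :=
        this (Subgroup.mem_subgroupOf.mpr hx)
      exact Subgroup.mem_subgroupOf.mp this
    · right
      have := sub_le_of_card_dvd ((Subgroup.zpowers c).subgroupOf Γ) (N₂.subgroupOf Γ)
        (by rw [hn1, hn2]; exact pow_dvd_pow p h)
      intro x hx
      have hxΓ : x ∈ Γ := hzΓ hx
      have : (⟨x, hxΓ⟩ : Γ) ∈ N₂.subgroupOf Γ :=
        this (Subgroup.mem_subgroupOf.mpr hx)
      exact Subgroup.mem_subgroupOf.mp this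
  rcases htot with h | h
  · exact le_antisymm (le_trans hle (sup_le le_rfl h)) hzΓ
  · exfalso
    have hΓN₂ : Γ = N₂ := le_antisymm (le_trans hle (sup_le h le_rfl)) hN₂Γ
    have hstab : ∀ k : ℕ, 1 ≤ k → (⊤ : Subgroup G).lowerCentralSeries k = Γ := by
      intro k hk
      induction k with
      | zero => omega
      | succ k ih =>
          rcases Nat.eq_or_lt_of_le hk with h1 | h1
          · rw [← h1, hΓ]
            exact Subgroup.top_lowerCentralSeries_one
          · have hk1 : 1 ≤ k := by omega
            have e1 : (⊤ : Subgroup G).lowerCentralSeries (k+1) = ⁅(⊤ : Subgroup G).lowerCentralSeries k, ⊤⁆ := rfl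
            rw [e1, ih hk1]
            have e2 : ⁅Γ, ⊤⁆ = N₂ := rfl
            rw [e2, ← hΓN₂]
    have hnil : Group.IsNilpotent G := hpG.isNilpotent
    obtain ⟨m, hm⟩ := Subgroup.nilpotent_iff_lowerCentralSeries.mp hnil
    rcases Nat.eq_zero_or_pos m with rfl | hmpos
    · rw [Subgroup.lowerCentralSeries_zero] at hm
      apply hcl
      rw [eq_bot_iff, ← hm]
      exact le_top
    · apply hcl
      have hΓbot : Γ = ⊥ := by rw [← hstab m hmpos, hm]
      rw [hΓN₂] at hΓbot
      exact hΓbot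

private lemma comm_mul_right {G : Type*} [Group G] (x y z : G) :
    ⁅x, y * z⁆ = ⁅x, y⁆ * (y * ⁅x, z⁆ * y⁻¹) := by
  group

private lemma comm_b_apow {G : Type*} [Group G] (a b : G) (θ : ℤ)
    (h : a * ⁅a, b⁆ * a⁻¹ = ⁅a, b⁆ ^ θ) (i : ℕ) :
    ⁅b, a ^ i⁆ = ⁅a, b⁆ ^ (-(gsum (θ - 1) i)) := by
  induction i with
  | zero => simp [gsum]
  | succ i ih =>
      have h1 : a ^ (i+1) = a * a ^ i := by rw [pow_succ']
      rw [h1, comm_mul_right, ih]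
      have hba : ⁅b, a⁆ = ⁅a, b⁆⁻¹ := by group
      have hconj : a * ⁅a, b⁆ ^ (-(gsum (θ - 1) i)) * a⁻¹
          = ⁅a, b⁆ ^ (θ * (-(gsum (θ - 1) i))) := by
        rw [← conj_zpow, h, ← zpow_mul, mul_comm θ]
      rw [hba, hconj, ← zpow_neg_one, ← zpow_add]
      congr 1
      have := gsum_succ (θ - 1) i
      have h2 : 1 + (θ - 1) = θ := by ring
      rw [h2] at this
      rw [this]
      ring

private lemma comm_a_bpow {G : Type*} [Group G] (a b : G) (θ : ℤ)
    (h : b * ⁅a, b⁆ * b⁻¹ = ⁅a, b⁆ ^ θ) (j : ℕ) :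
    ⁅a, b ^ j⁆ = ⁅a, b⁆ ^ (gsum (θ - 1) j) := by
  induction j with
  | zero => simp [gsum]
  | succ j ih =>
      have h1 : b ^ (j+1) = b * b ^ j := by rw [pow_succ']
      rw [h1, comm_mul_right, ih]
      have hconj : b * ⁅a, b⁆ ^ (gsum (θ - 1) j) * b⁻¹
          = ⁅a, b⁆ ^ (θ * gsum (θ - 1) j) := by
        rw [← conj_zpow, h, ← zpow_mul, mul_comm θ]
      rw [hconj]
      have h3 : gsum (θ - 1) (j+1) = 1 + θ * gsum (θ - 1) j := by
        have := gsum_succ (θ - 1) j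
        have h2 : 1 + (θ - 1) = θ := by ring
        rw [h2] at this
        rw [this]; ring
      rw [h3, zpow_add, zpow_one]

private lemma all_normal_of_cyclic {Γ : Type*} [Group Γ] [IsCyclic Γ] (H : Subgroup Γ) :
    H.Normal := by
  obtain ⟨gen, hgen⟩ := IsCyclic.exists_generator (α := Γ)
  constructor
  intro h hh g
  obtain ⟨i, hi⟩ := Subgroup.mem_zpowers_iff.mp (hgen g)
  obtain ⟨j, hj⟩ := Subgroup.mem_zpowers_iff.mp (hgen h)
  have hcomm : g * h = h * g := by
    rw [← hi, ← hj, ← zpow_add, ← zpow_add, add_comm]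
  rw [hcomm, mul_assoc, mul_inv_cancel, mul_one]
  exact hh

private lemma zpow_eq_of_dvd {G : Type*} [Group G] (c : G) (x y : ℤ)
    (h : (orderOf c : ℤ) ∣ x - y) : c ^ x = c ^ y := by
  have h1 : c ^ (x - y) = 1 := orderOf_dvd_iff_zpow_eq_one.mp h
  calc c ^ x = c ^ (y + (x - y)) := by ring_nf
  _ = c ^ y * c ^ (x - y) := zpow_add c y (x-y)
  _ = c ^ y := by rw [h1, mul_one]

private lemma key_cover {p : ℕ} {G : Type*} [Group G] [Finite G]
    (hp : p.Prime) (hpG : IsPGroup p G) (a b : G)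
    (hgen : Subgroup.closure ({a, b} : Set G) = ⊤)
    (hcyc : IsCyclic (commutator G))
    (hcl : (⊤ : Subgroup G).lowerCentralSeries 2 ≠ ⊥)
    (hidx : 2 < ((⊤ : Subgroup G).lowerCentralSeries 2).relIndex (commutator G)) :
    ∀ γ : G, γ ∈ commutator G →
      (∃ i : ℕ, ⁅b, a ^ i⁆ = γ) ∧ (∃ j : ℕ, ⁅a, b ^ j⁆ = γ) := by
  haveI : Fact p.Prime := ⟨hp⟩
  set c := ⁅a, b⁆ with hc
  set Γ := commutator G with hΓ
  set N₂ := (⊤ : Subgroup G).lowerCentralSeries 2 with hN₂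
  have hΓz : Γ = Subgroup.zpowers c := commutator_eq_zpowers hp hpG a b hgen hcyc hcl
  have hcΓ : c ∈ Γ := Subgroup.commutator_mem_commutator (Subgroup.mem_top a) (Subgroup.mem_top b)
  have hΓp : IsPGroup p ↥Γ := hpG.to_subgroup Γ
  obtain ⟨n, hn⟩ := hΓp.exists_card_eq
  have horder : orderOf c = p ^ n := by
    rw [← Nat.card_zpowers, ← hΓz, hn]
  have hgc : ∀ g : G, ⁅g, c⁆ ∈ N₂ := by
    intro g
    have h1 : ⁅g, c⁆ ∈ ⁅(⊤ : Subgroup G), Γ⁆ :=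
      Subgroup.commutator_mem_commutator (Subgroup.mem_top g) hcΓ
    rw [Subgroup.commutator_comm] at h1
    exact h1
  -- the conjugation exponents
  have hθdata : ∀ g : G, ∃ θ : ℤ, g * c * g⁻¹ = c ^ θ ∧ ((p:ℤ) ∣ (θ - 1)) ∧
      (p = 2 → (4:ℤ) ∣ (θ - 1)) := by
    intro g
    haveI : Γ.Normal := by rw [hΓ]; infer_instance
    have hmem : g * c * g⁻¹ ∈ Γ := Subgroup.Normal.conj_mem ‹Γ.Normal› c hcΓ g
    rw [hΓz] at hmem
    obtain ⟨θ, hθ⟩ := Subgroup.mem_zpowers_iff.mp hmem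
    refine ⟨θ, hθ.symm, ?_⟩
    -- c ^ (θ - 1) ∈ N₂
    have hc1 : c ^ (θ - 1) ∈ N₂ := by
      have : c ^ (θ - 1) = (g * c * g⁻¹) * c⁻¹ := by
        rw [← hθ, zpow_sub, zpow_one]
      rw [this]
      have : (g * c * g⁻¹) * c⁻¹ = ⁅g, c⁆ := by group
      rw [this]
      exact hgc g
    -- relIndex as the order of c in Γ ⧸ N₂
    set H : Subgroup ↥Γ := N₂.subgroupOf Γ with hH
    haveI : H.Normal := all_normal_of_cyclic H
    set cbar : ↥Γ ⧸ H := QuotientGroup.mk (⟨c, hcΓ⟩ : ↥Γ) with hcbar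
    have hgen' : ∀ x : ↥Γ ⧸ H, x ∈ Subgroup.zpowers cbar := by
      intro x
      obtain ⟨y, rfl⟩ := QuotientGroup.mk_surjective x
      have hy : (y : G) ∈ Subgroup.zpowers c := by rw [← hΓz]; exact y.2
      obtain ⟨k, hk⟩ := Subgroup.mem_zpowers_iff.mp hy
      have hy' : y = (⟨c, hcΓ⟩ : ↥Γ) ^ k := by
        apply Subtype.ext
        rw [← hk]
        simp
      rw [hy', Subgroup.mem_zpowers_iff]
      exact ⟨k, by rw [hcbar, ← QuotientGroup.mk_zpow]⟩
    have horder' : orderOf cbar = N₂.relIndex Γ := by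
      rw [orderOf_eq_card_of_forall_mem_zpowers hgen', Subgroup.relIndex,
        Subgroup.index_eq_card]
    have hdvdθ : ((N₂.relIndex Γ : ℕ) : ℤ) ∣ (θ - 1) := by
      rw [← horder']
      apply orderOf_dvd_iff_zpow_eq_one.mpr
      have h1 : cbar ^ (θ - 1) = QuotientGroup.mk ((⟨c, hcΓ⟩ : ↥Γ) ^ (θ - 1)) := by
        rw [hcbar, QuotientGroup.mk_zpow]
      rw [h1, QuotientGroup.eq_one_iff]
      rw [Subgroup.mem_subgroupOf]
      have : (((⟨c, hcΓ⟩ : ↥Γ) ^ (θ - 1) : ↥Γ) : G) = c ^ (θ - 1) := by simp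
      rw [this]
      exact hc1
    -- relIndex is a p-power > 2
    have hdvdcard : N₂.relIndex Γ ∣ p ^ n := by
      rw [← hn]
      exact Subgroup.index_dvd_card (G := ↥Γ) (H := N₂.subgroupOf Γ)
    obtain ⟨k, hkn, hkt⟩ := (Nat.dvd_prime_pow hp).mp hdvdcard
    have ht2 : 2 < N₂.relIndex Γ := hidx
    have hk1 : 1 ≤ k := by
      rcases Nat.eq_zero_or_pos k with rfl | h
      · rw [pow_zero] at hkt; omega
      · exact h
    constructor
    · have : (p:ℕ) ∣ N₂.relIndex Γ := by
        rw [hkt]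
        exact dvd_pow_self p (by omega)
      exact dvd_trans (Int.natCast_dvd_natCast.mpr this) hdvdθ
    · intro hp2
      have hk2 : 2 ≤ k := by
        by_contra hk2'
        push_neg at hk2'
        have hkle : k = 0 ∨ k = 1 := by omega
        rcases hkle with rfl | rfl
        · rw [pow_zero] at hkt; omega
        · rw [hp2, pow_one] at hkt; omega
      have : (4:ℕ) ∣ N₂.relIndex Γ := by
        rw [hkt, hp2, show (4:ℕ) = 2^2 by norm_num]
        exact pow_dvd_pow 2 hk2
      exact dvd_trans (Int.natCast_dvd_natCast.mpr this) hdvdθ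
  obtain ⟨θa, hθa, hθa1, hθa2⟩ := hθdata a
  obtain ⟨θb, hθb, hθb1, hθb2⟩ := hθdata b
  intro γ hγ
  rw [hΓz] at hγ
  obtain ⟨w, hw⟩ := Subgroup.mem_zpowers_iff.mp hγ
  constructor
  · obtain ⟨i, hi⟩ := gsum_surj p hp n (θa - 1) hθa1 hθa2 (-w)
    refine ⟨i, ?_⟩
    rw [comm_b_apow a b θa hθa i, ← hw]
    apply zpow_eq_of_dvd
    rw [horder]
    have : -(gsum (θa - 1) i) - w = -(gsum (θa - 1) i - (-w)) := by ring
    rw [this]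
    push_cast
    exact Dvd.dvd.neg_right hi
  · obtain ⟨j, hj⟩ := gsum_surj p hp n (θb - 1) hθb1 hθb2 w
    refine ⟨j, ?_⟩
    rw [comm_a_bpow a b θb hθb j, ← hw]
    apply zpow_eq_of_dvd
    rw [horder]
    push_cast
    exact hj

private lemma comm_eq_of_commute {G : Type*} [Group G] (x y z : G) (hz : z * x = x * z) :
    ⁅x, y * z⁆ = ⁅x, y⁆ := by
  have hzc : Commute z x := hz
  have hzi : z * x⁻¹ * z⁻¹ = x⁻¹ := by
    have h1 : z * x⁻¹ = x⁻¹ * z := hzc.inv_right.eq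
    rw [h1, mul_assoc, mul_inv_cancel, mul_one]
  calc ⁅x, y * z⁆ = x * y * (z * x⁻¹ * z⁻¹) * y⁻¹ := by group
  _ = x * y * x⁻¹ * y⁻¹ := by rw [hzi]
  _ = ⁅x, y⁆ := by group

private lemma mulaut_eq_of_pair {G : Type*} [Group G] (a b : G)
    (hgen : Subgroup.closure ({a, b} : Set G) = ⊤) (φ ψ : MulAut G)
    (ha : φ a = ψ a) (hb : φ b = ψ b) : φ = ψ := by
  let K : Subgroup G :=
    { carrier := {x | φ x = ψ x}
      one_mem' := by simp
      mul_mem' := by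
        intro x y hx hy
        simp only [Set.mem_setOf_eq, map_mul] at *
        rw [hx, hy]
      inv_mem' := by
        intro x hx
        simp only [Set.mem_setOf_eq, map_inv] at *
        rw [hx] }
  have hK : Subgroup.closure ({a, b} : Set G) ≤ K := by
    apply Subgroup.closure_le _ |>.mpr
    intro s hs
    rcases hs with rfl | hs
    · exact ha
    · rw [Set.mem_singleton_iff] at hs; subst hs; exact hb
  apply MulEquiv.ext
  intro x
  have : x ∈ K := by
    rw [hgen] at hK
    exact hK (Subgroup.mem_top x)
  exact this

private lemma conj_ker_eq_center {G : Type*} [Group G] :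
    (MulAut.conj : G →* MulAut G).ker = Subgroup.center G := by
  ext g
  rw [MonoidHom.mem_ker, Subgroup.mem_center_iff]
  constructor
  · intro h x
    have h1 := MulEquiv.ext_iff.mp h x
    simp only [MulAut.conj_apply, MulAut.one_apply] at h1
    have h2 : g * x = x * g := by
      have := congrArg (fun y => y * g) h1
      simpa [mul_assoc] using this
    exact h2.symm
  · intro h
    apply MulEquiv.ext
    intro x
    simp only [MulAut.conj_apply, MulAut.one_apply]
    rw [mul_inv_eq_iff_eq_mul]
    exact (h x).symm

/-- If `G` is a 2-generator finite p-group of nilpotency class at least 3 with `γ₂(G)`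
cyclic and `|γ₂(G)/γ₃(G)| > 2`, then `|Aut_c(G)| = |γ₂(G)|²` and `Aut_c(G) = Inn(G)`. -/
theorem stmt_13 {p : ℕ} {G : Type*} [Group G] [Finite G] (hp : p.Prime) (hpG : IsPGroup p G)
    (hgen : Group.rank G = 2)
    (hcl : (⊤ : Subgroup G).lowerCentralSeries 2 ≠ ⊥)
    (hcyc : IsCyclic (commutator G))
    (hidx : 2 < ((⊤ : Subgroup G).lowerCentralSeries 2).relIndex ((⊤ : Subgroup G).lowerCentralSeries 1)) :
    Nat.card (autC G) = Nat.card (commutator G) ^ 2 ∧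
      autC G = (MulAut.conj : G →* MulAut G).range := by
  haveI : Fact p.Prime := ⟨hp⟩
  classical
  -- two generators
  obtain ⟨S, hScard, hSclosure⟩ := Group.rank_spec G
  rw [hgen] at hScard
  obtain ⟨a, b, hab, hS⟩ := Finset.card_eq_two.mp hScard
  have hgen2 : Subgroup.closure ({a, b} : Set G) = ⊤ := by
    rw [← hSclosure, hS]
    norm_cast
  set Γ := commutator G with hΓ
  have hcover := key_cover hp hpG a b hgen2 hcyc hcl (by exact hidx)
  set N := Nat.card ↥Γ with hN
  set Ca := Subgroup.centralizer ({a} : Set G) with hCa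
  set Cb := Subgroup.centralizer ({b} : Set G) with hCb
  have hZCa : Subgroup.center G ≤ Ca := by
    intro z hz
    rw [hCa, Subgroup.mem_centralizer_iff]
    intro h hh
    rw [Set.mem_singleton_iff] at hh
    rw [hh]
    exact Subgroup.mem_center_iff.mp hz a
  have hZCb : Subgroup.center G ≤ Cb := by
    intro z hz
    rw [hCb, Subgroup.mem_centralizer_iff]
    intro h hh
    rw [Set.mem_singleton_iff] at hh
    rw [hh]
    exact Subgroup.mem_center_iff.mp hz b
  have hZ : Ca ⊓ Cb ≤ Subgroup.center G := by
    intro z hz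
    rw [Subgroup.mem_center_iff]
    intro g
    obtain ⟨hz1, hz2⟩ := Subgroup.mem_inf.mp hz
    have hza : a * z = z * a := by
      rw [hCa, Subgroup.mem_centralizer_iff] at hz1
      exact hz1 a (Set.mem_singleton a)
    have hzb : b * z = z * b := by
      rw [hCb, Subgroup.mem_centralizer_iff] at hz2
      exact hz2 b (Set.mem_singleton b)
    have hsub : ({a, b} : Set G) ⊆ (Subgroup.centralizer ({z} : Set G) : Set G) := by
      intro s hs
      rw [SetLike.mem_coe, Subgroup.mem_centralizer_iff]
      intro h hh
      rw [Set.mem_singleton_iff] at hh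
      rw [hh]
      rcases hs with rfl | hs
      · exact hza.symm
      · rw [Set.mem_singleton_iff] at hs; rw [hs]; exact hzb.symm
    have htop : (⊤ : Subgroup G) ≤ Subgroup.centralizer ({z} : Set G) := by
      rw [← hgen2]
      exact Subgroup.closure_le _ |>.mpr hsub
    have hgz := htop (Subgroup.mem_top g)
    rw [Subgroup.mem_centralizer_iff] at hgz
    exact (hgz z (Set.mem_singleton z)).symm
  -- injection 1 : Γ ↪ G ⧸ Ca
  have hinj1 : N ≤ Ca.index := by
    choose jfun hjfun using fun γ : ↥Γ => (hcover γ γ.2).2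
    set f : ↥Γ → G ⧸ Ca := fun γ => QuotientGroup.mk (b ^ (jfun γ)) with hf
    have hfinj : Function.Injective f := by
      intro γ γ' hff
      have hmem : (b ^ jfun γ)⁻¹ * (b ^ jfun γ') ∈ Ca := by
        rw [← QuotientGroup.eq]
        exact hff
      set z := (b ^ jfun γ)⁻¹ * (b ^ jfun γ') with hzd
      have hzdef : b ^ jfun γ' = b ^ jfun γ * z := by rw [hzd]; group
      have hza : z * a = a * z := by
        rw [hCa, Subgroup.mem_centralizer_iff] at hmem
        exact (hmem a (Set.mem_singleton a)).symm
      have hcc : ⁅a, b ^ jfun γ'⁆ = ⁅a, b ^ jfun γ⁆ := by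
        rw [hzdef]
        exact comm_eq_of_commute a _ z hza
      apply Subtype.ext
      rw [← hjfun γ, ← hjfun γ', hcc]
    calc N = Nat.card ↥Γ := rfl
    _ ≤ Nat.card (G ⧸ Ca) := Nat.card_le_card_of_injective f hfinj
    _ = Ca.index := (Subgroup.index_eq_card Ca).symm
  -- injection 2 : Γ ↪ Ca ⧸ (center G).subgroupOf Ca
  have hinj2 : N ≤ (Subgroup.center G).relIndex Ca := by
    choose ifun hifun using fun γ : ↥Γ => (hcover γ γ.2).1
    have hamem : ∀ i : ℕ, a ^ i ∈ Ca := by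
      intro i
      rw [hCa, Subgroup.mem_centralizer_iff]
      intro h hh
      rw [Set.mem_singleton_iff] at hh
      rw [hh]
      exact ((Commute.refl a).pow_right i).eq
    set f2 : ↥Γ → ↥Ca ⧸ ((Subgroup.center G).subgroupOf Ca) :=
      fun γ => QuotientGroup.mk (⟨a ^ ifun γ, hamem _⟩ : ↥Ca) with hf2
    have hf2inj : Function.Injective f2 := by
      intro γ γ' hff
      have hmem : ((⟨a ^ ifun γ, hamem _⟩ : ↥Ca))⁻¹ * (⟨a ^ ifun γ', hamem _⟩ : ↥Ca)
          ∈ (Subgroup.center G).subgroupOf Ca := by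
        rw [← QuotientGroup.eq]
        exact hff
      rw [Subgroup.mem_subgroupOf] at hmem
      set z := (a ^ ifun γ)⁻¹ * (a ^ ifun γ') with hzd
      have hmem' : z ∈ Subgroup.center G := by
        have : ((((⟨a ^ ifun γ, hamem _⟩ : ↥Ca))⁻¹ * (⟨a ^ ifun γ', hamem _⟩ : ↥Ca) : ↥Ca) : G)
            = z := rfl
        rwa [this] at hmem
      have hzdef : a ^ ifun γ' = a ^ ifun γ * z := by rw [hzd]; group
      have hzb : z * b = b * z := (Subgroup.mem_center_iff.mp hmem' b).symm
      have hcc : ⁅b, a ^ ifun γ'⁆ = ⁅b, a ^ ifun γ⁆ := by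
        rw [hzdef]
        exact comm_eq_of_commute b _ z hzb
      apply Subtype.ext
      rw [← hifun γ, ← hifun γ', hcc]
    calc N = Nat.card ↥Γ := rfl
    _ ≤ Nat.card (↥Ca ⧸ ((Subgroup.center G).subgroupOf Ca)) :=
        Nat.card_le_card_of_injective f2 hf2inj
    _ = (Subgroup.center G).relIndex Ca := (Subgroup.index_eq_card _).symm
  -- upper bound for autC
  have hmemΓ : ∀ (φ : ↥(autC G)) (x : G), x⁻¹ * (φ : MulAut G) x ∈ Γ := by
    intro φ x
    have hconj : IsConj x ((φ : MulAut G) x) := φ.2 x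
    obtain ⟨g, hg⟩ := isConj_iff.mp hconj
    have : x⁻¹ * ((φ : MulAut G) x) = ⁅x⁻¹, g⁆ := by rw [← hg]; group
    rw [this, hΓ]
    exact Subgroup.commutator_mem_commutator (Subgroup.mem_top _) (Subgroup.mem_top _)
  have hup : Nat.card ↥(autC G) ≤ N^2 := by
    set Φ : ↥(autC G) → ↥Γ × ↥Γ :=
      fun φ => (⟨a⁻¹ * (φ : MulAut G) a, hmemΓ φ a⟩, ⟨b⁻¹ * (φ : MulAut G) b, hmemΓ φ b⟩)
      with hΦ
    have hΦinj : Function.Injective Φ := by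
      intro φ ψ h
      have h1 : a⁻¹ * (φ : MulAut G) a = a⁻¹ * (ψ : MulAut G) a :=
        congrArg (fun q => (q.1 : G)) h
      have h2 : b⁻¹ * (φ : MulAut G) b = b⁻¹ * (ψ : MulAut G) b :=
        congrArg (fun q => (q.2 : G)) h
      have ha' : (φ : MulAut G) a = (ψ : MulAut G) a := mul_left_cancel h1
      have hb' : (φ : MulAut G) b = (ψ : MulAut G) b := mul_left_cancel h2
      exact Subtype.ext (mulaut_eq_of_pair a b hgen2 _ _ ha' hb')
    calc Nat.card ↥(autC G) ≤ Nat.card (↥Γ × ↥Γ) := Nat.card_le_card_of_injective Φ hΦinj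
    _ = N * N := Nat.card_prod _ _
    _ = N^2 := (sq N).symm
  -- Inn ≤ autC
  have hinn : (MulAut.conj : G →* MulAut G).range ≤ autC G := by
    rintro φ ⟨g, rfl⟩
    intro x
    rw [MulAut.conj_apply]
    exact isConj_iff.mpr ⟨g, rfl⟩
  -- index identity
  have hindex : (Subgroup.center G).index
      = Nat.card ↥((MulAut.conj : G →* MulAut G).range) := by
    rw [Subgroup.index_eq_card, ← conj_ker_eq_center]
    exact Nat.card_congr (QuotientGroup.quotientKerEquivRange _).toEquiv
  -- lower bound
  have hlow : N^2 ≤ (Subgroup.center G).index := by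
    have h1 := Subgroup.relIndex_mul_index hZCa
    calc N^2 = N * N := sq N
    _ ≤ ((Subgroup.center G).relIndex Ca) * Ca.index := Nat.mul_le_mul hinj2 hinj1
    _ = (Subgroup.center G).index := h1
  haveI : Finite (MulAut G) :=
    Finite.of_injective (fun (e : MulAut G) => (e : G → G))
      (fun e1 e2 h => by ext x; exact congrFun h x)
  have hcardInn_le : Nat.card ↥((MulAut.conj : G →* MulAut G).range)
      ≤ Nat.card ↥(autC G) := Subgroup.card_le_of_le hinn
  have hlow2 : N^2 ≤ Nat.card ↥(autC G) := by
    calc N^2 ≤ (Subgroup.center G).index := hlow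
    _ = Nat.card ↥((MulAut.conj : G →* MulAut G).range) := hindex
    _ ≤ Nat.card ↥(autC G) := hcardInn_le
  have heq1 : Nat.card ↥(autC G) = N^2 := le_antisymm hup hlow2
  have hcr : Nat.card ↥((MulAut.conj : G →* MulAut G).range) = N^2 :=
    le_antisymm (hcardInn_le.trans_eq heq1) (hlow.trans_eq hindex)
  refine ⟨heq1, ?_⟩
  exact (Subgroup.eq_of_le_of_card_ge hinn (by rw [heq1, hcr])).symm
end

section
/- Let G = ⟨x, y⟩ be a 2-generator finite p-group whose commutator subgroup γ₂(G) = ⟨u⟩ is cyclic of order p^r, and assume that either p is odd, or p = 2 and [u,G] ⊆ ⟨u⁴⟩. Then γ₂(G) = { [x, y^k] : 0 ≤ k < p^r }. -/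
open Finset
open scoped commutatorElement

lemma gsum_mul_s14 (s : ℤ) (a : ℕ) : ∀ b : ℕ,
    ∑ i ∈ range (a*b), s^i = (∑ i ∈ range a, s^i) * ∑ i ∈ range b, (s^a)^i := by
  intro b
  induction b with
  | zero => simp
  | succ b ih =>
    rw [Nat.mul_succ, Finset.sum_range_add, ih, Finset.sum_range_succ]
    have : ∑ i ∈ range a, s ^ (a*b + i) = (s^a)^b * ∑ i ∈ range a, s^i := by
      rw [Finset.mul_sum]
      refine Finset.sum_congr rfl fun i _ => ?_
      rw [pow_add, pow_mul]
    rw [this]; ring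

lemma binom_approx (d : ℤ) : ∀ i : ℕ, d^2 ∣ (1+d)^i - 1 - i*d := by
  intro i
  induction i with
  | zero => simp
  | succ i ih =>
    have h : (1+d)^(i+1) - 1 - ((i:ℤ)+1)*d
        = (1+d) * ((1+d)^i - 1 - i*d) + (i * d) * d := by ring
    have : ((i+1 : ℕ) : ℤ) = (i:ℤ)+1 := by push_cast; ring
    rw [this, h]
    exact dvd_add (Dvd.dvd.mul_left ih _) ⟨(i:ℤ), by ring⟩

-- σ_s(p) ≡ p mod p²
lemma gsum_p {p : ℕ} (hp : p.Prime) (s : ℤ) (hs1 : (p:ℤ) ∣ s - 1)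
    (hs4 : p = 2 → (4:ℤ) ∣ s - 1) :
    ((p:ℤ)^2) ∣ (∑ i ∈ range p, s^i) - p := by
  set d : ℤ := s - 1 with hd
  have hsd : s = 1 + d := by ring
  set T : ℤ := ∑ i ∈ range p, (i:ℤ) with hT
  have h1 : d^2 ∣ (∑ i ∈ range p, s^i) - p - d*T := by
    have : (∑ i ∈ range p, s^i) - p - d*T = ∑ i ∈ range p, ((1+d)^i - 1 - i*d) := by
      rw [Finset.sum_sub_distrib, Finset.sum_sub_distrib, hsd, Finset.mul_sum]
      simp [mul_comm]
    rw [this]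
    exact Finset.dvd_sum fun i _ => binom_approx d i
  have hd2 : ((p:ℤ)^2) ∣ d^2 := pow_dvd_pow_of_dvd hs1 2
  have h2 : ((p:ℤ)^2) ∣ d*T := by
    rcases Nat.Prime.eq_two_or_odd' hp with h2 | hodd
    · have : T = 1 := by rw [hT, h2]; decide
      rw [this, mul_one]
      calc ((p:ℤ)^2) = 4 := by rw [h2]; norm_num
        _ ∣ d := hs4 h2
    · -- p odd: p ∣ T
      obtain ⟨k, hk⟩ := hodd
      have hTn : (∑ i ∈ range p, i) = p * k := by
        have h := Finset.sum_range_id_mul_two p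
        have : p - 1 = 2*k := by omega
        rw [this] at h
        have h2' : p * (2*k) = (p*k)*2 := by ring
        omega
      have hpT : (p:ℤ) ∣ T := by
        have : T = ((∑ i ∈ range p, i : ℕ) : ℤ) := by rw [hT]; push_cast; rfl
        rw [this, hTn]
        push_cast
        exact Dvd.intro _ rfl
      rw [pow_two]
      exact mul_dvd_mul hs1 hpT
  have h3 : ((p:ℤ)^2) ∣ ((∑ i ∈ range p, s^i) - p - d*T) := hd2.trans h1
  simpa using dvd_add h3 h2

lemma key_dvd {p : ℕ} (hp : p.Prime) :
    ∀ (j : ℕ) (s : ℤ), (p:ℤ) ∣ s - 1 → (p = 2 → (4:ℤ) ∣ s - 1) →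
    ∀ m : ℕ, (p:ℤ)^j ∣ ∑ i ∈ range m, s^i → (p:ℤ)^j ∣ (m:ℤ) := by
  have hpI : Prime (p:ℤ) := Nat.prime_iff_prime_int.1 hp
  intro j
  induction j with
  | zero => intro s _ _ m _; simpa using one_dvd _
  | succ j ih =>
    intro s hs1 hs4 m hdvd
    have hσm : (p:ℤ) ∣ (∑ i ∈ range m, s^i) - m := by
      have : (∑ i ∈ range m, s^i) - m = ∑ i ∈ range m, (s^i - 1) := by
        rw [Finset.sum_sub_distrib]; simp
      rw [this]
      refine Finset.dvd_sum fun i _ => hs1.trans ?_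
      simpa using sub_dvd_pow_sub_pow s 1 i
    have h1 : (p:ℤ) ∣ ∑ i ∈ range m, s^i :=
      (dvd_pow_self (p:ℤ) (Nat.succ_ne_zero j)).trans hdvd
    have hpm : (p:ℤ) ∣ (m:ℤ) := by
      have := dvd_sub h1 hσm
      simpa using this
    obtain ⟨m', hm'⟩ : p ∣ m := Int.ofNat_dvd.mp (by exact_mod_cast hpm)
    -- write σ_s p = p * w with p ∤ w
    obtain ⟨t, ht⟩ := gsum_p hp s hs1 hs4
    set w : ℤ := 1 + p*t with hw
    have hσp : ∑ i ∈ range p, s^i = p * w := by rw [hw]; linear_combination ht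
    have hpw : ¬ (p:ℤ) ∣ w := by
      intro h
      exact hpI.not_dvd_one (by simpa [hw] using (dvd_sub h ⟨t, rfl⟩))
    -- factor
    have hfac : ∑ i ∈ range m, s^i = (p * w) * ∑ i ∈ range m', (s^p)^i := by
      rw [hm', gsum_mul_s14, hσp]
    rw [hfac] at hdvd
    have hp0 : (p:ℤ) ≠ 0 := by exact_mod_cast hp.ne_zero
    have hdvd2 : (p:ℤ)^j ∣ w * ∑ i ∈ range m', (s^p)^i := by
      have h : (p:ℤ) * (p:ℤ)^j ∣ (p:ℤ) * (w * ∑ i ∈ range m', (s^p)^i) := by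
        rw [← pow_succ']; rw [mul_assoc] at hdvd; exact hdvd
      exact (mul_dvd_mul_iff_left hp0).mp h
    have hcop : IsCoprime ((p:ℤ)^j) w :=
      (IsCoprime.pow_left ((Prime.coprime_iff_not_dvd hpI).mpr hpw))
    have hdvd3 : (p:ℤ)^j ∣ ∑ i ∈ range m', (s^p)^i := hcop.dvd_of_dvd_mul_left hdvd2
    -- IH with s^p
    have hs1' : (p:ℤ) ∣ s^p - 1 := hs1.trans (by simpa using sub_dvd_pow_sub_pow s 1 p)
    have hs4' : p = 2 → (4:ℤ) ∣ s^p - 1 := by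
      intro h2; subst h2
      have : s^2 - 1 = (s-1)*(s+1) := by ring
      rw [this]
      exact (hs4 rfl).mul_right _
    have := ih (s^p) hs1' hs4' m' hdvd3
    rw [hm']
    push_cast
    rw [pow_succ']
    exact mul_dvd_mul_left _ this


lemma ab_of_gen {Q : Type*} [Group Q] {a b : Q} (hgen : Subgroup.closure {a, b} = ⊤)
    (hab : a * b = b * a) : ∀ g h : Q, g * h = h * g := by
  have key : ∀ c : Q, a * c = c * a → b * c = c * b → ∀ g : Q, g * c = c * g := by
    intro c hca hcb g
    have hle : Subgroup.closure {a, b} ≤ Subgroup.centralizer {c} := by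
      rw [Subgroup.closure_le]
      rintro z (rfl | rfl) <;> rw [SetLike.mem_coe, Subgroup.mem_centralizer_iff] <;>
        rintro w rfl
      · exact hca.symm
      · exact hcb.symm
    rw [hgen] at hle
    exact (hle (Subgroup.mem_top g) c rfl).symm
  have ha : ∀ g : Q, g * a = a * g := key a rfl hab.symm
  have hb : ∀ g : Q, g * b = b * g := key b hab rfl
  intro g h
  exact (key g (ha g).symm (hb g).symm h).symm

lemma commutator_le_of_gen {G : Type*} [Group G] {x y : G} (hgen : Subgroup.closure {x, y} = ⊤)
    (K : Subgroup G) (hK : K.Normal) (hxy : x⁻¹ * y⁻¹ * x * y ∈ K) :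
    commutator G ≤ K := by
  let Q := G ⧸ K
  let f : G →* Q := QuotientGroup.mk' K
  have hsurj : Function.Surjective f := QuotientGroup.mk'_surjective K
  have hgenQ : Subgroup.closure {f x, f y} = ⊤ := by
    have hmap : Subgroup.map f (Subgroup.closure ({x, y} : Set G))
        = Subgroup.closure {f x, f y} := by
      rw [MonoidHom.map_closure]; congr 1; simp [Set.image_insert_eq]
    rw [← hmap, hgen]
    exact Subgroup.map_top_of_surjective f hsurj
  have hfxy : f x * f y = f y * f x := by
    have h1 : f (x⁻¹ * y⁻¹ * x * y) = 1 := (QuotientGroup.eq_one_iff _).mpr hxy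
    have h2 : (f x)⁻¹ * (f y)⁻¹ * f x * f y = 1 := by
      simpa [map_mul, map_inv] using h1
    calc f x * f y = (f y * f x) * ((f x)⁻¹ * (f y)⁻¹ * f x * f y) := by group
      _ = f y * f x := by rw [h2, mul_one]
  have hQab := ab_of_gen hgenQ hfxy
  rw [commutator_def, Subgroup.commutator_le]
  intro g _ h _
  refine (QuotientGroup.eq_one_iff _).mp ?_
  show f ⁅g, h⁆ = 1
  rw [commutatorElement_def]
  simp only [map_mul, map_inv]
  rw [hQab (f g) (f h)]
  group


/-- Cheng's lemma: if `G = ⟨x,y⟩` is a 2-generator finite p-group with cyclic commutator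
subgroup `γ₂(G) = ⟨u⟩` of order `p^r`, and either `p` is odd or `p = 2` and
`[u,G] ⊆ ⟨u⁴⟩`, then `γ₂(G) = {[x, y^k] : 0 ≤ k < p^r}`. -/
theorem stmt_14 {p r : ℕ} {G : Type*} [Group G] [Finite G] (hp : p.Prime) (hpG : IsPGroup p G)
    (x y u : G) (hgen : Subgroup.closure {x, y} = ⊤)
    (hcomm : commutator G = Subgroup.zpowers u) (hr : 0 < r) (hord : orderOf u = p ^ r)
    (hcase : Odd p ∨ (p = 2 ∧ ∀ g : G, u⁻¹ * g⁻¹ * u * g ∈ Subgroup.zpowers (u ^ 4))) :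
    (commutator G : Set G) =
      {z : G | ∃ k : ℕ, k < p ^ r ∧ z = x⁻¹ * (y ^ k)⁻¹ * x * y ^ k} := by
  classical
  have hpI : Prime (p:ℤ) := Nat.prime_iff_prime_int.1 hp
  have hu_mem : u ∈ commutator G := by rw [hcomm]; exact Subgroup.mem_zpowers u
  have hnorm : (Subgroup.zpowers u).Normal := by rw [← hcomm]; infer_instance
  have hconj : ∀ g : G, ∃ m : ℤ, g * u * g⁻¹ = u ^ m := by
    intro g
    have h := hnorm.conj_mem u (Subgroup.mem_zpowers u) g
    obtain ⟨m, hm⟩ := Subgroup.mem_zpowers_iff.mp h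
    exact ⟨m, hm.symm⟩
  have hconjpow : ∀ (g : G) (t : ℤ), g * u * g⁻¹ = u ^ t →
      ∀ m : ℤ, g * u ^ m * g⁻¹ = u ^ (t * m) := by
    intro g t h m
    have h2 : g * u ^ m * g⁻¹ = (g * u * g⁻¹) ^ m := by
      have h3 := map_zpow (MulAut.conj g) u m
      simpa [MulAut.conj_apply] using h3.symm
    rw [h2, h, ← zpow_mul, mul_comm]
  have hordZ : ∀ m : ℤ, u ^ m = 1 ↔ ((p:ℤ)^r) ∣ m := by
    intro m
    rw [← orderOf_dvd_iff_zpow_eq_one, hord]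
    constructor
    · intro h; exact_mod_cast h
    · intro h; exact_mod_cast h
  have hiff : ∀ a b : ℤ, u ^ a = u ^ b ↔ ((p:ℤ)^r) ∣ (a - b) := by
    intro a b
    rw [← hordZ (a - b)]
    constructor
    · intro h; rw [zpow_sub, h]; simp
    · intro h
      have h2 : u ^ a = u ^ (a - b) * u ^ b := by rw [← zpow_add]; congr 1; ring
      rw [h2, h, one_mul]
  -- conjugation of u by y
  obtain ⟨s₀, hs₀⟩ : ∃ m : ℤ, y⁻¹ * u * y = u ^ m := by
    obtain ⟨m, hm⟩ := hconj y⁻¹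
    exact ⟨m, by simpa using hm⟩
  obtain ⟨s, hs_conj, hs1, hs4⟩ : ∃ s : ℤ, y⁻¹ * u * y = u ^ s ∧ (p:ℤ) ∣ s - 1 ∧
      (p = 2 → (4:ℤ) ∣ s - 1) := by
    obtain ⟨n, hn⟩ := hpG y
    have hyconj₀ : ∀ m : ℤ, y⁻¹ * u ^ m * y = u ^ (s₀ * m) := by
      intro m
      have := hconjpow y⁻¹ s₀ (by simpa using hs₀) m
      simpa using this
    have hiter : ∀ k : ℕ, (y^k)⁻¹ * u * y^k = u ^ (s₀ ^ k) := by
      intro k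
      induction k with
      | zero => simp
      | succ k ih =>
        have h1 : (y^(k+1))⁻¹ * u * y^(k+1) = y⁻¹ * ((y^k)⁻¹ * u * y^k) * y := by
          rw [pow_succ]; group
        rw [h1, ih, hyconj₀, pow_succ, mul_comm]
    have hu_eq : u ^ (s₀ ^ (p^n) - 1) = 1 := by
      have h2 := hiter (p^n)
      rw [hn] at h2
      simp only [inv_one, one_mul, mul_one] at h2
      rw [zpow_sub, ← h2, zpow_one]
      simp
    have hdvd1 : ((p:ℤ)^r) ∣ s₀ ^ (p^n) - 1 := (hordZ _).mp hu_eq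
    have hp1 : (p:ℤ) ∣ s₀ ^ (p^n) - 1 := (dvd_pow_self (p:ℤ) hr.ne').trans hdvd1
    have hs₀1 : (p:ℤ) ∣ s₀ - 1 := by
      haveI : Fact p.Prime := ⟨hp⟩
      have hzm : ((s₀ : ZMod p)) ^ (p^n) = 1 := by
        have h3 := (ZMod.intCast_zmod_eq_zero_iff_dvd _ p).mpr hp1
        push_cast at h3
        linear_combination h3
      have frob : ∀ (z : ZMod p) (k : ℕ), z ^ (p^k) = z := by
        intro z k
        induction k with
        | zero => simp
        | succ k ih => rw [pow_succ, pow_mul, ih, ZMod.pow_card]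
      have h4 : ((s₀ : ZMod p)) = 1 := by rw [← frob (s₀ : ZMod p) n]; exact hzm
      have h5 := (ZMod.intCast_zmod_eq_zero_iff_dvd (s₀ - 1) p).mp (by push_cast [h4]; ring)
      exact h5
    rcases hcase with hodd | ⟨h2, hu4⟩
    · refine ⟨s₀, hs₀, hs₀1, fun h => absurd hodd (by rw [h]; decide)⟩
    · have hmem := hu4 y
      have he : u⁻¹ * y⁻¹ * u * y = u ^ (s₀ - 1) := by
        have h6 : u⁻¹ * y⁻¹ * u * y = u⁻¹ * (y⁻¹ * u * y) := by group
        rw [h6, hs₀, ← zpow_neg_one, ← zpow_add]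
        congr 1; ring
      rw [he] at hmem
      obtain ⟨t, ht⟩ := Subgroup.mem_zpowers_iff.mp hmem
      have ht' : u ^ ((4:ℤ) * t) = u ^ (s₀ - 1) := by
        rw [← ht, ← zpow_natCast u 4, ← zpow_mul]
        norm_num
      have hdvd2 : ((p:ℤ)^r) ∣ (4*t - (s₀ - 1)) := (hiff _ _).mp ht'
      refine ⟨1 + 4*t, ?_, ?_, ?_⟩
      · rw [hs₀]
        rw [hiff]
        have h7 : (p:ℤ) ∣ 4 := by rw [h2]; norm_num
        calc ((p:ℤ)^r) ∣ (4*t - (s₀ - 1)) := hdvd2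
          _ ∣ _ := ⟨-1, by ring⟩
      · rw [h2]; push_cast; exact ⟨2*t, by ring⟩
      · intro _; exact ⟨t, by ring⟩
  -- the basic commutator w = [x,y] = u^c
  have hw_mem : x⁻¹ * y⁻¹ * x * y ∈ commutator G := by
    have hwe : x⁻¹ * y⁻¹ * x * y = ⁅x⁻¹, y⁻¹⁆ := by
      rw [commutatorElement_def]; group
    rw [hwe, commutator_def]
    exact Subgroup.commutator_mem_commutator (Subgroup.mem_top _) (Subgroup.mem_top _)
  obtain ⟨c, hc⟩ : ∃ c : ℤ, x⁻¹ * y⁻¹ * x * y = u ^ c := by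
    rw [hcomm] at hw_mem
    obtain ⟨c, hc⟩ := Subgroup.mem_zpowers_iff.mp hw_mem
    exact ⟨c, hc.symm⟩
  -- p does not divide c
  have hpc : ¬ (p:ℤ) ∣ c := by
    intro hdvdc
    obtain ⟨c', rfl⟩ := hdvdc
    set K := Subgroup.zpowers (u ^ (p:ℕ)) with hK
    have hKnormal : K.Normal := by
      constructor
      intro nn hnn g
      obtain ⟨t, ht⟩ := Subgroup.mem_zpowers_iff.mp hnn
      obtain ⟨m, hm⟩ := hconj g
      refine Subgroup.mem_zpowers_iff.mpr ⟨m*t, ?_⟩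
      rw [← ht]
      have h1 : (u ^ (p:ℕ)) ^ t = u ^ ((p:ℤ)*t) := by
        rw [← zpow_natCast u p, ← zpow_mul]
      rw [h1, hconjpow g m hm ((p:ℤ)*t), ← zpow_natCast u p, ← zpow_mul]
      congr 1; ring
    have hwK : x⁻¹ * y⁻¹ * x * y ∈ K := by
      rw [hc]
      refine Subgroup.mem_zpowers_iff.mpr ⟨c', ?_⟩
      rw [← zpow_natCast u p, ← zpow_mul]
    have hle := commutator_le_of_gen hgen K hKnormal hwK
    obtain ⟨t, ht⟩ := Subgroup.mem_zpowers_iff.mp (hle hu_mem)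
    have h2 : u ^ ((p:ℤ)*t - 1) = 1 := by
      rw [zpow_sub, ← zpow_natCast u p, ← zpow_mul] at *
      rw [ht]; simp
    have h3 := (hordZ _).mp h2
    have h4 : (p:ℤ) ∣ (p:ℤ)*t - 1 := (dvd_pow_self (p:ℤ) hr.ne').trans h3
    have h5 : (p:ℤ) ∣ 1 := by
      have := dvd_sub (⟨t, rfl⟩ : (p:ℤ) ∣ (p:ℤ)*t) h4
      simpa using this
    exact hpI.not_dvd_one h5
  -- conjugation by powers of y
  have hyconj : ∀ m : ℤ, y⁻¹ * u ^ m * y = u ^ (s * m) := by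
    intro m
    have := hconjpow y⁻¹ s (by simpa using hs_conj) m
    simpa using this
  have hyk : ∀ k : ℕ, (y^k)⁻¹ * u * y^k = u ^ (s ^ k) := by
    intro k
    induction k with
    | zero => simp
    | succ k ih =>
      have h1 : (y^(k+1))⁻¹ * u * y^(k+1) = y⁻¹ * ((y^k)⁻¹ * u * y^k) * y := by
        rw [pow_succ]; group
      rw [h1, ih, hyconj, pow_succ, mul_comm]
  have hykm : ∀ (k : ℕ) (m : ℤ), (y^k)⁻¹ * u ^ m * y^k = u ^ (s ^ k * m) := by
    intro k m
    have h0 : (y^k)⁻¹ * u * ((y^k)⁻¹)⁻¹ = u ^ (s^k) := by simpa using hyk k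
    have := hconjpow ((y^k)⁻¹) (s^k) h0 m
    simpa using this
  set σ : ℕ → ℤ := fun k => ∑ i ∈ Finset.range k, s^i with hσ
  have hform : ∀ k : ℕ, x⁻¹ * (y^k)⁻¹ * x * y^k = u ^ (c * σ k) := by
    intro k
    induction k with
    | zero => simp [hσ]
    | succ k ih =>
      have h1 : x⁻¹ * (y^(k+1))⁻¹ * x * y^(k+1)
          = (x⁻¹ * (y^k)⁻¹ * x * y^k) * ((y^k)⁻¹ * (x⁻¹ * y⁻¹ * x * y) * y^k) := by
        rw [pow_succ]; group
      rw [h1, ih, hc, hykm k c, ← zpow_add]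
      congr 1
      rw [hσ]
      simp only [Finset.sum_range_succ]
      ring
  -- injectivity of exponents
  have hcop_c : IsCoprime ((p:ℤ)^r) c :=
    IsCoprime.pow_left ((Prime.coprime_iff_not_dvd hpI).mpr hpc)
  have hs_unit : ¬ (p:ℤ) ∣ s := by
    intro h
    have : (p:ℤ) ∣ 1 := by simpa using dvd_sub h hs1
    exact hpI.not_dvd_one this
  have hcop_s : ∀ j : ℕ, IsCoprime ((p:ℤ)^r) (s^j) := fun j =>
    IsCoprime.pow ((Prime.coprime_iff_not_dvd hpI).mpr hs_unit)
  have hinj_aux : ∀ {a b : ℕ}, b ≤ a → a < p^r → u ^ (c * σ a) = u ^ (c * σ b) → a = b := by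
    intro a b hba ha heq
    obtain ⟨e, rfl⟩ : ∃ e, a = b + e := ⟨a - b, by omega⟩
    have hsplit : σ (b+e) - σ b = s^b * ∑ i ∈ Finset.range e, s^i := by
      rw [hσ]
      simp only [Finset.sum_range_add]
      rw [Finset.mul_sum]
      have : ∀ i, s ^ (b + i) = s^b * s^i := fun i => pow_add s b i
      simp only [this]
      ring
    have hd : ((p:ℤ)^r) ∣ c * (s^b * ∑ i ∈ Finset.range e, s^i) := by
      have := (hiff _ _).mp heq
      rw [← mul_sub, hsplit] at this
      exact this
    have hd2 := hcop_c.dvd_of_dvd_mul_left hd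
    have hd3 := (hcop_s b).dvd_of_dvd_mul_left hd2
    have hd4 := key_dvd hp r s hs1 hs4 e hd3
    have hd5 : (p^r : ℕ) ∣ e := by exact_mod_cast hd4
    have he0 : e = 0 := by
      rcases Nat.eq_zero_or_pos e with h | h
      · exact h
      · exact absurd (Nat.le_of_dvd h hd5) (by omega)
    omega
  -- surjectivity by counting
  have hcard : Nat.card (Subgroup.zpowers u) = p^r := by rw [Nat.card_zpowers, hord]
  let F : Fin (p^r) → Subgroup.zpowers u := fun k =>
    ⟨u ^ (c * σ (k:ℕ)), Subgroup.mem_zpowers_iff.mpr ⟨c * σ (k:ℕ), rfl⟩⟩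
  have hFinj : Function.Injective F := by
    intro a b hab
    have heq : u ^ (c * σ (a:ℕ)) = u ^ (c * σ (b:ℕ)) := congrArg Subtype.val hab
    rcases le_total (b:ℕ) (a:ℕ) with h | h
    · exact Fin.ext (hinj_aux h a.isLt heq)
    · exact (Fin.ext (hinj_aux h b.isLt heq.symm)).symm
  have hFbij : Function.Bijective F :=
    (Nat.bijective_iff_injective_and_card F).mpr ⟨hFinj, by simp [hcard]⟩
  -- conclusion
  ext z
  simp only [SetLike.mem_coe, Set.mem_setOf_eq]
  constructor
  · intro hz
    rw [hcomm] at hz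
    obtain ⟨k, hk⟩ := hFbij.2 ⟨z, hz⟩
    refine ⟨(k:ℕ), k.isLt, ?_⟩
    rw [hform (k:ℕ)]
    exact (congrArg Subtype.val hk).symm
  · rintro ⟨k, hk, rfl⟩
    rw [hform k, hcomm]
    exact Subgroup.mem_zpowers_iff.mpr ⟨c * σ k, rfl⟩
end

section
/- Let p be a prime and let A₁, …, A_n be strongly skew-symmetric m×m matrices over F_p such that every nontrivial F_p-linear combination ψ₁A₁ + ⋯ + ψ_nA_n (with not all ψ_i zero) is nonsingular, with n ≥ 1. Then m is even and m ≥ 2n. -/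
open MvPolynomial Matrix



lemma two_mul_totalDegree_le_sq {F : Type*} [CommRing F] [IsDomain F] {σ : Type*}
    (h : MvPolynomial σ F) (hne : h ≠ 0) :
    2 * h.totalDegree ≤ (h * h).totalDegree := by
  classical
  set t := h.totalDegree with ht
  obtain ⟨d, hd, hdeg⟩ : ∃ d ∈ h.support, (d.sum fun _ e => e) = t :=
    Finset.exists_mem_eq_sup _ (support_nonempty.2 hne) _ |>.imp
      (fun d hd => ⟨hd.1, hd.2.symm⟩)
  have hddeg : d.degree = t := by rw [← hdeg]; rfl
  set ct := homogeneousComponent t h with hct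
  have hctne : ct ≠ 0 := by
    intro h0
    have := coeff_homogeneousComponent t h d
    rw [← hct, h0, hddeg, if_pos rfl] at this
    exact (mem_support_iff.1 hd) this.symm
  have hmem : ∀ a b : ℕ, homogeneousComponent a h * homogeneousComponent b h ∈
      homogeneousSubmodule σ F (a + b) := fun a b =>
    (mem_homogeneousSubmodule _ _).2
      ((homogeneousComponent_isHomogeneous a h).mul (homogeneousComponent_isHomogeneous b h))
  have hkey : homogeneousComponent (2 * t) (h * h) = ct * ct := by
    conv_lhs => rw [← sum_homogeneousComponent h, ← ht, Finset.sum_mul_sum, map_sum]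
    rw [Finset.sum_eq_single t]
    · rw [map_sum, Finset.sum_eq_single t]
      · rw [homogeneousComponent_of_mem (hmem t t), if_pos (by omega)]
      · intro b hb hbne
        rw [Finset.mem_range] at hb
        rw [homogeneousComponent_of_mem (hmem t b), if_neg (by omega)]
      · intro habs
        exact absurd (Finset.self_mem_range_succ t) habs
    · intro a ha hane
      rw [Finset.mem_range] at ha
      rw [map_sum, Finset.sum_eq_zero]
      intro b hb
      rw [Finset.mem_range] at hb
      rw [homogeneousComponent_of_mem (hmem a b), if_neg (by omega)]
    · intro habs
      exact absurd (Finset.self_mem_range_succ t) habs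
  by_contra hlt
  push_neg at hlt
  have : homogeneousComponent (2 * t) (h * h) = 0 :=
    homogeneousComponent_eq_zero _ _ hlt
  rw [hkey] at this
  exact mul_ne_zero hctne hctne this


lemma alt_det_sq {F : Type*} [Field F] :
    ∀ m : ℕ, ∀ M : Matrix (Fin m) (Fin m) F,
    (∀ i j, M j i = - M i j) → (∀ i, M i i = 0) → M.det ≠ 0 →
    Even m ∧ ∃ d : F, M.det = d ^ 2 := by
  intro m
  induction m using Nat.strong_induction_on with
  | _ m IH =>
  match m with
  | 0 => intro M _ _ _; exact ⟨Even.zero, 1, by simp⟩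
  | 1 => intro M _ hdiag hdet; exact absurd (by rw [Matrix.det_fin_one, hdiag]) hdet
  | (k+2) =>
    intro M hskew hdiag hdet
    obtain ⟨j, hj⟩ : ∃ j, M 0 j ≠ 0 := by
      by_contra hall
      push_neg at hall
      exact hdet (Matrix.det_eq_zero_of_row_eq_zero 0 hall)
    have hj0 : j ≠ 0 := fun h => hj (h ▸ hdiag 0)
    set c : F := M 0 j with hc
    let e : Fin 2 ⊕ Fin k ≃ Fin (k+2) :=
      (finSumFinEquiv.trans (finCongr (Nat.add_comm 2 k)))
    have he0 : e (Sum.inl 0) = 0 := rfl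
    have he1 : e (Sum.inl 1) = 1 := rfl
    let σ : Fin 2 ⊕ Fin k ≃ Fin (k+2) := e.trans (Equiv.swap 1 j)
    have hσ0 : σ (Sum.inl 0) = 0 := by
      simp only [σ, Equiv.trans_apply, he0]
      exact Equiv.swap_apply_of_ne_of_ne (by simp) (Ne.symm hj0)
    have hσ1 : σ (Sum.inl 1) = j := by
      simp only [σ, Equiv.trans_apply, he1, Equiv.swap_apply_left]
    set M' := M.submatrix σ σ with hM'
    set A := M'.toBlocks₁₁ with hA
    set B := M'.toBlocks₁₂ with hB
    set C := M'.toBlocks₂₁ with hC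
    set D := M'.toBlocks₂₂ with hD
    have hAe : ∀ a b, A a b = M (σ (Sum.inl a)) (σ (Sum.inl b)) := fun a b => rfl
    have hA00 : A 0 0 = 0 := by rw [hAe, hσ0, hdiag]
    have hA01 : A 0 1 = c := by rw [hAe, hσ0, hσ1, hc]
    have hA10 : A 1 0 = -c := by rw [hAe, hσ0, hσ1, hc, hskew]
    have hA11 : A 1 1 = 0 := by rw [hAe, hσ1, hdiag]
    set X : Matrix (Fin 2) (Fin 2) F := !![0, -c⁻¹; c⁻¹, 0] with hX
    have hXA : X * A = 1 := by
      ext i i'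
      fin_cases i <;> fin_cases i' <;>
        simp [hX, Matrix.mul_apply, Fin.sum_univ_two, hA00, hA01, hA10, hA11,
          inv_mul_cancel₀ hj, mul_comm]
    have hAX : A * X = 1 := by
      ext i i'
      fin_cases i <;> fin_cases i' <;>
        simp [hX, Matrix.mul_apply, Fin.sum_univ_two, hA00, hA01, hA10, hA11,
          mul_inv_cancel₀ hj, mul_comm]
    letI : Invertible A := ⟨X, hXA, hAX⟩
    have hdetA : A.det = c ^ 2 := by
      rw [Matrix.det_fin_two, hA00, hA01, hA10, hA11]; ring
    set N := D - C * X * B with hN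
    have hdetM : M.det = c ^ 2 * N.det := by
      have h1 : M.det = M'.det := (Matrix.det_submatrix_equiv_self σ M).symm
      have h2 : M' = Matrix.fromBlocks A B C D := (Matrix.fromBlocks_toBlocks M').symm
      rw [h1, h2, Matrix.det_fromBlocks₁₁, hdetA]
      rfl
    have hCB : ∀ (a : Fin 2) (i : Fin k), C i a = - B a i := fun a i => hskew _ _
    have hDskew : ∀ i i', D i' i = - D i i' := fun i i' => hskew _ _
    have hDdiag : ∀ i, D i i = 0 := fun i => hdiag _
    have hCXB : ∀ i i', (C * X * B) i i' =
        C i 0 * (-c⁻¹) * B 1 i' + C i 1 * c⁻¹ * B 0 i' := by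
      intro i i'
      simp [Matrix.mul_apply, Fin.sum_univ_two, hX, Finset.sum_mul]
      ring
    have hNskew : ∀ i i', N i' i = - N i i' := by
      intro i i'
      simp only [hN, Matrix.sub_apply, hCXB, hCB, hDskew i i']
      ring
    have hNdiag : ∀ i, N i i = 0 := by
      intro i
      simp only [hN, Matrix.sub_apply, hCXB, hCB, hDdiag]
      ring
    have hNdet : N.det ≠ 0 := by
      intro h0
      rw [hdetM, h0, mul_zero] at hdet
      exact hdet rfl
    obtain ⟨hEven, d, hd⟩ := IH k (by omega) N hNskew hNdiag hNdet
    refine ⟨?_, c * d, ?_⟩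
    · rw [Nat.even_add_one] at *
      rw [Nat.even_iff] at *
      omega
    · rw [hdetM, hd]; ring

/-- If `A 1, …, A n` (`n ≥ 1`) are strongly skew-symmetric `m × m` matrices (`m ≥ 1`)
over `F_p` such that every nontrivial linear combination `∑ ψ k • A k` is nonsingular,
then `m` is even and `m ≥ 2n`. -/
theorem stmt_15 {p : ℕ} [Fact p.Prime] {m n : ℕ} (hm : 0 < m) (hn : 1 ≤ n)
    (A : Fin n → Matrix (Fin m) (Fin m) (ZMod p))
    (hskew : ∀ k, ∀ i j : Fin m, i ≠ j → A k i j = - A k j i)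
    (hdiag : ∀ k, ∀ i : Fin m, A k i i = 0)
    (hns : ∀ ψ : Fin n → ZMod p, ψ ≠ 0 → IsUnit (∑ k, ψ k • A k).det) :
    Even m ∧ 2 * n ≤ m := by
  classical
  set R := MvPolynomial (Fin n) (ZMod p) with hR
  set P : Matrix (Fin m) (Fin m) R :=
    Matrix.of (fun i j => ∑ k, MvPolynomial.C (A k i j) * MvPolynomial.X k) with hP
  have hPe : ∀ i j, P i j = ∑ k, MvPolynomial.C (A k i j) * MvPolynomial.X k :=
    fun i j => rfl
  have hPdiag : ∀ i, P i i = 0 := by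
    intro i; rw [hPe]
    simp [hdiag]
  have hPskew : ∀ i j, P j i = - P i j := by
    intro i j
    by_cases hij : i = j
    · subst hij; rw [hPdiag]; simp
    · rw [hPe, hPe, ← Finset.sum_neg_distrib]
      refine Finset.sum_congr rfl fun k _ => ?_
      rw [hskew k _ _ (Ne.symm hij)]
      simp
  -- evaluation
  have hmap : ∀ ψ : Fin n → ZMod p, P.map (MvPolynomial.eval ψ) = ∑ k, ψ k • A k := by
    intro ψ
    ext i j
    simp [hPe, Matrix.sum_apply, mul_comm]
  have hevaldet : ∀ ψ : Fin n → ZMod p,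
      MvPolynomial.eval ψ P.det = (∑ k, ψ k • A k).det := by
    intro ψ
    rw [RingHom.map_det, RingHom.mapMatrix_apply, hmap]
  have hD0 : MvPolynomial.eval (0 : Fin n → ZMod p) P.det = 0 := by
    rw [hevaldet]
    have : (∑ k, (0 : Fin n → ZMod p) k • A k) = 0 := by simp
    rw [this]
    exact (by haveI : Nonempty (Fin m) := ⟨⟨0, hm⟩⟩; exact Matrix.det_zero)
  have hDψ : ∀ ψ : Fin n → ZMod p, ψ ≠ 0 → MvPolynomial.eval ψ P.det ≠ 0 := by
    intro ψ hψ
    rw [hevaldet]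
    exact (hns ψ hψ).ne_zero
  have hDne : P.det ≠ 0 := by
    intro h0
    have hψ1 : (fun _ : Fin n => (1 : ZMod p)) ≠ 0 := by
      intro h
      exact one_ne_zero (congrFun h ⟨0, hn⟩)
    exact hDψ _ hψ1 (by rw [h0, map_zero])
  -- degree bound on det
  have hdegP : ∀ i j, (P i j).totalDegree ≤ 1 := by
    intro i j
    rw [hPe]
    refine MvPolynomial.totalDegree_finsetSum_le fun k _ => ?_
    calc (MvPolynomial.C (A k i j) * MvPolynomial.X k).totalDegree
        ≤ (MvPolynomial.C (A k i j)).totalDegree + (MvPolynomial.X k).totalDegree :=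
          MvPolynomial.totalDegree_mul _ _
      _ ≤ 1 := by
          rw [MvPolynomial.totalDegree_C]
          simpa using MvPolynomial.totalDegree_X_le k
  have hdegD : P.det.totalDegree ≤ m := by
    rw [Matrix.det_apply']
    refine MvPolynomial.totalDegree_finsetSum_le fun σ _ => ?_
    calc (Equiv.Perm.sign σ * ∏ i, P (σ i) i : R).totalDegree
        ≤ ((Equiv.Perm.sign σ : ℤ) : R).totalDegree + (∏ i, P (σ i) i).totalDegree :=
          MvPolynomial.totalDegree_mul _ _
      _ ≤ 0 + m := by
          refine add_le_add ?_ ?_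
          · refine le_of_eq ?_
            rcases Int.units_eq_one_or (Equiv.Perm.sign σ) with h | h
            · rw [h]; norm_num [MvPolynomial.totalDegree_one]
            · rw [h]
              have h2 : (((-1 : ℤˣ) : ℤ) : R) = -1 := by push_cast; ring
              rw [h2, MvPolynomial.totalDegree_neg, MvPolynomial.totalDegree_one]
          · refine (MvPolynomial.totalDegree_finset_prod _ _).trans ?_
            calc (∑ i, (P (σ i) i).totalDegree) ≤ ∑ _i : Fin m, 1 :=
                  Finset.sum_le_sum fun i _ => hdegP _ _
              _ = m := by simp
      _ = m := by omega
  -- pass to the fraction field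
  set K := FractionRing R with hK
  have hinj : Function.Injective (algebraMap R K) := IsFractionRing.injective R K
  set MK : Matrix (Fin m) (Fin m) K := P.map (algebraMap R K) with hMK
  have hMKdet : MK.det = algebraMap R K P.det := by
    rw [hMK, ← RingHom.mapMatrix_apply, ← RingHom.map_det]
  have hMKskew : ∀ i j, MK j i = - MK i j := by
    intro i j
    simp only [hMK, Matrix.map_apply, hPskew i j, map_neg]
  have hMKdiag : ∀ i, MK i i = 0 := by
    intro i
    simp only [hMK, Matrix.map_apply, hPdiag i, map_zero]
  have hMKdetne : MK.det ≠ 0 := by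
    rw [hMKdet]
    intro h0
    exact hDne (hinj (by rw [h0, map_zero]))
  obtain ⟨hEven, d, hd⟩ := alt_det_sq m MK hMKskew hMKdiag hMKdetne
  -- d is integral over R, hence comes from R
  have hint : IsIntegral R d := by
    refine ⟨Polynomial.X ^ 2 - Polynomial.C P.det,
      Polynomial.monic_X_pow_sub_C _ two_ne_zero, ?_⟩
    simp only [Polynomial.eval₂_sub, Polynomial.eval₂_X_pow, Polynomial.eval₂_C]
    rw [← hd, hMKdet, sub_self]
  obtain ⟨g, hg⟩ := IsIntegrallyClosed.isIntegral_iff.mp hint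
  have hgg : g * g = P.det := by
    apply hinj
    rw [_root_.map_mul, hg, ← sq, ← hd, hMKdet]
  have hgne : g ≠ 0 := by
    intro h0
    rw [h0, mul_zero] at hgg
    exact hDne hgg.symm
  -- degree of g
  have hdegg : 2 * g.totalDegree ≤ m := by
    have := two_mul_totalDegree_le_sq g hgne
    rw [hgg] at this
    omega
  refine ⟨hEven, ?_⟩
  by_contra hlt
  push_neg at hlt
  have hdeggn : g.totalDegree < Fintype.card (Fin n) := by
    rw [Fintype.card_fin]
    omega
  have hdvd := char_dvd_card_solutions p hdeggn (f := g)
  -- but g has exactly one zero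
  have hzero : ∀ ψ : Fin n → ZMod p, MvPolynomial.eval ψ g = 0 ↔ ψ = 0 := by
    intro ψ
    constructor
    · intro h0
      by_contra hψ
      apply hDψ ψ hψ
      rw [← hgg, _root_.map_mul, h0, mul_zero]
    · rintro rfl
      have h2 : (MvPolynomial.eval (0 : Fin n → ZMod p) g) ^ 2 = 0 := by
        rw [sq, ← _root_.map_mul, hgg, hD0]
      exact pow_eq_zero_iff two_ne_zero |>.mp h2
  have hcard : Fintype.card {x : Fin n → ZMod p // MvPolynomial.eval x g = 0} = 1 := by
    rw [Fintype.card_eq_one_iff]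
    refine ⟨⟨0, (hzero 0).mpr rfl⟩, ?_⟩
    rintro ⟨y, hy⟩
    exact Subtype.ext ((hzero y).mp hy)
  rw [hcard] at hdvd
  exact Nat.Prime.one_lt (Fact.out (p := p.Prime)) |>.ne' (Nat.dvd_one.mp hdvd)
end

section
/- Let L̄ = L̄₁ ⊕ L̄₂ ⊕ L̄₃ be a graded Lie algebra over F_p of nilpotency class 3 satisfying dim L̄₃ = 1, [L̄_i, L̄₁] = L̄_{i+1} for i = 1, 2, [x̄, x̄] = 0 for all x̄, and [L̄₁, ȳ] = L̄₂ for every nonzero ȳ ∈ L̄₁. Let C̄ = { ȳ ∈ L̄₁ : [L̄₂, ȳ] = 0 }. If x̄ ∈ L̄₁ − C̄ and ȳ ∈ C̄ − {0}, then [x̄, ȳ] ≠ 0. -/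
/-- In a graded Lie algebra `L̄ = L̄₁ ⊕ L̄₂ ⊕ L̄₃` over `F_p` of class 3 (encoded by its
bracket maps `b11 : L̄₁ × L̄₁ → L̄₂` and `b21 : L̄₂ × L̄₁ → L̄₃`) with `dim L̄₃ = 1`,
`[L̄₁,L̄₁] = L̄₂`, `[L̄₂,L̄₁] = L̄₃`, `[x̄,x̄] = 0`, and `[L̄₁,ȳ] = L̄₂` for every nonzero
`ȳ ∈ L̄₁`: if `x̄ ∈ L̄₁ − C̄` and `ȳ ∈ C̄ − {0}`, where
`C̄ = {ȳ ∈ L̄₁ : [L̄₂,ȳ] = 0}`, then `[x̄,ȳ] ≠ 0`. -/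
theorem stmt_16 {p : ℕ} [Fact p.Prime]
    {V1 V2 V3 : Type*}
    [AddCommGroup V1] [Module (ZMod p) V1] [AddCommGroup V2] [Module (ZMod p) V2]
    [AddCommGroup V3] [Module (ZMod p) V3]
    [FiniteDimensional (ZMod p) V1] [FiniteDimensional (ZMod p) V2]
    [FiniteDimensional (ZMod p) V3]
    (b11 : V1 →ₗ[ZMod p] V1 →ₗ[ZMod p] V2)
    (b21 : V2 →ₗ[ZMod p] V1 →ₗ[ZMod p] V3)
    (halt : ∀ x : V1, b11 x x = 0)
    (hjac : ∀ x y z : V1, b21 (b11 x y) z + b21 (b11 y z) x + b21 (b11 z x) y = 0)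
    (hdim3 : Module.finrank (ZMod p) V3 = 1)
    (hL2 : Submodule.span (ZMod p) {w : V2 | ∃ x y : V1, w = b11 x y} = ⊤)
    (hL3 : Submodule.span (ZMod p) {w : V3 | ∃ u : V2, ∃ y : V1, w = b21 u y} = ⊤)
    (hsurj : ∀ y : V1, y ≠ 0 → Function.Surjective fun x : V1 => b11 x y) :
    ∀ x : V1, (¬ ∀ u : V2, b21 u x = 0) →
      ∀ y : V1, (∀ u : V2, b21 u y = 0) → y ≠ 0 → b11 x y ≠ 0 := by
  intro x hx y hy hy0 hxy
  apply hx
  intro u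
  obtain ⟨z, hz⟩ := hsurj y hy0 u
  simp only at hz
  have hanti : b11 y x = 0 := by
    have h := halt (x + y)
    simp only [map_add, LinearMap.add_apply, halt, hxy] at h
    simpa using h
  have hj := hjac z y x
  rw [hz] at hj
  have hcx : b21 (b11 x z) y = 0 := hy _
  rw [hanti, hcx, map_zero, LinearMap.zero_apply] at hj
  simpa using hj
end

section
/- Let G be an arbitrary group such that G/Z(G) is finitely generated, say by cosets x₁Z(G), …, x_dZ(G), with each conjugacy class x_i^G finite. Then G/Z(G) is finite, γ₂(G) is finite, and |G/Z(G)| ≤ |γ₂(G)|^d. -/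
open scoped commutatorElement

private lemma comm_congr {G : Type*} [Group G] {a a' b b' : G}
    (ha : (a : G ⧸ Subgroup.center G) = a') (hb : (b : G ⧸ Subgroup.center G) = b') :
    ⁅a, b⁆ = ⁅a', b'⁆ := by
  rw [QuotientGroup.eq] at ha hb
  obtain ⟨z, hz, rfl⟩ : ∃ z ∈ Subgroup.center G, a' = a * z :=
    ⟨a⁻¹ * a', ha, by group⟩
  obtain ⟨w, hw, rfl⟩ : ∃ w ∈ Subgroup.center G, b' = b * w :=
    ⟨b⁻¹ * b', hb, by group⟩
  have hz' := (Subgroup.mem_center_iff.mp hz)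
  have hw' := (Subgroup.mem_center_iff.mp hw)
  have step1 : ⁅a * z, b * w⁆ = ⁅a, b * w⁆ := by
    have e : (a*z)*(b*w)*(a*z)⁻¹*(b*w)⁻¹ = a*(z*(b*w))*(z⁻¹*a⁻¹)*(b*w)⁻¹ := by group
    rw [commutatorElement_def, commutatorElement_def, e, ← hz' (b*w)]
    group
  have step2 : ⁅a, b * w⁆ = ⁅a, b⁆ := by
    have e : a*(b*w)*a⁻¹*(b*w)⁻¹ = a*b*(w*a⁻¹)*(w⁻¹*b⁻¹) := by group
    rw [commutatorElement_def, commutatorElement_def, e, ← hw' a⁻¹]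
    group
  rw [step1, step2]

/-- If `G` is an arbitrary group such that `G/Z(G)` is generated by cosets
`x₁Z(G), …, x_dZ(G)` with each conjugacy class `x_i^G` finite, then `G/Z(G)` is finite,
`γ₂(G)` is finite, and `|G/Z(G)| ≤ |γ₂(G)|^d`. -/
theorem stmt_18 {G : Type*} [Group G] (d : ℕ) (x : Fin d → G)
    (hgen : Subgroup.closure
        (Set.range fun i => ((x i : G) : G ⧸ Subgroup.center G)) = ⊤)
    (hfin : ∀ i, {y : G | IsConj (x i) y}.Finite) :
    Finite (G ⧸ Subgroup.center G) ∧ Finite (commutator G) ∧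
      Nat.card (G ⧸ Subgroup.center G) ≤ Nat.card (commutator G) ^ d := by
  set Z := Subgroup.center G
  -- the key map
  set ψ : (G ⧸ Z) → Fin d → G := fun q i => ⁅x i, q.out⁆ with hψ
  -- injectivity
  have hinj : Function.Injective ψ := by
    intro q q' h
    set g := q.out
    set h' := q'.out
    set c : G := h'⁻¹ * g with hc
    have hcomm : ∀ i, (x i) * c = c * (x i) := by
      intro i
      have := congrFun h i
      simp only [hψ, commutatorElement_def] at this
      -- x i * g * (x i)⁻¹ * g⁻¹ = x i * h' * (x i)⁻¹ * h'⁻¹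
      have h2 : g * (x i)⁻¹ * g⁻¹ = h' * (x i)⁻¹ * h'⁻¹ := by
        have := congrArg (fun t => (x i)⁻¹ * t) this
        simpa [mul_assoc] using this
      have h3 : h'⁻¹ * g * (x i)⁻¹ = (x i)⁻¹ * (h'⁻¹ * g) := by
        have := congrArg (fun t => h'⁻¹ * (t * g)) h2
        simpa [mul_assoc] using this
      have h4 : c * (x i)⁻¹ = (x i)⁻¹ * c := by rw [hc]; simpa [mul_assoc] using h3
      have := congrArg (fun t => (x i) * t * (x i)) h4
      simpa [mul_assoc] using this
    -- c is central
    have hC : Subgroup.centralizer {c} = ⊤ := by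
      have hmap : Subgroup.map (QuotientGroup.mk' Z) (Subgroup.centralizer {c}) = ⊤ := by
        rw [eq_top_iff, ← hgen, Subgroup.closure_le]
        rintro _ ⟨i, rfl⟩
        exact ⟨x i, Subgroup.mem_centralizer_singleton_iff.mpr (hcomm i), rfl⟩
      have := congrArg (Subgroup.comap (QuotientGroup.mk' Z)) hmap
      rw [Subgroup.comap_map_eq, QuotientGroup.ker_mk', Subgroup.comap_top,
        sup_eq_left.mpr (Subgroup.center_le_centralizer _)] at this
      exact this
    have hcz : c ∈ Z := by
      rw [Subgroup.mem_center_iff]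
      intro g'
      have : g' ∈ Subgroup.centralizer {c} := hC ▸ Subgroup.mem_top g'
      exact Subgroup.mem_centralizer_singleton_iff.mp this
    have : (g : G ⧸ Z) = h' := (QuotientGroup.eq.mpr (by simpa using hcz)).symm
    rwa [QuotientGroup.out_eq', QuotientGroup.out_eq'] at this
  -- finiteness of G/Z
  have hT : ∀ i, Set.Finite {z : G | ∃ g : G, ⁅x i, g⁆ = z} := by
    intro i
    apply Set.Finite.subset (((hfin i).image (fun y => y⁻¹)).image (fun y => x i * y))
    rintro _ ⟨g, rfl⟩
    refine ⟨(g * x i * g⁻¹)⁻¹, ⟨g * x i * g⁻¹, isConj_iff.mpr ⟨g, rfl⟩, rfl⟩, ?_⟩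
    simp [commutatorElement_def, mul_assoc]
  have hfinQ : Finite (G ⧸ Z) := by
    have hfinPi : Finite (∀ i : Fin d, {z : G | ∃ g : G, ⁅x i, g⁆ = z}) := by
      have := fun i => (hT i).to_subtype
      exact Pi.finite
    refine Finite.of_injective
      (fun q => (fun i => ⟨ψ q i, q.out, rfl⟩ :
        ∀ i : Fin d, {z : G | ∃ g : G, ⁅x i, g⁆ = z})) ?_
    intro q q' h
    exact hinj (funext fun i => congrArg Subtype.val (congrFun h i))
  -- finiteness of commutatorSet, hence of commutator G
  have hcs : Finite (commutatorSet G) := by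
    apply Set.Finite.to_subtype
    apply Set.Finite.subset (Set.finite_range
      (fun p : (G ⧸ Z) × (G ⧸ Z) => ⁅p.1.out, p.2.out⁆))
    rintro _ ⟨a, b, rfl⟩
    exact ⟨((a : G ⧸ Z), (b : G ⧸ Z)),
      (comm_congr (QuotientGroup.out_eq' _).symm (QuotientGroup.out_eq' _).symm).symm⟩
  have hfinC : Finite (commutator G) := inferInstance
  refine ⟨hfinQ, hfinC, ?_⟩
  -- the cardinality bound
  have hmem : ∀ (q : G ⧸ Z) (i : Fin d), ψ q i ∈ commutator G := fun q i =>
    Subgroup.commutator_mem_commutator (Subgroup.mem_top _) (Subgroup.mem_top _)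
  have hinj' : Function.Injective
      (fun q => (fun i => ⟨ψ q i, hmem q i⟩ : Fin d → commutator G)) := by
    intro q q' h
    exact hinj (funext fun i => congrArg Subtype.val (congrFun h i))
  calc Nat.card (G ⧸ Z) ≤ Nat.card (Fin d → commutator G) :=
        Nat.card_le_card_of_injective _ hinj'
    _ = Nat.card (commutator G) ^ d := by rw [Nat.card_fun, Nat.card_eq_fintype_card (α := Fin d), Fintype.card_fin]
end
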